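/- arXiv:1005.4303 — 11 statements merged into one kernel-verified Lean document; each statement's English description precedes it below -/
import Mathlib

section
/- Let Γ be a set and let a, b : Γ → [-1,1] be functions with a(i) < b(i) for all i ∈ Γ and ∑_{i∈Γ} (max(a(i),0) + max(-b(i),0)) < 1. Then the compact space B(Γ,a,b) is homeomorphic to a space B(Γ,a'',b'') where the pair (a'',b'') is admissible, i.e. -1 ≤ a''(i) ≤ 0 < b''(i) ≤ 1 and |a''(i)| ≤ |b''(i)| for all i ∈ Γ. -/
open Set Filter Topology

noncomputable section

def Ball (ι : Type*) : Set (ι → ℝ) :=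
  {x | ∀ s : Finset ι, ∑ i ∈ s, |x i| ≤ 1}

def BallAB (ι : Type*) (a b : ι → ℝ) : Set (ι → ℝ) :=
  {x | x ∈ Ball ι ∧ ∀ i, a i ≤ x i ∧ x i ≤ b i}

def Admissible {ι : Type*} (a b : ι → ℝ) : Prop :=
  ∀ i, -1 ≤ a i ∧ a i ≤ 0 ∧ 0 < b i ∧ b i ≤ 1 ∧ |a i| ≤ |b i|

lemma key_abs (A B t : ℝ) (h1 : A ≤ t) (h2 : t ≤ B) :
    |t - (max A 0 - max (-B) 0)| = |t| - (max A 0 + max (-B) 0) := by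
  rcases lt_or_ge 0 A with hA | hA
  · rw [max_eq_left hA.le, max_eq_right (by linarith : -B ≤ 0),
      abs_of_nonneg (by linarith), abs_of_nonneg (by linarith : (0:ℝ) ≤ t)]
    ring
  · rcases lt_or_ge B 0 with hB | hB
    · rw [max_eq_right hA, max_eq_left (by linarith : (0:ℝ) ≤ -B),
        abs_of_nonpos (by linarith), abs_of_nonpos (by linarith : t ≤ 0)]
      ring
    · rw [max_eq_right hA, max_eq_right (by linarith : -B ≤ 0)]
      simp

lemma key_c (A B : ℝ) (hAB : A < B) :
    A ≤ max A 0 - max (-B) 0 ∧ max A 0 - max (-B) 0 ≤ B := by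
  rcases le_or_gt 0 B with hB | hB
  · rw [max_eq_right (by linarith : -B ≤ 0)]
    constructor
    · simpa using le_max_left A 0
    · simp only [sub_zero, max_le_iff]; exact ⟨hAB.le, hB⟩
  · rw [max_eq_left (by linarith : (0:ℝ) ≤ -B), max_eq_right (by linarith : A ≤ 0)]
    constructor <;> linarith

/-- `B(Γ,a,b)` is homeomorphic to some `B(Γ,a'',b'')` with `(a'',b'')`
admissible, whenever `a, b : Γ → [-1,1]`, `a < b` pointwise and
`∑_i (max (a i) 0 + max (-(b i)) 0) < 1`. -/
theorem statement0 {Γ : Type*} (a b : Γ → ℝ)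
    (ha : ∀ i, -1 ≤ a i ∧ a i ≤ 1) (hb : ∀ i, -1 ≤ b i ∧ b i ≤ 1)
    (hab : ∀ i, a i < b i)
    (hsummable : Summable fun i => max (a i) 0 + max (-(b i)) 0)
    (hsum : (∑' i, (max (a i) 0 + max (-(b i)) 0)) < 1) :
    ∃ a'' b'' : Γ → ℝ, Admissible a'' b'' ∧
      Nonempty (↥(BallAB Γ a b) ≃ₜ ↥(BallAB Γ a'' b'')) := by
  classical
  set m : Γ → ℝ := fun i => max (a i) 0 + max (-(b i)) 0 with hmdef
  set c : Γ → ℝ := fun i => max (a i) 0 - max (-(b i)) 0 with hcdef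
  have hsm : Summable m := hsummable
  set M : ℝ := ∑' i, m i with hMdef
  have hM1 : M < 1 := hsum
  have hm0 : ∀ i, 0 ≤ m i := fun i => add_nonneg (le_max_right _ _) (le_max_right _ _)
  set r : ℝ := 1 - M with hrdef
  have hr : 0 < r := by
    have : 0 ≤ M := tsum_nonneg hm0
    simp only [hrdef]; linarith
  have hrne : r ≠ 0 := ne_of_gt hr
  have hkey : ∀ i t, a i ≤ t → t ≤ b i → |t - c i| = |t| - m i := by
    intro i t h1 h2
    simp only [hcdef, hmdef]
    exact key_abs (a i) (b i) t h1 h2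
  have hc1 : ∀ i, a i ≤ c i := fun i => (key_c (a i) (b i) (hab i)).1
  have hc2 : ∀ i, c i ≤ b i := fun i => (key_c (a i) (b i) (hab i)).2
  have hmle : ∀ i t, a i ≤ t → t ≤ b i → m i ≤ |t| := by
    intro i t h1 h2
    have := hkey i t h1 h2
    have h0 : 0 ≤ |t - c i| := abs_nonneg _
    linarith
  -- the key characterization of Ball membership for points in the box
  have ball_iff : ∀ x : Γ → ℝ, (∀ i, a i ≤ x i ∧ x i ≤ b i) →
      (x ∈ Ball Γ ↔ ∀ s : Finset Γ, ∑ i ∈ s, (|x i| - m i) ≤ r) := by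
    intro x hx
    constructor
    · intro hB s
      have hMle : M ≤ 1 - ∑ i ∈ s, |x i| + ∑ i ∈ s, m i := by
        apply Summable.tsum_le_of_sum_le hsm
        intro t
        have h1 : ∑ i ∈ t, m i ≤ ∑ i ∈ s, m i + ∑ i ∈ t \ s, m i := by
          rw [← Finset.sum_union Finset.disjoint_sdiff]
          apply Finset.sum_le_sum_of_subset_of_nonneg
          · intro i hi
            simp only [Finset.mem_union, Finset.mem_sdiff]
            by_cases h : i ∈ s
            · exact Or.inl h
            · exact Or.inr ⟨hi, h⟩
          · exact fun i _ _ => hm0 i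
        have h2 : ∑ i ∈ t \ s, m i ≤ ∑ i ∈ t \ s, |x i| :=
          Finset.sum_le_sum fun i _ => hmle i (x i) (hx i).1 (hx i).2
        have h3 : ∑ i ∈ s, |x i| + ∑ i ∈ t \ s, |x i| ≤ 1 := by
          rw [← Finset.sum_union Finset.disjoint_sdiff]
          exact hB _
        linarith
      rw [Finset.sum_sub_distrib]
      simp only [hrdef]
      linarith
    · intro h s
      have h1 := h s
      rw [Finset.sum_sub_distrib] at h1
      have h2 : ∑ i ∈ s, m i ≤ M := Summable.sum_le_tsum s (fun i _ => hm0 i) hsm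
      simp only [hrdef] at h1
      linarith
  set eps : Γ → ℝ := fun i => if b i - c i < c i - a i then -1 else 1 with hepsdef
  set lo : Γ → ℝ := fun i => if b i - c i < c i - a i then (c i - b i)/r else (a i - c i)/r
    with hlodef
  set hi : Γ → ℝ := fun i => if b i - c i < c i - a i then (c i - a i)/r else (b i - c i)/r
    with hhidef
  have heps2 : ∀ i, eps i * eps i = 1 := by
    intro i; simp only [hepsdef]; split_ifs <;> norm_num
  have hepsabs : ∀ i, |eps i| = 1 := by
    intro i; simp only [hepsdef]; split_ifs <;> norm_num
  have hlo0 : ∀ i, lo i ≤ 0 := by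
    intro i; simp only [hlodef]
    split_ifs with h
    · apply div_nonpos_of_nonpos_of_nonneg _ hr.le
      have := hc2 i; linarith
    · apply div_nonpos_of_nonpos_of_nonneg _ hr.le
      have := hc1 i; linarith
  have hhi0 : ∀ i, 0 < hi i := by
    intro i; simp only [hhidef]
    split_ifs with h
    · apply div_pos _ hr
      have := hc2 i; linarith
    · apply div_pos _ hr
      push_neg at h
      have := hab i; linarith
  have hlohi : ∀ i, -(lo i) ≤ hi i := by
    intro i; simp only [hlodef, hhidef]
    split_ifs with h
    · rw [← neg_div, neg_sub]
      exact div_le_div_of_nonneg_right h.le hr.le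
    · rw [← neg_div, neg_sub]
      push_neg at h
      exact div_le_div_of_nonneg_right h hr.le
  have hdiv : ∀ u v : ℝ, u ≤ v → u / r ≤ v / r := fun u v h =>
    div_le_div_of_nonneg_right h hr.le
  have hdiv' : ∀ u v : ℝ, u / r ≤ v / r → u ≤ v := by
    intro u v h
    have := mul_le_mul_of_nonneg_right h hr.le
    rwa [div_mul_cancel₀ _ hrne, div_mul_cancel₀ _ hrne] at this
  have hmap : ∀ i t, a i ≤ t → t ≤ b i →
      lo i ≤ eps i * (t - c i) / r ∧ eps i * (t - c i) / r ≤ hi i := by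
    intro i t h1 h2
    simp only [hepsdef, hlodef, hhidef]
    split_ifs with h
    · constructor
      · apply hdiv; linarith
      · apply hdiv; linarith
    · constructor
      · apply hdiv; linarith
      · apply hdiv; linarith
  have hmap2 : ∀ i t, lo i ≤ t → t ≤ hi i →
      a i ≤ c i + r * (eps i * t) ∧ c i + r * (eps i * t) ≤ b i := by
    intro i t h1 h2
    simp only [hepsdef, hlodef, hhidef] at h1 h2 ⊢
    split_ifs at h1 h2 ⊢ with h
    · have g1 : c i - b i ≤ t * r := (div_le_iff₀ hr).mp h1
      have g2 : t * r ≤ c i - a i := (le_div_iff₀ hr).mp h2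
      constructor <;> nlinarith
    · have g1 : a i - c i ≤ t * r := (div_le_iff₀ hr).mp h1
      have g2 : t * r ≤ b i - c i := (le_div_iff₀ hr).mp h2
      constructor <;> nlinarith
  have habs2 : ∀ i t, a i ≤ t → t ≤ b i →
      |eps i * (t - c i) / r| = (|t| - m i) / r := by
    intro i t h1 h2
    rw [abs_div, abs_mul, hepsabs i, one_mul, abs_of_pos hr, hkey i t h1 h2]
  have hball1 : ∀ x : Γ → ℝ, (∀ i, a i ≤ x i ∧ x i ≤ b i) → x ∈ Ball Γ →
      (fun i => eps i * (x i - c i) / r) ∈ Ball Γ := by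
    intro x hx hB s
    have h := (ball_iff x hx).mp hB s
    calc ∑ i ∈ s, |eps i * (x i - c i) / r|
        = ∑ i ∈ s, (|x i| - m i) / r :=
          Finset.sum_congr rfl fun i _ => habs2 i (x i) (hx i).1 (hx i).2
      _ = (∑ i ∈ s, (|x i| - m i)) / r := by rw [Finset.sum_div]
      _ ≤ 1 := by rw [div_le_one hr]; exact h
  have hball2 : ∀ y : Γ → ℝ, (∀ i, lo i ≤ y i ∧ y i ≤ hi i) → y ∈ Ball Γ →
      (fun i => c i + r * (eps i * y i)) ∈ Ball Γ := by
    intro y hy hB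
    set x : Γ → ℝ := fun i => c i + r * (eps i * y i) with hxdef
    have hx : ∀ i, a i ≤ x i ∧ x i ≤ b i := fun i => hmap2 i (y i) (hy i).1 (hy i).2
    apply (ball_iff x hx).mpr
    intro s
    have hterm : ∀ i, |x i| - m i = r * |y i| := by
      intro i
      have hxc : x i - c i = r * (eps i * y i) := by simp only [hxdef]; ring
      rw [← hkey i (x i) (hx i).1 (hx i).2, hxc, abs_mul, abs_mul, hepsabs i, one_mul,
        abs_of_pos hr]
    calc ∑ i ∈ s, (|x i| - m i) = ∑ i ∈ s, r * |y i| :=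
          Finset.sum_congr rfl fun i _ => hterm i
      _ = r * ∑ i ∈ s, |y i| := by rw [Finset.mul_sum]
      _ ≤ r * 1 := by
          apply mul_le_mul_of_nonneg_left (hB s) hr.le
      _ = r := mul_one r
  set aF : Γ → ℝ := fun i => max (lo i) (-1) with haFdef
  set bF : Γ → ℝ := fun i => min (hi i) 1 with hbFdef
  have haF0 : ∀ i, aF i ≤ 0 := fun i => max_le (hlo0 i) (by norm_num)
  have hbF0 : ∀ i, 0 < bF i := fun i => lt_min (hhi0 i) one_pos
  refine ⟨aF, bF, ?_, ?_⟩
  · intro i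
    refine ⟨le_max_right _ _, haF0 i, hbF0 i, min_le_right _ _, ?_⟩
    rw [abs_of_nonpos (haF0 i), abs_of_pos (hbF0 i)]
    apply le_min
    · have h1 := hlohi i
      have h2 := le_max_left (lo i) (-1 : ℝ)
      simp only [haFdef, hbFdef] at *
      linarith
    · have h2 := le_max_right (lo i) (-1 : ℝ)
      simp only [haFdef] at *
      linarith
  · -- construct the homeomorphism
    have hmemto : ∀ x : Γ → ℝ, x ∈ BallAB Γ a b →
        (fun i => eps i * (x i - c i) / r) ∈ BallAB Γ aF bF := by
      rintro x ⟨hxB, hxab⟩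
      have hyB := hball1 x hxab hxB
      refine ⟨hyB, fun i => ?_⟩
      have h1 := hmap i (x i) (hxab i).1 (hxab i).2
      have h2 : |eps i * (x i - c i) / r| ≤ 1 := by
        have := hyB {i}
        simpa using this
      rw [abs_le] at h2
      exact ⟨max_le h1.1 h2.1, le_min h1.2 h2.2⟩
    have hmemfrom : ∀ y : Γ → ℝ, y ∈ BallAB Γ aF bF →
        (fun i => c i + r * (eps i * y i)) ∈ BallAB Γ a b := by
      rintro y ⟨hyB, hyab⟩
      have hy : ∀ i, lo i ≤ y i ∧ y i ≤ hi i := fun i =>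
        ⟨le_trans (le_max_left _ _) (hyab i).1, le_trans (hyab i).2 (min_le_left _ _)⟩
      exact ⟨hball2 y hy hyB, fun i => hmap2 i (y i) (hy i).1 (hy i).2⟩
    refine ⟨{
      toFun := fun x => ⟨fun i => eps i * (x.1 i - c i) / r, hmemto x.1 x.2⟩
      invFun := fun y => ⟨fun i => c i + r * (eps i * y.1 i), hmemfrom y.1 y.2⟩
      left_inv := ?_
      right_inv := ?_
      continuous_toFun := ?_
      continuous_invFun := ?_ }⟩
    · intro x
      apply Subtype.ext
      funext i
      show c i + r * (eps i * (eps i * (x.1 i - c i) / r)) = x.1 i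
      rw [show eps i * (eps i * (x.1 i - c i) / r) = (eps i * eps i) * ((x.1 i - c i) / r)
        by ring, heps2 i, one_mul, ← mul_div_assoc, mul_div_cancel_left₀ _ hrne]
      ring
    · intro y
      apply Subtype.ext
      funext i
      show eps i * ((c i + r * (eps i * y.1 i)) - c i) / r = y.1 i
      rw [show eps i * ((c i + r * (eps i * y.1 i)) - c i) = r * ((eps i * eps i) * y.1 i)
        by ring, heps2 i, one_mul, mul_div_cancel_left₀ _ hrne]
    · apply Continuous.subtype_mk
      apply continuous_pi
      intro i
      exact (continuous_const.mul
        (((continuous_apply i).comp continuous_subtype_val).sub continuous_const)).div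
        continuous_const (fun x => hrne)
    · apply Continuous.subtype_mk
      apply continuous_pi
      intro i
      exact continuous_const.add (continuous_const.mul
        (continuous_const.mul ((continuous_apply i).comp continuous_subtype_val)))

end
end

section
/- Let Γ be a set and (a,b) an admissible pair of functions on Γ. Then the map r : B(Γ) → B(Γ,a,b) defined coordinatewise by r(x)_i = min(max(a(i), x_i), b(i)) is a well-defined continuous map which restricts to the identity on B(Γ,a,b); consequently B(Γ,a,b) is a retract of B(Γ). -/
open Set Filter Topology

noncomputable section

lemma abs_clamp_le {a b x : ℝ} (ha : a ≤ 0) (hb : 0 < b) :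
    |min (max a x) b| ≤ |x| := by
  rcases le_or_gt 0 x with hx | hx
  · rw [max_eq_right (ha.trans hx)]
    rw [abs_of_nonneg (le_min hx hb.le), abs_of_nonneg hx]
    exact min_le_left _ _
  · rw [min_eq_left ((max_le ha hx.le).trans hb.le)]
    rw [abs_of_nonpos (max_le ha hx.le), abs_of_neg hx]
    exact neg_le_neg (le_max_right _ _)

/-- for an admissible pair `(a,b)`, the coordinatewise map
`r(x)_i = min (max (a i) (x i)) (b i)` is a well-defined continuous map from `B(Γ)`
to `B(Γ,a,b)` restricting to the identity on `B(Γ,a,b)`; consequently `B(Γ,a,b)`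
is a retract of `B(Γ)`. -/
theorem statement1 {Γ : Type*} (a b : Γ → ℝ) (hab : Admissible a b) :
    Continuous (fun (x : Γ → ℝ) (i : Γ) => min (max (a i) (x i)) (b i)) ∧
    Set.MapsTo (fun (x : Γ → ℝ) (i : Γ) => min (max (a i) (x i)) (b i))
      (Ball Γ) (BallAB Γ a b) ∧
    (∀ x ∈ BallAB Γ a b, (fun i => min (max (a i) (x i)) (b i)) = x) ∧
    ∃ ρ : ↥(Ball Γ) → ↥(BallAB Γ a b), Continuous ρ ∧
      (∀ x : ↥(Ball Γ), (ρ x : Γ → ℝ) = fun i => min (max (a i) (x.1 i)) (b i)) ∧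
      (∀ x : ↥(Ball Γ), x.1 ∈ BallAB Γ a b → (ρ x : Γ → ℝ) = x.1) := by
  have hcont : Continuous (fun (x : Γ → ℝ) (i : Γ) => min (max (a i) (x i)) (b i)) := by
    apply continuous_pi
    intro i
    exact (continuous_const.max (continuous_apply i)).min continuous_const
  have hmaps : Set.MapsTo (fun (x : Γ → ℝ) (i : Γ) => min (max (a i) (x i)) (b i))
      (Ball Γ) (BallAB Γ a b) := by
    intro x hx
    refine ⟨fun s => ?_, fun i => ⟨?_, min_le_right _ _⟩⟩
    · calc ∑ i ∈ s, |min (max (a i) (x i)) (b i)| ≤ ∑ i ∈ s, |x i| :=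
            Finset.sum_le_sum fun i _ => abs_clamp_le (hab i).2.1 (hab i).2.2.1
        _ ≤ 1 := hx s
    · exact le_min (le_max_left _ _) ((hab i).2.1.trans (hab i).2.2.1.le)
  have hid : ∀ x ∈ BallAB Γ a b, (fun i => min (max (a i) (x i)) (b i)) = x := by
    intro x hx
    funext i
    rw [max_eq_right (hx.2 i).1, min_eq_left (hx.2 i).2]
  refine ⟨hcont, hmaps, hid, fun x => ⟨_, hmaps x.2⟩, ?_, fun x => rfl, ?_⟩
  · exact Continuous.subtype_mk (hcont.comp continuous_subtype_val) _
  · intro x hx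
    exact hid x.1 hx
end
end

section
/- Let Γ be an infinite set and (a,b) an admissible pair of functions on Γ. Then B⁺(Γ) is homeomorphic to a retract of B(Γ,a,b). -/
open Set Filter Topology

noncomputable section

/-- `PosBall ι` is the positive cone `B⁺(ι) = {x ∈ B(ι) : x i ≥ 0 for all i}`. -/
def PosBall (ι : Type*) : Set (ι → ℝ) :=
  {x | x ∈ Ball ι ∧ ∀ i, 0 ≤ x i}

/-- Packaging: a continuous section-retraction pair gives the conclusion. -/
lemma pack {Γ : Type*} (a b : Γ → ℝ)
    (e : ↥(PosBall Γ) → ↥(BallAB Γ a b)) (p : ↥(BallAB Γ a b) → ↥(PosBall Γ))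
    (he : Continuous e) (hp : Continuous p) (hpe : ∀ x, p (e x) = x) :
    ∃ A : Set ↥(BallAB Γ a b),
      (∃ r : ↥(BallAB Γ a b) → ↥(BallAB Γ a b), Continuous r ∧ Set.range r ⊆ A ∧
        ∀ x ∈ A, r x = x) ∧
      Nonempty (↥(PosBall Γ) ≃ₜ ↥A) := by
  refine ⟨Set.range e, ⟨e ∘ p, he.comp hp, ?_, ?_⟩, ⟨?_⟩⟩
  · rintro y ⟨z, rfl⟩
    exact ⟨p z, rfl⟩
  · rintro y ⟨x, rfl⟩
    simp [Function.comp, hpe x]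
  · refine
      { toFun := fun x => ⟨e x, Set.mem_range_self x⟩
        invFun := fun z => p z.1
        left_inv := fun x => hpe x
        right_inv := ?_
        continuous_toFun := he.subtype_mk _
        continuous_invFun := hp.comp continuous_subtype_val }
    rintro ⟨y, x, rfl⟩
    simp [hpe x]


/-- running maximum, starting at 0 -/
def maxRec (g : ℕ → ℝ) : ℕ → ℝ
  | 0 => 0
  | n + 1 => max (maxRec g n) (g n)

lemma maxRec_nonneg (g : ℕ → ℝ) (n : ℕ) : 0 ≤ maxRec g n := by
  induction n with
  | zero => simp [maxRec]
  | succ n ih => exact le_trans ih (le_max_left _ _) |>.trans (le_refl _)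

lemma maxRec_le_one {g : ℕ → ℝ} (hg : ∀ k, g k ≤ 1) (n : ℕ) : maxRec g n ≤ 1 := by
  induction n with
  | zero => simp [maxRec]
  | succ n ih => exact max_le ih (hg n)

lemma maxRec_mono (g : ℕ → ℝ) : Monotone (maxRec g) := by
  apply monotone_nat_of_le_succ
  intro n
  exact le_max_left _ _

lemma geo_sum_le_one (t : Finset ℕ) : ∑ n ∈ t, ((2:ℝ)⁻¹) ^ (n + 1) ≤ 1 := by
  have hsub : t ⊆ Finset.range (t.sup id + 1) := by
    intro n hn
    simpa using Nat.lt_succ_of_le (Finset.le_sup (f := id) hn)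
  calc ∑ n ∈ t, ((2:ℝ)⁻¹) ^ (n + 1)
      ≤ ∑ n ∈ Finset.range (t.sup id + 1), ((2:ℝ)⁻¹) ^ (n + 1) := by
        apply Finset.sum_le_sum_of_subset_of_nonneg hsub
        intro i _ _; positivity
    _ = (∑ n ∈ Finset.range (t.sup id + 1), ((2:ℝ)⁻¹) ^ n) * 2⁻¹ := by
        rw [Finset.sum_mul]
        exact Finset.sum_congr rfl fun n _ => (pow_succ _ _)
    _ ≤ 2 * 2⁻¹ := by
        apply mul_le_mul_of_nonneg_right _ (by norm_num)
        have := sum_geometric_two_le (t.sup id + 1)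
        simpa [one_div] using this
    _ = 1 := by norm_num

section CaseB

variable {Γ : Type*} (a b : Γ → ℝ) (q : ℕ ≃ Γ)

def cB (n : ℕ) : ℝ := min (b (q n)) ((2:ℝ)⁻¹ ^ (n + 1))

def TB (x : Γ → ℝ) (n : ℕ) : ℝ := ∑ k ∈ Finset.range (n + 1), x (q k)

def eB (x : Γ → ℝ) (j : Γ) : ℝ := cB b q (q.symm j) * TB q x (q.symm j)

def gB (y : Γ → ℝ) (k : ℕ) : ℝ := min 1 (max 0 (y (q k) / cB b q k))

def rB (y : Γ → ℝ) (i : Γ) : ℝ :=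
  maxRec (gB b q y) (q.symm i + 1) - maxRec (gB b q y) (q.symm i)

lemma cB_pos (hab : Admissible a b) (n : ℕ) : 0 < cB b q n :=
  lt_min (hab (q n)).2.2.1 (by positivity)

lemma TB_nonneg {x : Γ → ℝ} (hx : x ∈ PosBall Γ) (n : ℕ) : 0 ≤ TB q x n :=
  Finset.sum_nonneg fun k _ => hx.2 (q k)

lemma TB_mono {x : Γ → ℝ} (hx : x ∈ PosBall Γ) {n m : ℕ} (h : n ≤ m) :
    TB q x n ≤ TB q x m :=
  Finset.sum_le_sum_of_subset_of_nonneg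
    (Finset.range_subset_range.mpr (by omega)) (fun k _ _ => hx.2 (q k))

lemma TB_le_one {x : Γ → ℝ} (hx : x ∈ PosBall Γ) (n : ℕ) : TB q x n ≤ 1 := by
  classical
  have h := hx.1 ((Finset.range (n + 1)).image q)
  rw [Finset.sum_image (fun _ _ _ _ h => q.injective h)] at h
  calc TB q x n = ∑ k ∈ Finset.range (n + 1), |x (q k)| :=
        Finset.sum_congr rfl fun k _ => (abs_of_nonneg (hx.2 (q k))).symm
    _ ≤ 1 := h

lemma eB_mem (hab : Admissible a b) {x : Γ → ℝ} (hx : x ∈ PosBall Γ) :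
    eB b q x ∈ BallAB Γ a b := by
  classical
  have hbnd : ∀ j, 0 ≤ eB b q x j ∧ eB b q x j ≤ cB b q (q.symm j) := by
    intro j
    have he : eB b q x j = cB b q (q.symm j) * TB q x (q.symm j) := rfl
    constructor
    · exact mul_nonneg (cB_pos a b q hab _).le (TB_nonneg q hx _)
    · calc eB b q x j = cB b q (q.symm j) * TB q x (q.symm j) := rfl
        _ ≤ cB b q (q.symm j) * 1 :=
            mul_le_mul_of_nonneg_left (TB_le_one q hx _) (cB_pos a b q hab _).le
        _ = cB b q (q.symm j) := mul_one _
  refine ⟨?_, ?_⟩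
  · intro s
    calc ∑ j ∈ s, |eB b q x j| = ∑ j ∈ s, eB b q x j :=
          Finset.sum_congr rfl fun j _ => abs_of_nonneg (hbnd j).1
      _ ≤ ∑ j ∈ s, ((2:ℝ)⁻¹) ^ (q.symm j + 1) := by
          refine Finset.sum_le_sum fun j _ => ((hbnd j).2.trans (min_le_right _ _))
      _ = ∑ n ∈ s.image q.symm, ((2:ℝ)⁻¹) ^ (n + 1) := by
          rw [Finset.sum_image (fun _ _ _ _ h => q.symm.injective h)]
      _ ≤ 1 := geo_sum_le_one _
  · intro j
    refine ⟨le_trans (hab j).2.1 (hbnd j).1, (hbnd j).2.trans ?_⟩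
    calc cB b q (q.symm j) ≤ b (q (q.symm j)) := min_le_left _ _
      _ = b j := by rw [q.apply_symm_apply]

lemma gB_mem (y : Γ → ℝ) (k : ℕ) : 0 ≤ gB b q y k ∧ gB b q y k ≤ 1 :=
  ⟨le_min zero_le_one (le_max_left _ _), min_le_left _ _⟩

lemma rB_mem (y : Γ → ℝ) : rB b q y ∈ PosBall Γ := by
  classical
  have hmono := maxRec_mono (gB b q y)
  refine ⟨?_, ?_⟩
  · intro s
    have habs : ∀ i, |rB b q y i| = rB b q y i := fun i =>
      abs_of_nonneg (sub_nonneg.mpr (hmono (Nat.le_succ _)))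
    rw [Finset.sum_congr rfl fun i _ => habs i]
    rw [show ∑ i ∈ s, rB b q y i
        = ∑ n ∈ s.image q.symm, (maxRec (gB b q y) (n+1) - maxRec (gB b q y) n) by
      rw [Finset.sum_image (fun _ _ _ _ h => q.symm.injective h)]; rfl]
    set t := s.image q.symm
    have hsub : t ⊆ Finset.range (t.sup id + 1) := by
      intro n hn
      simpa using Nat.lt_succ_of_le (Finset.le_sup (f := id) hn)
    calc ∑ n ∈ t, (maxRec (gB b q y) (n+1) - maxRec (gB b q y) n)
        ≤ ∑ n ∈ Finset.range (t.sup id + 1),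
            (maxRec (gB b q y) (n+1) - maxRec (gB b q y) n) := by
          apply Finset.sum_le_sum_of_subset_of_nonneg hsub
          intro i _ _
          exact sub_nonneg.mpr (hmono (Nat.le_succ _))
      _ = maxRec (gB b q y) (t.sup id + 1) - maxRec (gB b q y) 0 :=
          Finset.sum_range_sub _ _
      _ ≤ 1 := by
          rw [show maxRec (gB b q y) 0 = 0 from rfl, sub_zero]
          exact maxRec_le_one (fun k => (gB_mem b q y k).2) _
  · intro i
    exact sub_nonneg.mpr (hmono (Nat.le_succ _))

lemma rB_eB (hab : Admissible a b) {x : Γ → ℝ} (hx : x ∈ PosBall Γ) :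
    rB b q (eB b q x) = x := by
  have hg : ∀ k, gB b q (eB b q x) k = TB q x k := by
    intro k
    unfold gB eB
    rw [q.symm_apply_apply, mul_div_cancel_left₀ _ (cB_pos a b q hab k).ne']
    rw [max_eq_right (TB_nonneg q hx k), min_eq_right (TB_le_one q hx k)]
  have hN : ∀ n, maxRec (gB b q (eB b q x)) (n + 1) = TB q x n := by
    intro n
    induction n with
    | zero => show max 0 (gB b q (eB b q x) 0) = _; rw [hg, max_eq_right (TB_nonneg q hx 0)]
    | succ n ih =>
        show max (maxRec (gB b q (eB b q x)) (n+1)) (gB b q (eB b q x) (n+1)) = _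
        rw [ih, hg]
        exact max_eq_right (TB_mono q hx (Nat.le_succ n))
  have key : ∀ n : ℕ, rB b q (eB b q x) (q n) = x (q n) := by
    intro n
    unfold rB
    rw [q.symm_apply_apply]
    cases n with
    | zero =>
        rw [hN 0, show maxRec (gB b q (eB b q x)) 0 = 0 from rfl, sub_zero]
        show ∑ k ∈ Finset.range 1, x (q k) = x (q 0)
        rw [Finset.sum_range_one]
    | succ m =>
        rw [hN, hN]
        show TB q x (m+1) - TB q x m = x (q (m+1))
        unfold TB
        rw [Finset.sum_range_succ (f := fun k => x (q k)) (n := m + 1)]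
        ring
  funext i
  have := key (q.symm i)
  rwa [q.apply_symm_apply] at this

lemma eB_continuous : Continuous fun x : ↥(PosBall Γ) => eB b q x.1 := by
  apply continuous_pi
  intro j
  unfold eB TB
  apply continuous_const.mul
  exact continuous_finset_sum _ fun k _ =>
    ((continuous_apply (q k)).comp continuous_subtype_val :
      Continuous fun x : ↥(PosBall Γ) => x.1 (q k))

lemma rB_continuous : Continuous fun y : ↥(BallAB Γ a b) => rB b q y.1 := by
  apply continuous_pi
  intro i
  have hg : ∀ k, Continuous fun y : ↥(BallAB Γ a b) => gB b q y.1 k := by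
    intro k
    unfold gB
    apply continuous_const.min
    apply continuous_const.max
    exact (((continuous_apply (q k)).comp continuous_subtype_val :
      Continuous fun y : ↥(BallAB Γ a b) => y.1 (q k))).div_const _
  have hN : ∀ n, Continuous fun y : ↥(BallAB Γ a b) => maxRec (gB b q y.1) n := by
    intro n
    induction n with
    | zero => exact continuous_const
    | succ n ih => exact ih.max (hg n)
  exact (hN _).sub (hN _)

end CaseB


section CaseA

variable {Γ : Type*} {a b : Γ → ℝ} {F : Γ → Finset Γ}

/-- A good family: pairwise disjoint nonempty finite blocks on which `b` is
at least the reciprocal of the block card. -/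
def GoodFamily (b : Γ → ℝ) (F : Γ → Finset Γ) : Prop :=
  (∀ i, (F i).Nonempty) ∧ (∀ ⦃i i'⦄, i ≠ i' → Disjoint (F i) (F i')) ∧
    ∀ i, ∀ j ∈ F i, 1 / ((F i).card : ℝ) ≤ b j

open Classical in
def eA (F : Γ → Finset Γ) (x : Γ → ℝ) (j : Γ) : ℝ :=
  if h : ∃ i, j ∈ F i then x h.choose / ((F h.choose).card : ℝ) else 0

def rA (F : Γ → Finset Γ) (y : Γ → ℝ) (i : Γ) : ℝ := ∑ j ∈ F i, max (y j) 0

lemma GoodFamily.uniq (hF : GoodFamily b F) {i i' j : Γ} (h : j ∈ F i) (h' : j ∈ F i') :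
    i = i' := by
  by_contra hne
  exact (Finset.disjoint_left.mp (hF.2.1 hne) h) h'

lemma GoodFamily.cardpos (hF : GoodFamily b F) (i : Γ) : 0 < ((F i).card : ℝ) := by
  have := Finset.card_pos.mpr (hF.1 i)
  exact_mod_cast this

lemma eA_of_mem (hF : GoodFamily b F) {i j : Γ} (h : j ∈ F i) (x : Γ → ℝ) :
    eA F x j = x i / ((F i).card : ℝ) := by
  have hex : ∃ i, j ∈ F i := ⟨i, h⟩
  rw [eA, dif_pos hex]
  rw [hF.uniq hex.choose_spec h]

lemma posBall_coord_le_one {x : Γ → ℝ} (hx : x ∈ PosBall Γ) (i : Γ) : x i ≤ 1 := by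
  have h := hx.1 {i}
  rw [Finset.sum_singleton] at h
  calc x i ≤ |x i| := le_abs_self _
    _ ≤ 1 := h

lemma eA_mem (hab : Admissible a b) (hF : GoodFamily b F) {x : Γ → ℝ} (hx : x ∈ PosBall Γ) :
    eA F x ∈ BallAB Γ a b := by
  classical
  have hbnd : ∀ j, 0 ≤ eA F x j ∧ eA F x j ≤ b j := by
    intro j
    by_cases h : ∃ i, j ∈ F i
    · obtain ⟨i, hi⟩ := h
      rw [eA_of_mem hF hi]
      constructor
      · exact div_nonneg (hx.2 i) (hF.cardpos i).le
      · calc x i / ((F i).card : ℝ) ≤ 1 / ((F i).card : ℝ) := by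
              gcongr
              · exact posBall_coord_le_one hx i
          _ ≤ b j := hF.2.2 i j hi
    · rw [eA, dif_neg h]
      exact ⟨le_refl 0, (hab j).2.2.1.le⟩
  refine ⟨?_, fun j => ⟨le_trans (hab j).2.1 (hbnd j).1, (hbnd j).2⟩⟩
  intro s
  -- assignment function
  set g : Γ → Γ := fun j => if h : ∃ i, j ∈ F i then h.choose else j with hg
  have hmaps : ∀ j ∈ s, g j ∈ s.image g := fun j hj => Finset.mem_image_of_mem g hj
  rw [Finset.sum_congr rfl fun j _ => abs_of_nonneg (hbnd j).1]
  rw [← Finset.sum_fiberwise_of_maps_to hmaps (fun j => eA F x j)]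
  have hfiber : ∀ i ∈ s.image g, (∑ j ∈ s.filter (fun j => g j = i), eA F x j) ≤ x i := by
    intro i _
    have hterm : ∀ j ∈ s.filter (fun j => g j = i), eA F x j
        ≤ if j ∈ F i then x i / ((F i).card : ℝ) else 0 := by
      intro j hj
      rw [Finset.mem_filter] at hj
      by_cases h : ∃ i0, j ∈ F i0
      · have hji : j ∈ F i := by
          have : g j = h.choose := by rw [hg]; exact dif_pos h
          rw [← hj.2, this]
          exact h.choose_spec
        rw [if_pos hji, eA_of_mem hF hji]
      · rw [eA, dif_neg h]
        split
        · exact div_nonneg (hx.2 i) (hF.cardpos i).le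
        · exact le_refl 0
    calc (∑ j ∈ s.filter (fun j => g j = i), eA F x j)
        ≤ ∑ j ∈ s.filter (fun j => g j = i),
            (if j ∈ F i then x i / ((F i).card : ℝ) else 0) := Finset.sum_le_sum hterm
      _ = ∑ j ∈ (s.filter (fun j => g j = i)) ∩ F i, x i / ((F i).card : ℝ) := by
          rw [Finset.sum_ite_mem]
      _ ≤ ∑ j ∈ F i, x i / ((F i).card : ℝ) := by
          apply Finset.sum_le_sum_of_subset_of_nonneg (Finset.inter_subset_right)
          intro j _ _
          exact div_nonneg (hx.2 i) (hF.cardpos i).le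
      _ = x i := by
          rw [Finset.sum_const, nsmul_eq_mul]
          have hne : ((F i).card : ℝ) ≠ 0 := (hF.cardpos i).ne'
          field_simp
  calc (∑ i ∈ s.image g, ∑ j ∈ s.filter (fun j => g j = i), eA F x j)
      ≤ ∑ i ∈ s.image g, x i := Finset.sum_le_sum hfiber
    _ ≤ ∑ i ∈ s.image g, |x i| := Finset.sum_le_sum fun i _ => le_abs_self _
    _ ≤ 1 := hx.1 _

lemma rA_mem {y : Γ → ℝ} (hy : y ∈ BallAB Γ a b) (hF : GoodFamily b F) :
    rA F y ∈ PosBall Γ := by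
  classical
  refine ⟨?_, fun i => Finset.sum_nonneg fun j _ => le_max_right _ _⟩
  intro s
  have habs : ∀ i, |rA F y i| = rA F y i := fun i =>
    abs_of_nonneg (Finset.sum_nonneg fun j _ => le_max_right _ _)
  rw [Finset.sum_congr rfl fun i _ => habs i]
  rw [show (∑ i ∈ s, rA F y i) = ∑ i ∈ s, ∑ j ∈ F i, max (y j) 0 from rfl]
  rw [← Finset.sum_biUnion (fun i _ i' _ hne => hF.2.1 hne)]
  calc (∑ j ∈ s.biUnion F, max (y j) 0) ≤ ∑ j ∈ s.biUnion F, |y j| := by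
        apply Finset.sum_le_sum
        intro j _
        exact max_le (le_abs_self _) (abs_nonneg _)
    _ ≤ 1 := hy.1 _

lemma rA_eA (hF : GoodFamily b F) {x : Γ → ℝ} (hx : x ∈ PosBall Γ) :
    rA F (eA F x) = x := by
  funext i
  have : ∀ j ∈ F i, max (eA F x j) 0 = x i / ((F i).card : ℝ) := by
    intro j hj
    rw [eA_of_mem hF hj, max_eq_left (div_nonneg (hx.2 i) (hF.cardpos i).le)]
  rw [show rA F (eA F x) i = ∑ j ∈ F i, max (eA F x j) 0 from rfl,
    Finset.sum_congr rfl this, Finset.sum_const, nsmul_eq_mul]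
  have hne : ((F i).card : ℝ) ≠ 0 := (hF.cardpos i).ne'
  field_simp

lemma eA_continuous : Continuous fun x : ↥(PosBall Γ) => eA F x.1 := by
  apply continuous_pi
  intro j
  by_cases h : ∃ i, j ∈ F i
  · have : (fun x : ↥(PosBall Γ) => eA F x.1 j)
        = fun x : ↥(PosBall Γ) => x.1 h.choose / ((F h.choose).card : ℝ) := by
      funext x
      rw [eA, dif_pos h]
    rw [this]
    exact ((continuous_apply h.choose).comp continuous_subtype_val).div_const _
  · have : (fun x : ↥(PosBall Γ) => eA F x.1 j) = fun _ => (0:ℝ) := by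
      funext x
      rw [eA, dif_neg h]
    rw [this]
    exact continuous_const

lemma rA_continuous : Continuous fun y : ↥(BallAB Γ a b) => rA F y.1 := by
  apply continuous_pi
  intro i
  apply continuous_finset_sum
  intro j _
  exact (((continuous_apply j).comp continuous_subtype_val :
    Continuous fun y : ↥(BallAB Γ a b) => y.1 j)).max continuous_const

end CaseA

universe u
section GF
open Cardinal


lemma exists_goodFamily {Γ : Type u} (hnc : ¬ Countable Γ) (b : Γ → ℝ) (hb : ∀ i, 0 < b i) :
    ∃ F : Γ → Finset Γ, (∀ i, (F i).Nonempty) ∧ (∀ ⦃i i'⦄, i ≠ i' → Disjoint (F i) (F i')) ∧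
      ∀ i, ∀ j ∈ F i, 1 / ((F i).card : ℝ) ≤ b j := by
  classical
  -- level function
  have hex : ∀ j : Γ, ∃ n : ℕ, 1 / ((n : ℝ) + 2) < b j := by
    intro j
    obtain ⟨n, hn⟩ := exists_nat_gt (1 / b j)
    refine ⟨n, ?_⟩
    rw [div_lt_iff₀ (by positivity)]
    have h1 : 1 / b j * b j = 1 := div_mul_cancel₀ 1 (hb j).ne'
    nlinarith [hb j, hn]
  set u : Γ → ℕ := fun j => Nat.find (hex j) with hu_def
  have hu : ∀ j, 1 / ((u j : ℝ) + 2) < b j := fun j => Nat.find_spec (hex j)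
  set Δ : ℕ → Set Γ := fun n => u ⁻¹' {n} with hΔ_def
  set S : Set ℕ := {n | (Δ n).Infinite} with hS_def
  set U : Set Γ := ⋃ n : S, Δ (n : ℕ) with hU_def
  -- the complement of U is countable
  have hUc : (Uᶜ : Set Γ).Countable := by
    have hsub : (Uᶜ : Set Γ) ⊆ ⋃ n ∈ Sᶜ, Δ n := by
      intro j hj
      have hjmem : j ∈ Δ (u j) := rfl
      by_cases h : u j ∈ S
      · exact absurd (Set.mem_iUnion.mpr ⟨⟨u j, h⟩, hjmem⟩) hj
      · exact Set.mem_biUnion h hjmem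
    refine Set.Countable.mono hsub ?_
    refine Set.Countable.biUnion (Set.to_countable _) ?_
    intro n hn
    rw [hS_def] at hn
    simp only [Set.mem_compl_iff, Set.mem_setOf_eq] at hn
    exact (Set.not_infinite.mp hn).countable
  -- Γ injects into the sigma type
  have hcard : #Γ ≤ #(Σ n : S, ↥(Δ (n : ℕ))) := by
    have h1 : #Γ ≤ #U := by
      have hUym : ¬ (U : Set Γ).Countable := by
        intro hc
        apply hnc
        have : (univ : Set Γ).Countable := by
          rw [← Set.union_compl_self U]
          exact hc.union hUc
        exact Set.countable_univ_iff.mp this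
      have hUinf : ℵ₀ ≤ #U := by
        by_contra h
        push_neg at h
        exact hUym (Cardinal.lt_aleph0_iff_set_finite.mp h).countable
      have h2 : #(Uᶜ : Set Γ) ≤ #U :=
        le_trans (Cardinal.mk_le_aleph0_iff.mpr hUc.to_subtype) hUinf
      calc #Γ = #(univ : Set Γ) := Cardinal.mk_univ.symm
        _ = #((U ∪ Uᶜ : Set Γ)) := by rw [Set.union_compl_self]
        _ ≤ #U + #(Uᶜ : Set Γ) := Cardinal.mk_union_le _ _
        _ = #U := Cardinal.add_eq_left hUinf h2
    have h2 : #U ≤ Cardinal.sum (fun n : S => #(Δ (n : ℕ))) := by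
      have := Cardinal.mk_iUnion_le_sum_mk_lift (ι := S) (f := fun n : S => Δ (n : ℕ))
      rw [Cardinal.lift_uzero] at this
      exact this
    calc #Γ ≤ #U := h1
      _ ≤ Cardinal.sum (fun n : S => #(Δ (n : ℕ))) := h2
      _ = #(Σ n : S, ↥(Δ (n : ℕ))) := (Cardinal.mk_sigma _).symm
  obtain ⟨ι⟩ := Cardinal.le_def _ _ |>.mp hcard
  -- embeddings of blocks
  have hem : ∀ n : S, Nonempty ((↥(Δ (n : ℕ)) × Fin ((n : ℕ) + 2)) ↪ ↥(Δ (n : ℕ))) := by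
    rintro ⟨n, hn⟩
    haveI : Infinite ↥(Δ n) := hn.to_subtype
    rw [← Cardinal.le_def]
    calc #(↥(Δ n) × Fin (n + 2)) = #(↥(Δ n)) * (n + 2 : ℕ) := by
          simp [Cardinal.mk_prod]
      _ = #(↥(Δ n)) := Cardinal.mul_eq_left (Cardinal.aleph0_le_mk _)
          ((Cardinal.nat_lt_aleph0 _).le.trans (Cardinal.aleph0_le_mk _)) (by
            simp)
      _ ≤ #(↥(Δ n)) := le_refl _
  set em : ∀ n : S, (↥(Δ (n : ℕ)) × Fin ((n : ℕ) + 2)) ↪ ↥(Δ (n : ℕ)) :=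
    fun n => (hem n).some with hem_def
  -- the block attached to a sigma element
  set G : (Σ n : S, ↥(Δ (n : ℕ))) → Finset Γ := fun p =>
    Finset.univ.image (fun k : Fin ((p.1 : ℕ) + 2) => ((em p.1 (p.2, k) : ↥(Δ (p.1 : ℕ))) : Γ))
    with hG_def
  have hGmem : ∀ p : (Σ n : S, ↥(Δ (n : ℕ))), ∀ j ∈ G p, j ∈ Δ ((p.1 : ℕ)) := by
    rintro ⟨n, d⟩ j hj
    simp only [hG_def, Finset.mem_image, Finset.mem_univ, true_and] at hj
    obtain ⟨k, hk⟩ := hj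
    rw [← hk]
    exact (em n (d, k)).2
  have hGcard : ∀ p : (Σ n : S, ↥(Δ (n : ℕ))), (G p).card = (p.1 : ℕ) + 2 := by
    rintro ⟨n, d⟩
    rw [hG_def]
    rw [Finset.card_image_of_injective _ (by
      intro k k' hkk
      have h1 : em n (d, k) = em n (d, k') := Subtype.ext hkk
      have := (em n).injective h1
      exact (Prod.mk.injEq _ _ _ _).mp this |>.2)]
    simp
  have hGdisj : ∀ p p' : (Σ n : S, ↥(Δ (n : ℕ))), p ≠ p' → Disjoint (G p) (G p') := by
    rintro ⟨n, d⟩ ⟨n', d'⟩ hne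
    rw [Finset.disjoint_left]
    intro j hj hj'
    have h1 : j ∈ Δ (n : ℕ) := hGmem ⟨n, d⟩ j hj
    have h2 : j ∈ Δ (n' : ℕ) := hGmem ⟨n', d'⟩ j hj'
    have hnn' : n = n' := by
      apply Subtype.ext
      have e1 : u j = (n : ℕ) := h1
      have e2 : u j = (n' : ℕ) := h2
      rw [← e1, ← e2]
    subst hnn'
    apply hne
    simp only [hG_def, Finset.mem_image, Finset.mem_univ, true_and] at hj hj'
    obtain ⟨k, hk⟩ := hj
    obtain ⟨k', hk'⟩ := hj'
    have h3 : em n (d, k) = em n (d', k') := Subtype.ext (hk.trans hk'.symm)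
    have h4 := (em n).injective h3
    have h5 : d = d' := ((Prod.mk.injEq _ _ _ _).mp h4).1
    rw [h5]
  refine ⟨fun i => G (ι i), fun i => ?_, fun i i' hne => hGdisj _ _ (fun h => hne (ι.injective h)), ?_⟩
  · rw [hG_def]
    exact Finset.Nonempty.image ⟨0, Finset.mem_univ 0⟩ _
  · intro i j hj
    rw [hGcard (ι i)]
    have h1 : j ∈ Δ (((ι i).1 : ℕ)) := hGmem (ι i) j hj
    have h2 : u j = (((ι i).1 : ℕ)) := h1
    have := hu j
    rw [h2] at this
    have : 1 / ((((ι i).1 : ℕ) : ℝ) + 2) < b j := this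
    calc (1 : ℝ) / ((((ι i).1 : ℕ) + 2 : ℕ) : ℝ) = 1 / ((((ι i).1 : ℕ) : ℝ) + 2) := by
          push_cast; ring
      _ ≤ b j := this.le

end GF

/-- for infinite `Γ` and an admissible pair `(a,b)`, the positive cone
`B⁺(Γ)` is homeomorphic to a retract of `B(Γ,a,b)`. -/
theorem statement3 {Γ : Type*} [Infinite Γ] (a b : Γ → ℝ) (hab : Admissible a b) :
    ∃ A : Set ↥(BallAB Γ a b),
      (∃ r : ↥(BallAB Γ a b) → ↥(BallAB Γ a b), Continuous r ∧ Set.range r ⊆ A ∧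
        ∀ x ∈ A, r x = x) ∧
      Nonempty (↥(PosBall Γ) ≃ₜ ↥A) := by
  by_cases hc : Countable Γ
  · obtain ⟨d⟩ := nonempty_denumerable Γ
    let q : ℕ ≃ Γ := (Denumerable.eqv Γ).symm
    exact pack a b (fun x => ⟨eB b q x.1, eB_mem a b q hab x.2⟩)
      (fun y => ⟨rB b q y.1, rB_mem b q y.1⟩)
      ((eB_continuous b q).subtype_mk _)
      ((rB_continuous a b q).subtype_mk _)
      (fun x => Subtype.ext (rB_eB a b q hab x.2))
  · obtain ⟨F, h1, h2, h3⟩ := exists_goodFamily hc b (fun i => (hab i).2.2.1)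
    have hF : GoodFamily b F := ⟨h1, h2, h3⟩
    exact pack a b (fun x => ⟨eA F x.1, eA_mem hab hF x.2⟩)
      (fun y => ⟨rA F y.1, rA_mem y.2 hF⟩)
      ((eA_continuous (F := F)).subtype_mk _)
      ((rA_continuous (a := a) (b := b) (F := F)).subtype_mk _)
      (fun x => Subtype.ext (rA_eA hF x.2))

end
end

section
/- Let Γ be an infinite set and let (a,b) and (a',b') be two admissible pairs of functions on Γ. Then B(Γ,a,b) is homeomorphic to a retract of B(Γ,a',b'). -/
open Set Filter Topology

noncomputable section

/-- `X` is homeomorphic to a "factor" of `Y` : there are continuous `g : X → Y`, `f : Y → X`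
with `f ∘ g = id`.  This makes `range g` a retract of `Y` homeomorphic to `X`. -/
def Factor (X Y : Type*) [TopologicalSpace X] [TopologicalSpace Y] : Prop :=
  ∃ (g : X → Y) (f : Y → X), Continuous g ∧ Continuous f ∧ ∀ x, f (g x) = x

theorem Factor.conclusion {X Y : Type*} [TopologicalSpace X] [TopologicalSpace Y]
    (h : Factor X Y) :
    ∃ A : Set Y,
      (∃ r : Y → Y, Continuous r ∧ Set.range r ⊆ A ∧ ∀ x ∈ A, r x = x) ∧
      Nonempty (X ≃ₜ ↥A) := by
  obtain ⟨g, f, hg, hf, hfg⟩ := h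
  refine ⟨Set.range g, ⟨g ∘ f, hg.comp hf, ?_, ?_⟩, ⟨?_⟩⟩
  · rintro y ⟨z, rfl⟩; exact ⟨f z, rfl⟩
  · rintro y ⟨x, rfl⟩; simp [hfg x]
  · refine Homeomorph.mk ⟨fun x => ⟨g x, Set.mem_range_self x⟩, fun y => f y.1,
      fun x => hfg x, ?_⟩ ?_ ?_
    · rintro ⟨y, x, rfl⟩
      simp [hfg x]
    · exact (hg.comp continuous_id).subtype_mk _
    · exact hf.comp continuous_subtype_val

theorem Factor.trans {X Y Z : Type*} [TopologicalSpace X] [TopologicalSpace Y]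
    [TopologicalSpace Z] (h1 : Factor X Y) (h2 : Factor Y Z) : Factor X Z := by
  obtain ⟨g1, f1, hg1, hf1, h1⟩ := h1
  obtain ⟨g2, f2, hg2, hf2, h2⟩ := h2
  exact ⟨g2 ∘ g1, f1 ∘ f2, hg2.comp hg1, hf1.comp hf2, fun x => by simp [h2, h1]⟩

theorem Homeomorph.factor {X Y : Type*} [TopologicalSpace X] [TopologicalSpace Y]
    (h : X ≃ₜ Y) : Factor X Y :=
  ⟨h, h.symm, h.continuous, h.symm.continuous, fun x => h.symm_apply_apply x⟩

/-- The "box" `∏ n [a n, b n]`. -/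
def Box {ι : Type*} (a b : ι → ℝ) : Set (ι → ℝ) :=
  {w | ∀ n, a n ≤ w n ∧ w n ≤ b n}

/-- double clamp: clamp `t` into `[lo, hi]` and then into `[-R, R]`. -/
def dclamp (lo hi R t : ℝ) : ℝ := max (-R) (min R (max lo (min hi t)))

lemma dclamp_mem {lo hi R t : ℝ} (h1 : -1 ≤ lo) (h2 : lo ≤ 0) (h3 : 0 ≤ hi) (h5 : 0 ≤ R)
    (h6 : R ≤ 1) : lo ≤ dclamp lo hi R t ∧ dclamp lo hi R t ≤ hi ∧ |dclamp lo hi R t| ≤ R := by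
  unfold dclamp
  have hs1 : lo ≤ max lo (min hi t) := le_max_left _ _
  have hs2 : max lo (min hi t) ≤ hi := max_le (by linarith) (min_le_left _ _)
  refine ⟨?_, ?_, abs_le.2 ⟨le_max_left _ _, max_le (by linarith) (min_le_left _ _)⟩⟩
  · exact le_max_of_le_right (le_min (by linarith) hs1)
  · exact max_le (by linarith) (le_trans (min_le_right _ _) hs2)

lemma dclamp_eq {lo hi R t : ℝ} (h1 : lo ≤ t) (h2 : t ≤ hi) (h3 : |t| ≤ R) :
    dclamp lo hi R t = t := by
  have h3' := abs_le.1 h3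
  unfold dclamp
  rw [min_eq_right h2, max_eq_right h1, min_eq_right h3'.2, max_eq_right h3'.1]

/-- greedy residual clamping; first component: value at `n`; second: remaining budget. -/
def zf (a b : ℕ → ℝ) (w : ℕ → ℝ) : ℕ → ℝ × ℝ
  | 0 => (dclamp (a 0) (b 0) 1 (w 0), 1 - |dclamp (a 0) (b 0) 1 (w 0)|)
  | n + 1 =>
    (dclamp (a (n+1)) (b (n+1)) (zf a b w n).2 (w (n+1)),
      (zf a b w n).2 - |dclamp (a (n+1)) (b (n+1)) (zf a b w n).2 (w (n+1))|)

section Greedy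

variable {a b : ℕ → ℝ} (hab : Admissible a b)

lemma zf_snd (w : ℕ → ℝ) (n : ℕ) :
    (zf a b w n).2 = 1 - ∑ k ∈ Finset.range (n + 1), |(zf a b w k).1| := by
  induction n with
  | zero => simp [zf]
  | succ n ih =>
    have h : (zf a b w (n+1)).2 = (zf a b w n).2 - |(zf a b w (n+1)).1| := rfl
    rw [Finset.sum_range_succ, h, ih]; ring

include hab in
lemma zf_spec (w : ℕ → ℝ) (n : ℕ) :
    (a n ≤ (zf a b w n).1 ∧ (zf a b w n).1 ≤ b n) ∧ 0 ≤ (zf a b w n).2 ∧ (zf a b w n).2 ≤ 1 := by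
  induction n with
  | zero =>
    obtain ⟨h1, h2, h3, h4, h5⟩ := hab 0
    have := dclamp_mem (t := w 0) h1 h2 h3.le (by norm_num) (le_refl (1:ℝ))
    refine ⟨⟨this.1, this.2.1⟩, ?_, ?_⟩
    · show (0:ℝ) ≤ 1 - |dclamp _ _ _ _|; have := this.2.2; linarith [this]
    · show 1 - |dclamp (a 0) (b 0) 1 (w 0)| ≤ 1; have := abs_nonneg (dclamp (a 0) (b 0) 1 (w 0)); linarith
  | succ n ih =>
    obtain ⟨h1, h2, h3, h4, h5⟩ := hab (n + 1)
    have := dclamp_mem (t := w (n+1)) h1 h2 h3.le ih.2.1 ih.2.2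
    refine ⟨⟨this.1, this.2.1⟩, ?_, ?_⟩
    · show (0:ℝ) ≤ (zf a b w n).2 - |dclamp _ _ _ _|; linarith [this.2.2]
    · show (zf a b w n).2 - |dclamp (a (n+1)) (b (n+1)) (zf a b w n).2 (w (n+1))| ≤ 1
      have := abs_nonneg (dclamp (a (n+1)) (b (n+1)) (zf a b w n).2 (w (n+1)))
      linarith [ih.2.2]

lemma zf_continuous (n : ℕ) : Continuous (fun w : ℕ → ℝ => zf a b w n) := by
  induction n with
  | zero =>
    have h0 : Continuous fun w : ℕ → ℝ => dclamp (a 0) (b 0) 1 (w 0) := by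
      unfold dclamp; fun_prop
    exact h0.prodMk (by continuity)
  | succ n ih =>
    have hR : Continuous fun w : ℕ → ℝ => (zf a b w n).2 := (continuous_snd).comp ih
    have h0 : Continuous fun w : ℕ → ℝ =>
        dclamp (a (n+1)) (b (n+1)) (zf a b w n).2 (w (n+1)) := by
      unfold dclamp; fun_prop
    exact h0.prodMk (hR.sub h0.abs)

include hab in
/-- the greedy clamp gives a point of `BallAB`. -/
lemma zf_mem (w : ℕ → ℝ) : (fun n => (zf a b w n).1) ∈ BallAB ℕ a b := by
  constructor
  · intro s
    obtain ⟨N, hN⟩ := s.exists_nat_subset_range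
    calc ∑ n ∈ s, |(zf a b w n).1| ≤ ∑ n ∈ Finset.range N, |(zf a b w n).1| :=
          Finset.sum_le_sum_of_subset_of_nonneg hN (fun _ _ _ => abs_nonneg _)
    _ ≤ 1 := by
        cases N with
        | zero => simp
        | succ N =>
          have h := zf_snd (a := a) (b := b) w N
          have h2 := (zf_spec hab w N).2.1
          linarith
  · exact fun n => (zf_spec hab w n).1

include hab in
/-- on `BallAB` the greedy clamp is the identity. -/
lemma zf_id {w : ℕ → ℝ} (hw : w ∈ BallAB ℕ a b) (n : ℕ) : (zf a b w n).1 = w n := by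
  induction n using Nat.strong_induction_on with
  | _ n ih =>
    match n with
    | 0 =>
      show dclamp (a 0) (b 0) 1 (w 0) = w 0
      refine dclamp_eq (hw.2 0).1 (hw.2 0).2 ?_
      simpa using hw.1 {0}
    | n + 1 =>
      show dclamp (a (n+1)) (b (n+1)) (zf a b w n).2 (w (n+1)) = w (n+1)
      have hR : (zf a b w n).2 = 1 - ∑ k ∈ Finset.range (n + 1), |w k| := by
        rw [zf_snd (a := a) (b := b) w n]
        congr 1
        exact Finset.sum_congr rfl fun k hk => by rw [ih k (by have := Finset.mem_range.1 hk; omega)]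
      refine dclamp_eq (hw.2 (n+1)).1 (hw.2 (n+1)).2 ?_
      have h1 : ∑ k ∈ Finset.range (n + 2), |w k| ≤ 1 := hw.1 _
      rw [Finset.sum_range_succ] at h1
      rw [hR]
      linarith

include hab in
theorem factor_ballAB_box : Factor ↥(BallAB ℕ a b) ↥(Box a b) := by
  refine ⟨fun x => ⟨x.1, fun n => x.2.2 n⟩,
    fun w => ⟨fun n => (zf a b w.1 n).1, zf_mem hab w.1⟩, ?_, ?_, ?_⟩
  · exact Continuous.subtype_mk (continuous_subtype_val) _
  · refine Continuous.subtype_mk ?_ _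
    refine continuous_pi fun n => ?_
    exact (continuous_fst.comp ((zf_continuous (a := a) (b := b) n).comp continuous_subtype_val))
  · rintro ⟨x, hx⟩
    ext n
    exact zf_id hab hx n

end Greedy

lemma geom_half_sum (N : ℕ) : ∑ n ∈ Finset.range N, (1/2:ℝ) ^ (n+1) = 1 - (1/2) ^ N := by
  induction N with
  | zero => simp
  | succ M ihM => rw [Finset.sum_range_succ, ihM]; ring

section BoxTarget

variable {Γ : Type*} [Infinite Γ] {a b : ℕ → ℝ} {a' b' : Γ → ℝ}

/-- summable positive widths inside the target coordinates -/
theorem factor_box_target (hab : Admissible a b) (hab' : Admissible a' b') :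
    Factor ↥(Box a b) ↥(BallAB Γ a' b') := by
  classical
  set J : ℕ ↪ Γ := Infinite.natEmbedding Γ with hJ
  set β : ℕ → ℝ := fun n => min (b' (J n)) ((1/2) ^ (n+1)) with hβ
  have hβpos : ∀ n, 0 < β n := fun n => lt_min (hab' (J n)).2.2.1 (by positivity)
  have hβle : ∀ n, β n ≤ b' (J n) := fun n => min_le_left _ _
  have hβgeo : ∀ n, β n ≤ (1/2) ^ (n+1) := fun n => min_le_right _ _
  have hba : ∀ n, 0 < b n - a n := fun n => by
    have h := hab n; linarith [h.2.1, h.2.2.1]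
  -- geometric sum bound
  have hgeo : ∀ T : Finset ℕ, ∑ n ∈ T, β n ≤ 1 := by
    intro T
    obtain ⟨N, hN⟩ := T.exists_nat_subset_range
    calc ∑ n ∈ T, β n ≤ ∑ n ∈ Finset.range N, β n :=
          Finset.sum_le_sum_of_subset_of_nonneg hN (fun n _ _ => (hβpos n).le)
      _ ≤ ∑ n ∈ Finset.range N, (1/2 : ℝ) ^ (n+1) := Finset.sum_le_sum fun n _ => hβgeo n
      _ ≤ 1 := by
          rw [geom_half_sum]
          have : (0:ℝ) ≤ (1/2) ^ N := by positivity
          linarith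
  -- encoding
  set G : (ℕ → ℝ) → Γ → ℝ := fun w j =>
    if h : ∃ n, J n = j then
      β h.choose * (w h.choose - a h.choose) / (b h.choose - a h.choose) else 0 with hG
  have hGJ : ∀ w n, G w (J n) = β n * (w n - a n) / (b n - a n) := by
    intro w n
    have h : ∃ m, J m = J n := ⟨n, rfl⟩
    have hch : h.choose = n := J.injective h.choose_spec
    simp only [hG, dif_pos h, hch]
  have hGval : ∀ w : ℕ → ℝ, w ∈ Box a b → ∀ n, 0 ≤ G w (J n) ∧ G w (J n) ≤ β n := by
    intro w hw n
    rw [hGJ]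
    constructor
    · apply div_nonneg (mul_nonneg (hβpos n).le (by linarith [(hw n).1])) (hba n).le
    · rw [div_le_iff₀ (hba n)]
      have h1 : w n - a n ≤ b n - a n := by linarith [(hw n).2]
      nlinarith [hβpos n]
  have hGzero : ∀ w j, (¬ ∃ n, J n = j) → G w j = 0 := by
    intro w j h; simp only [hG, dif_neg h]
  have hGmem : ∀ w : ℕ → ℝ, w ∈ Box a b → G w ∈ BallAB Γ a' b' := by
    intro w hw
    constructor
    · -- summability
      intro S
      classical
      have hnn : ∀ j, 0 ≤ G w j := by
        intro j
        by_cases h : ∃ n, J n = j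
        · obtain ⟨n, rfl⟩ := h; exact (hGval w hw n).1
        · rw [hGzero w j h]
      set P : Γ → Prop := fun j => ∃ n, J n = j with hP
      set naddr : Γ → ℕ := fun j => if h : P j then h.choose else 0 with hnaddr
      have habs : ∀ j, |G w j| = G w j := fun j => abs_of_nonneg (hnn j)
      calc ∑ j ∈ S, |G w j| = ∑ j ∈ S, G w j := Finset.sum_congr rfl fun j _ => habs j
        _ = ∑ j ∈ S.filter P, G w j := by
            refine (Finset.sum_subset (Finset.filter_subset P S) fun j hj hj2 => ?_).symm
            have : ¬ P j := fun hPj => hj2 (Finset.mem_filter.2 ⟨hj, hPj⟩)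
            exact hGzero w j this
        _ ≤ ∑ j ∈ S.filter P, β (naddr j) := by
            refine Finset.sum_le_sum fun j hj => ?_
            have hPj : P j := (Finset.mem_filter.1 hj).2
            have hspec : J hPj.choose = j := hPj.choose_spec
            have hn : naddr j = hPj.choose := by simp only [hnaddr, dif_pos hPj]
            rw [hn]
            calc G w j = G w (J hPj.choose) := by rw [hspec]
              _ ≤ β hPj.choose := (hGval w hw hPj.choose).2
        _ = ∑ n ∈ (S.filter P).image naddr, β n := by
            refine (Finset.sum_image fun j hj j' hj' hh => ?_).symm
            have hPj : P j := (Finset.mem_filter.1 hj).2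
            have hPj' : P j' := (Finset.mem_filter.1 hj').2
            have e1 : J (naddr j) = j := by
              simp only [hnaddr, dif_pos hPj]; exact hPj.choose_spec
            have e2 : J (naddr j') = j' := by
              simp only [hnaddr, dif_pos hPj']; exact hPj'.choose_spec
            rw [← e1, ← e2, hh]
        _ ≤ 1 := hgeo _
    · -- bounds
      intro j
      by_cases h : ∃ n, J n = j
      · obtain ⟨n, rfl⟩ := h
        have h1 := hGval w hw n
        have h2 := (hab' (J n)).2.1
        exact ⟨by linarith [h1.1], le_trans h1.2 (hβle n)⟩
      · rw [hGzero w j h]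
        exact ⟨(hab' j).2.1, (hab' j).2.2.1.le⟩
  -- decoding
  set F : (Γ → ℝ) → ℕ → ℝ := fun y n =>
    max (a n) (min (b n) (a n + (b n - a n) * y (J n) / β n)) with hF
  have hFmem : ∀ y, F y ∈ Box a b := by
    intro y n
    refine ⟨le_max_left _ _, max_le (by linarith [hba n]) (min_le_left _ _)⟩
  have hFG : ∀ w : ℕ → ℝ, w ∈ Box a b → F (G w) = w := by
    intro w hw
    funext n
    have hv : G w (J n) = β n * (w n - a n) / (b n - a n) := hGJ w n
    have hβn := hβpos n
    have hban := hba n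
    have : a n + (b n - a n) * G w (J n) / β n = w n := by
      rw [hv]; field_simp; ring
    simp only [hF, this, min_eq_right (hw n).2, max_eq_right (hw n).1]
  refine ⟨fun w => ⟨G w.1, hGmem w.1 w.2⟩, fun y => ⟨F y.1, hFmem y.1⟩, ?_, ?_, ?_⟩
  · refine Continuous.subtype_mk ?_ _
    refine continuous_pi fun j => ?_
    by_cases h : ∃ n, J n = j
    · have : (fun w : ↥(Box a b) => G w.1 j) =
          fun w : ↥(Box a b) => β h.choose * (w.1 h.choose - a h.choose) / (b h.choose - a h.choose) := by
        funext w; simp only [hG, dif_pos h]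
      rw [this]
      exact (continuous_const.mul
        (((continuous_apply h.choose).comp continuous_subtype_val).sub continuous_const)).div_const _
    · have : (fun w : ↥(Box a b) => G w.1 j) = fun _ => 0 := by
        funext w; exact hGzero w.1 j h
      rw [this]; exact continuous_const
  · refine Continuous.subtype_mk ?_ _
    refine continuous_pi fun n => ?_
    simp only [hF]
    exact continuous_const.max (continuous_const.min (continuous_const.add
      ((continuous_const.mul
        ((continuous_apply (J n)).comp continuous_subtype_val)).div_const _)))
  · rintro ⟨w, hw⟩
    ext n
    exact congrFun (hFG w hw) n

end BoxTarget

lemma ballABCongr_mem1 {Γ Δ : Type*} (e : Γ ≃ Δ) (a b : Γ → ℝ)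
    (x : ↥(BallAB Γ a b)) :
    (fun d => x.1 (e.symm d)) ∈ BallAB Δ (a ∘ e.symm) (b ∘ e.symm) := by
  classical
  refine ⟨fun S => ?_, fun d => x.2.2 (e.symm d)⟩
  calc ∑ d ∈ S, |x.1 (e.symm d)| = ∑ j ∈ S.image e.symm, |x.1 j| :=
        (Finset.sum_image (g := e.symm) (f := fun j => |x.1 j|)
          (fun d _ d' _ h => by simpa using congrArg e h)).symm
    _ ≤ 1 := x.2.1 _

lemma ballABCongr_mem2 {Γ Δ : Type*} (e : Γ ≃ Δ) (a b : Γ → ℝ)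
    (y : ↥(BallAB Δ (a ∘ e.symm) (b ∘ e.symm))) :
    (fun g => y.1 (e g)) ∈ BallAB Γ a b := by
  classical
  refine ⟨fun S => ?_, fun g => by simpa using y.2.2 (e g)⟩
  calc ∑ g ∈ S, |y.1 (e g)| = ∑ d ∈ S.image e, |y.1 d| :=
        (Finset.sum_image (g := e) (f := fun d => |y.1 d|)
          (fun g _ g' _ h => e.injective h)).symm
    _ ≤ 1 := y.2.1 _

def ballABCongr {Γ Δ : Type*} (e : Γ ≃ Δ) (a b : Γ → ℝ) :
    ↥(BallAB Γ a b) ≃ₜ ↥(BallAB Δ (a ∘ e.symm) (b ∘ e.symm)) where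
  toFun x := ⟨fun d => x.1 (e.symm d), ballABCongr_mem1 e a b x⟩
  invFun y := ⟨fun g => y.1 (e g), ballABCongr_mem2 e a b y⟩
  left_inv x := by ext g; simp
  right_inv y := by ext d; simp
  continuous_toFun := by
    apply Continuous.subtype_mk
    exact continuous_pi fun d => (continuous_apply (e.symm d)).comp continuous_subtype_val
  continuous_invFun := by
    apply Continuous.subtype_mk
    exact continuous_pi fun g => (continuous_apply (e g)).comp continuous_subtype_val

/-- Case of countable `Γ`. -/
theorem factor_countable {Γ : Type*} [Infinite Γ] [Countable Γ] (a b a' b' : Γ → ℝ)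
    (hab : Admissible a b) (hab' : Admissible a' b') :
    Factor ↥(BallAB Γ a b) ↥(BallAB Γ a' b') := by
  obtain ⟨D⟩ : Nonempty (Denumerable Γ) :=
    nonempty_denumerable_iff.2 ⟨inferInstance, inferInstance⟩
  let e : Γ ≃ ℕ := @Denumerable.eqv Γ D
  have hadm : Admissible (a ∘ e.symm) (b ∘ e.symm) := fun n => hab (e.symm n)
  exact ((ballABCongr e a b).factor).trans
    ((factor_ballAB_box hadm).trans (factor_box_target hadm hab'))

/-- layer-cake slice: the part of mass `t` that lands in a slot of capacity `cap`
after the first `θ` units have been used by earlier slots. -/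
def cut (cap θ t : ℝ) : ℝ := min cap (max 0 (t - θ))

lemma cut_sum (c : ℕ → ℝ) (hc : ∀ k, 0 ≤ c k) (t : ℝ) (ht : 0 ≤ t) (m : ℕ) :
    ∑ k ∈ Finset.range m, cut (c k) (∑ l ∈ Finset.range k, c l) t
      = min t (∑ k ∈ Finset.range m, c k) := by
  induction m with
  | zero => simp [min_eq_right ht]
  | succ m ih =>
    rw [Finset.sum_range_succ, ih, Finset.sum_range_succ]
    set S := ∑ l ∈ Finset.range m, c l with hS
    unfold cut
    rcases le_total t S with h | h
    · rw [max_eq_left (by linarith), min_eq_right (hc m), min_eq_left h,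
        min_eq_left (by linarith [hc m]), add_zero]
    · rw [min_eq_right h, max_eq_right (by linarith)]
      rcases le_total (c m) (t - S) with h2 | h2
      · rw [min_eq_left h2, min_eq_right (by linarith)]
      · rw [min_eq_right h2, min_eq_left (by linarith)]
        ring

/-- positive/negative part selector. -/
def bpart {Γ : Type*} (p : Γ × Bool) (x : Γ → ℝ) : ℝ :=
  if p.2 then max (x p.1) 0 else max (-x p.1) 0

lemma bpart_nonneg {Γ : Type*} (p : Γ × Bool) (x : Γ → ℝ) : 0 ≤ bpart p x := by
  unfold bpart; split <;> exact le_max_right _ _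

lemma bpart_le_abs {Γ : Type*} (p : Γ × Bool) (x : Γ → ℝ) : bpart p x ≤ |x p.1| := by
  unfold bpart; split
  · exact max_le (le_abs_self _) (abs_nonneg _)
  · exact max_le (neg_le_abs _) (abs_nonneg _)

lemma bpart_add {Γ : Type*} (i : Γ) (x : Γ → ℝ) :
    bpart (i, true) x + bpart (i, false) x = |x i| := by
  unfold bpart
  rcases le_total (x i) 0 with h | h
  · rw [max_eq_right h, max_eq_left (by linarith), abs_of_nonpos h]; simp
  · rw [max_eq_left h, max_eq_right (by linarith), abs_of_nonneg h]; simp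

lemma bpart_sub {Γ : Type*} (i : Γ) (x : Γ → ℝ) :
    bpart (i, true) x - bpart (i, false) x = x i := by
  unfold bpart
  rcases le_total (x i) 0 with h | h
  · rw [max_eq_right h, max_eq_left (by linarith)]; simp
  · rw [max_eq_left h, max_eq_right (by linarith)]; simp

lemma clamp_abs_le {lo hi t : ℝ} (h1 : lo ≤ 0) (h2 : 0 ≤ hi) :
    |max lo (min hi t)| ≤ |t| := by
  rw [abs_le]
  constructor
  · refine le_max_of_le_right (le_min (by linarith [abs_nonneg t]) ?_)
    exact neg_abs_le t
  · exact max_le (by linarith [abs_nonneg t]) (le_trans (min_le_right _ _) (le_abs_self t))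

section BlocksFactor

variable {Γ : Type*} {a b a' b' : Γ → ℝ}
variable (len : Γ × Bool → ℕ) (elem : Γ × Bool → ℕ → Γ)

/-- threshold of slot `k` in block `p`. -/
def θf (b' : Γ → ℝ) (len : Γ × Bool → ℕ) (elem : Γ × Bool → ℕ → Γ) (p : Γ × Bool) (k : ℕ) : ℝ :=
  ∑ l ∈ Finset.range k, b' (elem p l)

def Pslot (len : Γ × Bool → ℕ) (elem : Γ × Bool → ℕ → Γ) (j : Γ) : Prop :=
  ∃ q : (Γ × Bool) × ℕ, q.2 < len q.1 ∧ elem q.1 q.2 = j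

open Classical in
/-- the encoding map. -/
def gfun (b' : Γ → ℝ) (len : Γ × Bool → ℕ) (elem : Γ × Bool → ℕ → Γ) (x : Γ → ℝ) (j : Γ) : ℝ :=
  if h : Pslot len elem j then
    cut (b' j) (θf b' len elem h.choose.1 h.choose.2) (bpart h.choose.1 x) else 0

/-- the decoding map. -/
def ffun (a b : Γ → ℝ) (len : Γ × Bool → ℕ) (elem : Γ × Bool → ℕ → Γ) (y : Γ → ℝ) (i : Γ) : ℝ :=
  max (a i) (min (b i)
    (∑ k ∈ Finset.range (len (i, true)), y (elem (i, true) k)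
      - ∑ k ∈ Finset.range (len (i, false)), y (elem (i, false) k)))

lemma bpart_continuous {p : Γ × Bool} : Continuous fun x : Γ → ℝ => bpart p x := by
  unfold bpart
  split
  · exact (continuous_apply _).max continuous_const
  · exact ((continuous_apply _).neg).max continuous_const

variable {len elem}

lemma gfun_eq
    (hinj : ∀ p k q l, k < len p → l < len q → elem p k = elem q l → p = q ∧ k = l)
    (b' : Γ → ℝ) (p : Γ × Bool) (k : ℕ) (hk : k < len p) (x : Γ → ℝ) :
    gfun b' len elem x (elem p k)
      = cut (b' (elem p k)) (θf b' len elem p k) (bpart p x) := by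
  classical
  have h : Pslot len elem (elem p k) := ⟨(p, k), hk, rfl⟩
  unfold gfun
  rw [dif_pos h]
  obtain ⟨h1, h2⟩ := h.choose_spec
  obtain ⟨e1, e2⟩ := hinj h.choose.1 h.choose.2 p k h1 hk h2
  rw [e1, e2]

lemma gfun_nonneg (b' : Γ → ℝ) (hb' : ∀ j, 0 ≤ b' j) (x : Γ → ℝ) (j : Γ) :
    0 ≤ gfun b' len elem x j := by
  unfold gfun
  split
  · exact le_min (hb' j) (le_max_left _ _)
  · exact le_refl 0

lemma gfun_le (b' : Γ → ℝ) (hb' : ∀ j, 0 ≤ b' j) (x : Γ → ℝ) (j : Γ) :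
    gfun b' len elem x j ≤ b' j := by
  unfold gfun
  split
  · exact min_le_left _ _
  · exact hb' j

lemma gfun_block_sum
    (hinj : ∀ p k q l, k < len p → l < len q → elem p k = elem q l → p = q ∧ k = l)
    (b' : Γ → ℝ) (hb' : ∀ j, 0 ≤ b' j)
    (hbig : ∀ p, 1 ≤ ∑ k ∈ Finset.range (len p), b' (elem p k))
    {x : Γ → ℝ} (hx : x ∈ Ball Γ) (p : Γ × Bool) :
    ∑ k ∈ Finset.range (len p), gfun b' len elem x (elem p k) = bpart p x := by
  classical
  have h1 : ∑ k ∈ Finset.range (len p), gfun b' len elem x (elem p k)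
      = ∑ k ∈ Finset.range (len p),
          cut (b' (elem p k)) (∑ l ∈ Finset.range k, b' (elem p l)) (bpart p x) := by
    refine Finset.sum_congr rfl fun k hk => ?_
    rw [gfun_eq hinj b' p k (Finset.mem_range.1 hk) x]
    rfl
  rw [h1, cut_sum _ (fun k => hb' (elem p k)) _ (bpart_nonneg p x)]
  have h2 : bpart p x ≤ 1 := by
    refine le_trans (bpart_le_abs p x) ?_
    simpa using hx {p.1}
  exact min_eq_left (le_trans h2 (hbig p))

theorem factor_of_blocks (hab : Admissible a b) (hab' : Admissible a' b')
    (hinj : ∀ p k q l, k < len p → l < len q → elem p k = elem q l → p = q ∧ k = l)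
    (hbig : ∀ p, 1 ≤ ∑ k ∈ Finset.range (len p), b' (elem p k)) :
    Factor ↥(BallAB Γ a b) ↥(BallAB Γ a' b') := by
  classical
  have hb'nn : ∀ j, (0:ℝ) ≤ b' j := fun j => (hab' j).2.2.1.le
  have ha'np : ∀ j, a' j ≤ 0 := fun j => (hab' j).2.1
  set blockF : Γ × Bool → Finset Γ := fun p => (Finset.range (len p)).image (elem p) with hbF
  have hdisj : ∀ p q : Γ × Bool, p ≠ q → Disjoint (blockF p) (blockF q) := by
    intro p q hpq
    rw [Finset.disjoint_left]
    rintro j hj1 hj2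
    obtain ⟨k, hk, rfl⟩ := Finset.mem_image.1 hj1
    obtain ⟨l, hl, he⟩ := Finset.mem_image.1 hj2
    exact hpq ((hinj q l p k (Finset.mem_range.1 hl) (Finset.mem_range.1 hk) he).1).symm
  have hsum_block : ∀ (y : Γ → ℝ) p, ∑ j ∈ blockF p, |y j| =
      ∑ k ∈ Finset.range (len p), |y (elem p k)| := by
    intro y p
    refine Finset.sum_image fun k hk l hl he => ?_
    exact (hinj p k p l (Finset.mem_range.1 hk) (Finset.mem_range.1 hl) he).2
  -- encoding is valid
  have hgmem : ∀ x : Γ → ℝ, x ∈ BallAB Γ a b → gfun b' len elem x ∈ BallAB Γ a' b' := by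
    intro x hx
    constructor
    · intro S
      have habs : ∀ j, |gfun b' len elem x j| = gfun b' len elem x j :=
        fun j => abs_of_nonneg (gfun_nonneg b' hb'nn x j)
      set S' := S.filter (Pslot len elem) with hS'
      set paddr : Γ → Γ × Bool := fun j =>
        if h : Pslot len elem j then h.choose.1 else (j, true) with hpaddr
      set T := S'.image paddr with hT
      have hsub : S' ⊆ T.biUnion blockF := by
        intro j hj
        have hPj : Pslot len elem j := (Finset.mem_filter.1 hj).2
        refine Finset.mem_biUnion.2 ⟨paddr j, Finset.mem_image_of_mem _ hj, ?_⟩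
        have : paddr j = hPj.choose.1 := by simp only [hpaddr, dif_pos hPj]
        rw [this, hbF]
        obtain ⟨h1, h2⟩ := hPj.choose_spec
        exact Finset.mem_image.2 ⟨hPj.choose.2, Finset.mem_range.2 h1, h2⟩
      calc ∑ j ∈ S, |gfun b' len elem x j| = ∑ j ∈ S, gfun b' len elem x j :=
            Finset.sum_congr rfl fun j _ => habs j
        _ = ∑ j ∈ S', gfun b' len elem x j := by
            refine (Finset.sum_subset (Finset.filter_subset _ S) fun j hj hj2 => ?_).symm
            have hnP : ¬ Pslot len elem j := fun hP => hj2 (Finset.mem_filter.2 ⟨hj, hP⟩)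
            unfold gfun
            rw [dif_neg hnP]
        _ ≤ ∑ j ∈ T.biUnion blockF, gfun b' len elem x j :=
            Finset.sum_le_sum_of_subset_of_nonneg hsub
              (fun j _ _ => gfun_nonneg b' hb'nn x j)
        _ = ∑ p ∈ T, ∑ j ∈ blockF p, gfun b' len elem x j :=
            Finset.sum_biUnion (fun p _ q _ hpq => hdisj p q hpq)
        _ = ∑ p ∈ T, bpart p x := by
            refine Finset.sum_congr rfl fun p _ => ?_
            rw [hbF]
            rw [Finset.sum_image fun k hk l hl he =>
              (hinj p k p l (Finset.mem_range.1 hk) (Finset.mem_range.1 hl) he).2]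
            exact gfun_block_sum hinj b' hb'nn hbig hx.1 p
        _ ≤ ∑ p ∈ (T.image Prod.fst) ×ˢ (Finset.univ : Finset Bool), bpart p x := by
            refine Finset.sum_le_sum_of_subset_of_nonneg ?_ fun p _ _ => bpart_nonneg p x
            intro p hp
            exact Finset.mem_product.2 ⟨Finset.mem_image_of_mem _ hp, Finset.mem_univ _⟩
        _ = ∑ i ∈ T.image Prod.fst, |x i| := by
            rw [Finset.sum_product]
            refine Finset.sum_congr rfl fun i _ => ?_
            rw [Fintype.sum_bool]
            exact bpart_add i x
        _ ≤ 1 := hx.1 _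
    · intro j
      refine ⟨le_trans (ha'np j) (gfun_nonneg b' hb'nn x j), gfun_le b' hb'nn x j⟩
  -- decoding is valid
  have hfmem : ∀ y : Γ → ℝ, y ∈ BallAB Γ a' b' → ffun a b len elem y ∈ BallAB Γ a b := by
    intro y hy
    constructor
    · intro s
      have hle : ∀ i, |ffun a b len elem y i| ≤
          ∑ sb : Bool, ∑ k ∈ Finset.range (len (i, sb)), |y (elem (i, sb) k)| := by
        intro i
        refine le_trans (clamp_abs_le (hab i).2.1 (hab i).2.2.1.le) ?_
        rw [Fintype.sum_bool]
        refine le_trans (abs_sub _ _) (add_le_add ?_ ?_) <;>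
          exact Finset.abs_sum_le_sum_abs _ _
      calc ∑ i ∈ s, |ffun a b len elem y i|
          ≤ ∑ i ∈ s, ∑ sb : Bool, ∑ k ∈ Finset.range (len (i, sb)), |y (elem (i, sb) k)| :=
            Finset.sum_le_sum fun i _ => hle i
        _ = ∑ p ∈ s ×ˢ (Finset.univ : Finset Bool), ∑ j ∈ blockF p, |y j| := by
            rw [Finset.sum_product]
            exact Finset.sum_congr rfl fun i _ => Finset.sum_congr rfl fun sb _ =>
              (hsum_block y (i, sb)).symm
        _ = ∑ j ∈ (s ×ˢ (Finset.univ : Finset Bool)).biUnion blockF, |y j| :=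
            (Finset.sum_biUnion (fun p _ q _ hpq => hdisj p q hpq)).symm
        _ ≤ 1 := hy.1 _
    · intro i
      have h := hab i
      exact ⟨le_max_left _ _, max_le (by linarith [h.2.1, h.2.2.1]) (min_le_left _ _)⟩
  -- the factorization
  refine ⟨fun x => ⟨gfun b' len elem x.1, hgmem x.1 x.2⟩,
    fun y => ⟨ffun a b len elem y.1, hfmem y.1 y.2⟩, ?_, ?_, ?_⟩
  · refine Continuous.subtype_mk ?_ _
    refine continuous_pi fun j => ?_
    show Continuous fun x : ↥(BallAB Γ a b) => gfun b' len elem x.1 j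
    unfold gfun
    split
    · refine Continuous.min continuous_const (Continuous.max continuous_const ?_)
      exact (bpart_continuous.comp continuous_subtype_val).sub continuous_const
    · exact continuous_const
  · refine Continuous.subtype_mk ?_ _
    refine continuous_pi fun i => ?_
    show Continuous fun y : ↥(BallAB Γ a' b') => ffun a b len elem y.1 i
    unfold ffun
    refine Continuous.max continuous_const (Continuous.min continuous_const (Continuous.sub ?_ ?_)) <;>
      exact continuous_finset_sum _ fun k _ =>
        (continuous_apply _).comp continuous_subtype_val
  · rintro ⟨x, hx⟩
    ext i
    show ffun a b len elem (gfun b' len elem x) i = x i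
    unfold ffun
    rw [gfun_block_sum hinj b' hb'nn hbig hx.1 (i, true),
      gfun_block_sum hinj b' hb'nn hbig hx.1 (i, false), bpart_sub]
    rw [min_eq_right (hx.2 i).2, max_eq_right (hx.2 i).1]

end BlocksFactor

def prodBoolEmb (Γ : Type*) : (Γ × Bool) ↪ (Γ ⊕ Γ) where
  toFun p := cond p.2 (Sum.inl p.1) (Sum.inr p.1)
  inj' := by
    rintro ⟨i, b⟩ ⟨i', b'⟩ h
    cases b <;> cases b' <;> simp only [cond] at h <;>
      first
        | (obtain rfl := Sum.inr.inj h; rfl)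
        | (obtain rfl := Sum.inl.inj h; rfl)
        | exact absurd h (by simp)

theorem exists_blocks {Γ : Type*} [Infinite Γ] (hΓ : ¬ Countable Γ) (b' : Γ → ℝ)
    (hb' : ∀ j, 0 < b' j) :
    ∃ (len : Γ × Bool → ℕ) (elem : Γ × Bool → ℕ → Γ),
      (∀ p k q l, k < len p → l < len q → elem p k = elem q l → p = q ∧ k = l) ∧
      (∀ p, 1 ≤ ∑ k ∈ Finset.range (len p), b' (elem p k)) := by
  classical
  -- the scale of each coordinate
  have hcov : ∀ j, ∃ n : ℕ, 1 / ((n : ℝ) + 1) < b' j := by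
    intro j
    obtain ⟨n, hn⟩ := exists_nat_gt (1 / b' j)
    refine ⟨n, ?_⟩
    have hpos : (0:ℝ) < (n:ℝ) + 1 := by positivity
    rw [div_lt_iff₀ hpos]
    rw [div_lt_iff₀ (hb' j)] at hn
    nlinarith [hb' j]
  set nmin : Γ → ℕ := fun j => Nat.find (hcov j) with hnmin
  set V : ℕ → Set Γ := fun n => nmin ⁻¹' {n} with hV
  have hVscale : ∀ n j, j ∈ V n → 1 / ((n : ℝ) + 1) < b' j := by
    intro n j hj
    have := Nat.find_spec (hcov j)
    rwa [show Nat.find (hcov j) = n from hj] at this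
  set I : Set ℕ := {n | (V n).Infinite} with hI
  set W : Set Γ := ⋃ n ∈ I, V n with hW
  -- the complement of W is countable
  have hWc : Wᶜ.Countable := by
    have hsub : Wᶜ ⊆ ⋃ n ∈ Iᶜ, V n := by
      intro j hj
      have hjV : j ∈ V (nmin j) := rfl
      rcases Classical.em (nmin j ∈ I) with h | h
      · exact absurd (Set.mem_biUnion h hjV) hj
      · exact Set.mem_biUnion h hjV
    refine Set.Countable.mono hsub ?_
    refine Set.Countable.biUnion (Set.to_countable _) fun n hn => ?_
    exact (Set.not_infinite.1 hn).countable
  have hWuc : ¬ Countable ↥W := by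
    intro hc
    have : W.Countable := Set.countable_coe_iff.1 hc
    have : (W ∪ Wᶜ).Countable := this.union hWc
    rw [Set.union_compl_self] at this
    exact hΓ (Set.countable_univ_iff.1 this)
  haveI : Infinite ↥W := by
    by_contra h
    rw [not_infinite_iff_finite] at h
    exact hWuc h.to_countable
  -- D' : hosts for blocks
  set D : Set (ℕ × Γ) := {q | (V q.1).Infinite ∧ q.2 ∈ V q.1} with hD
  have hWD : Cardinal.mk ↥W ≤ Cardinal.mk ↥D := by
    refine Cardinal.mk_le_of_surjective (f := fun q : ↥D => (⟨q.1.2, ?_⟩ : ↥W)) ?_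
    · exact Set.mem_biUnion q.2.1 q.2.2
    · rintro ⟨w, hw⟩
      obtain ⟨n, hn, hmem⟩ := Set.mem_iUnion₂.1 hw
      exact ⟨⟨(n, w), ⟨hn, hmem⟩⟩, rfl⟩
  have hΓW : Cardinal.mk Γ ≤ Cardinal.mk ↥W := by
    have h1 : Cardinal.mk ↥W + Cardinal.mk ↥Wᶜ = Cardinal.mk Γ := Cardinal.mk_sum_compl W
    have h2 : Cardinal.mk ↥Wᶜ ≤ Cardinal.aleph0 := by
      haveI := hWc.to_subtype
      exact Cardinal.mk_le_aleph0
    have h3 : Cardinal.aleph0 ≤ Cardinal.mk ↥W := Cardinal.infinite_iff.1 inferInstance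
    calc Cardinal.mk Γ = Cardinal.mk ↥W + Cardinal.mk ↥Wᶜ := h1.symm
      _ ≤ Cardinal.mk ↥W + Cardinal.aleph0 := add_le_add_right h2 _
      _ = Cardinal.mk ↥W := Cardinal.add_eq_left h3 h3
  have hΓ2 : Cardinal.mk (Γ × Bool) ≤ Cardinal.mk Γ := by
    calc Cardinal.mk (Γ × Bool) ≤ Cardinal.mk (Γ ⊕ Γ) := ⟨prodBoolEmb Γ⟩
      _ = Cardinal.mk Γ + Cardinal.mk Γ := by simp
      _ = Cardinal.mk Γ := Cardinal.add_eq_self (Cardinal.infinite_iff.1 inferInstance)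
  obtain ⟨Φ⟩ : Nonempty ((Γ × Bool) ↪ ↥D) :=
    (Cardinal.le_def _ _).1 (le_trans hΓ2 (le_trans hΓW hWD))
  -- block structure inside each infinite V n
  have hem : ∀ n, (V n).Infinite → Nonempty ((↥(V n) × ULift.{_,0} (Fin (n+1))) ≃ ↥(V n)) := by
    intro n hn
    haveI := hn.to_subtype
    refine Cardinal.eq.1 ?_
    have h1 : Cardinal.mk (ULift.{_,0} (Fin (n+1))) = ((n+1 : ℕ) : Cardinal) := by simp
    rw [Cardinal.mk_prod, Cardinal.lift_id, h1, Cardinal.lift_natCast]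
    refine Cardinal.mul_eq_left (Cardinal.infinite_iff.1 inferInstance) ?_ (by simp)
    exact le_trans (Cardinal.nat_lt_aleph0 _).le (Cardinal.infinite_iff.1 inferInstance)
  set em : ∀ n, (V n).Infinite → ((↥(V n) × ULift.{_,0} (Fin (n+1))) ≃ ↥(V n)) :=
    fun n hn => (hem n hn).some with hemdef
  -- define blocks
  set E : ↥D → ℕ → Γ := fun s k =>
    (em s.1.1 s.2.1 (⟨s.1.2, s.2.2⟩,
      ⟨⟨k % (s.1.1 + 1), Nat.mod_lt _ (Nat.succ_pos _)⟩⟩)).1 with hE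
  have hEmem : ∀ s k, E s k ∈ V s.1.1 := fun s k => (em s.1.1 s.2.1 _).2
  have hEinj : ∀ (s t : ↥D) (k l : ℕ), k < s.1.1 + 1 → l < t.1.1 + 1 →
      E s k = E t l → s = t ∧ k = l := by
    rintro ⟨⟨n, u⟩, hs1, hs2⟩ ⟨⟨m, v⟩, ht1, ht2⟩ k l hk hl he
    have hnm : n = m := by
      have h1 := hEmem ⟨(n, u), hs1, hs2⟩ k
      have h2 := hEmem ⟨(m, v), ht1, ht2⟩ l
      rw [he] at h1
      have e1 : nmin (E ⟨(m, v), ht1, ht2⟩ l) = n := h1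
      have e2 : nmin (E ⟨(m, v), ht1, ht2⟩ l) = m := h2
      rw [e1] at e2; exact e2
    subst hnm
    simp only [hE] at he
    have hinj2 := (em n hs1).injective (Subtype.ext he)
    have h1 : u = v := congrArg (fun z => (z.1 : Γ)) hinj2
    have h2 : k % (n+1) = l % (n+1) := congrArg (fun z => (z.2.down : Fin (n+1)).val) hinj2
    rw [Nat.mod_eq_of_lt hk, Nat.mod_eq_of_lt hl] at h2
    refine ⟨Subtype.ext ?_, h2⟩
    show (n, u) = (n, v)
    rw [h1]
  -- assemble
  refine ⟨fun p => (Φ p).1.1 + 1, fun p k => E (Φ p) k, ?_, ?_⟩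
  · intro p k q l hk hl he
    obtain ⟨h1, h2⟩ := hEinj (Φ p) (Φ q) k l hk hl he
    exact ⟨Φ.injective h1, h2⟩
  · intro p
    set s := Φ p with hs
    set n := s.1.1 with hn
    have hterm : ∀ k ∈ Finset.range (n + 1), 1 / ((n : ℝ) + 1) ≤ b' (E s k) :=
      fun k _ => (hVscale n (E s k) (hEmem s k)).le
    calc (1:ℝ) = ∑ _k ∈ Finset.range (n + 1), 1 / ((n : ℝ) + 1) := by
          rw [Finset.sum_const, Finset.card_range, nsmul_eq_mul]
          have : ((n : ℝ) + 1) ≠ 0 := by positivity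
          push_cast
          field_simp
      _ ≤ ∑ k ∈ Finset.range (n + 1), b' (E s k) := Finset.sum_le_sum hterm

/-- Case of uncountable `Γ`. -/
theorem factor_uncountable {Γ : Type*} [Infinite Γ] (hΓ : ¬ Countable Γ) (a b a' b' : Γ → ℝ)
    (hab : Admissible a b) (hab' : Admissible a' b') :
    Factor ↥(BallAB Γ a b) ↥(BallAB Γ a' b') := by
  obtain ⟨len, elem, hinj, hbig⟩ := exists_blocks hΓ b' (fun j => (hab' j).2.2.1)
  exact factor_of_blocks hab hab' hinj hbig

/-- for infinite `Γ` and admissible pairs `(a,b)` and `(a',b')`,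
`B(Γ,a,b)` is homeomorphic to a retract of `B(Γ,a',b')`. -/
theorem statement4 {Γ : Type*} [Infinite Γ] (a b a' b' : Γ → ℝ)
    (hab : Admissible a b) (hab' : Admissible a' b') :
    ∃ A : Set ↥(BallAB Γ a' b'),
      (∃ r : ↥(BallAB Γ a' b') → ↥(BallAB Γ a' b'), Continuous r ∧ Set.range r ⊆ A ∧
        ∀ x ∈ A, r x = x) ∧
      Nonempty (↥(BallAB Γ a b) ≃ₜ ↥A) := by
  by_cases hc : Countable Γ
  · exact (factor_countable a b a' b' hab hab').conclusion
  · exact (factor_uncountable hc a b a' b' hab hab').conclusion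

end
end

section
/- For every strictly increasing bijection φ : [0,1] → [0,1] there exists a homeomorphism g : B⁺(ℕ) → B⁺(ℕ) such that ‖g(x)‖ = φ(‖x‖) for all x ∈ B⁺(ℕ). -/
open Set Filter Topology

noncomputable section

namespace Stmt6Aux

abbrev I01 : Set ℝ := Set.Icc (0:ℝ) 1

lemma psI_mem (x : ↥(PosBall ℕ)) (n : ℕ) :
    ∑ i ∈ Finset.range (n+1), x.1 i ∈ I01 := by
  refine ⟨Finset.sum_nonneg fun i _ => x.2.2 i, ?_⟩
  calc ∑ i ∈ Finset.range (n+1), x.1 i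
      ≤ ∑ i ∈ Finset.range (n+1), |x.1 i| :=
        Finset.sum_le_sum fun i _ => le_abs_self _
    _ ≤ 1 := x.2.1 _

def psI (x : ↥(PosBall ℕ)) (n : ℕ) : ↥I01 := ⟨_, psI_mem x n⟩

lemma psI_mono (x : ↥(PosBall ℕ)) : Monotone (psI x) := by
  intro m n hmn
  show (psI x m : ℝ) ≤ (psI x n : ℝ)
  exact Finset.sum_le_sum_of_subset_of_nonneg
    (Finset.range_subset_range.2 (by omega)) (fun i _ _ => x.2.2 i)

lemma cont_psI (n : ℕ) : Continuous fun x : ↥(PosBall ℕ) => psI x n := by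
  refine Continuous.subtype_mk ?_ _
  exact continuous_finset_sum _ fun i _ => (continuous_apply i).comp continuous_subtype_val

variable (e : ↥I01 ≃o ↥I01)

def Gfun (x : ↥(PosBall ℕ)) : ℕ → ℝ
  | 0 => (e (psI x 0) : ℝ)
  | (n+1) => (e (psI x (n+1)) : ℝ) - (e (psI x n) : ℝ)

lemma Gfun_nonneg (x : ↥(PosBall ℕ)) (n : ℕ) : 0 ≤ Gfun e x n := by
  cases n with
  | zero => exact (e (psI x 0)).2.1
  | succ n =>
    have : e (psI x n) ≤ e (psI x (n+1)) := e.monotone (psI_mono x (Nat.le_succ n))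
    simpa [Gfun, sub_nonneg] using this

lemma sum_Gfun (x : ↥(PosBall ℕ)) (n : ℕ) :
    ∑ i ∈ Finset.range (n+1), Gfun e x i = (e (psI x n) : ℝ) := by
  induction n with
  | zero => simp [Gfun]
  | succ n ih => rw [Finset.sum_range_succ, ih]; simp [Gfun]

lemma G_mem (x : ↥(PosBall ℕ)) : Gfun e x ∈ PosBall ℕ := by
  refine ⟨fun s => ?_, Gfun_nonneg e x⟩
  have hsub : s ⊆ Finset.range (s.sup id + 1) := by
    intro i hi
    exact Finset.mem_range.2 (Nat.lt_succ_of_le (Finset.le_sup (f := id) hi))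
  calc ∑ i ∈ s, |Gfun e x i|
      = ∑ i ∈ s, Gfun e x i := by
        exact Finset.sum_congr rfl fun i _ => abs_of_nonneg (Gfun_nonneg e x i)
    _ ≤ ∑ i ∈ Finset.range (s.sup id + 1), Gfun e x i :=
        Finset.sum_le_sum_of_subset_of_nonneg hsub (fun i _ _ => Gfun_nonneg e x i)
    _ = (e (psI x (s.sup id)) : ℝ) := sum_Gfun e x _
    _ ≤ 1 := (e (psI x (s.sup id))).2.2

def G (x : ↥(PosBall ℕ)) : ↥(PosBall ℕ) := ⟨Gfun e x, G_mem e x⟩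

lemma psI_G (x : ↥(PosBall ℕ)) (n : ℕ) : psI (G e x) n = e (psI x n) :=
  Subtype.ext (sum_Gfun e x n)

lemma G_comp (e' : ↥I01 ≃o ↥I01) (x : ↥(PosBall ℕ)) :
    G e' (G e x) = G (e.trans e') x := by
  refine Subtype.ext (funext fun n => ?_)
  cases n with
  | zero =>
    show Gfun e' (G e x) 0 = Gfun (e.trans e') x 0
    simp [Gfun, psI_G]
  | succ n =>
    show Gfun e' (G e x) (n+1) = Gfun (e.trans e') x (n+1)
    simp [Gfun, psI_G]

lemma G_refl (x : ↥(PosBall ℕ)) : G (OrderIso.refl _) x = x := by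
  refine Subtype.ext (funext fun n => ?_)
  cases n with
  | zero =>
    show Gfun _ x 0 = x.1 0
    simp [Gfun, psI]
  | succ n =>
    show Gfun _ x (n+1) = x.1 (n+1)
    simp [Gfun, psI, Finset.sum_range_succ]

lemma cont_G : Continuous (G e) := by
  refine Continuous.subtype_mk (continuous_pi fun n => ?_) _
  have he : Continuous fun a : ↥I01 => (e a : ℝ) :=
    continuous_subtype_val.comp e.toHomeomorph.continuous
  cases n with
  | zero =>
    show Continuous fun x => (e (psI x 0) : ℝ)
    exact he.comp (cont_psI 0)
  | succ n =>
    show Continuous fun x => (e (psI x (n+1)) : ℝ) - (e (psI x n) : ℝ)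
    exact (he.comp (cont_psI (n+1))).sub (he.comp (cont_psI n))

lemma summable_val (x : ↥(PosBall ℕ)) : Summable x.1 := by
  refine summable_of_sum_range_le (c := 1) x.2.2 fun n => ?_
  calc ∑ i ∈ Finset.range n, x.1 i ≤ ∑ i ∈ Finset.range n, |x.1 i| :=
        Finset.sum_le_sum fun i _ => le_abs_self _
    _ ≤ 1 := x.2.1 _

lemma tsum_mem (x : ↥(PosBall ℕ)) : (∑' n, x.1 n) ∈ I01 := by
  refine ⟨tsum_nonneg x.2.2, ?_⟩
  refine Summable.tsum_le_of_sum_range_le (summable_val x) fun n => ?_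
  calc ∑ i ∈ Finset.range n, x.1 i ≤ ∑ i ∈ Finset.range n, |x.1 i| :=
        Finset.sum_le_sum fun i _ => le_abs_self _
    _ ≤ 1 := x.2.1 _

lemma tsum_abs_eq (x : ↥(PosBall ℕ)) : (∑' n, |x.1 n|) = ∑' n, x.1 n :=
  tsum_congr fun n => abs_of_nonneg (x.2.2 n)

lemma tendsto_psI (x : ↥(PosBall ℕ)) :
    Tendsto (fun n => psI x n) atTop (𝓝 ⟨∑' n, x.1 n, tsum_mem x⟩) := by
  rw [Topology.IsEmbedding.subtypeVal.tendsto_nhds_iff]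
  have h := (summable_val x).hasSum.tendsto_sum_nat
  have := h.comp (Filter.tendsto_add_atTop_nat 1)
  simpa [Function.comp_def, psI] using this

lemma norm_G (x : ↥(PosBall ℕ)) :
    (∑' n, (G e x).1 n) = (e ⟨∑' n, x.1 n, tsum_mem x⟩ : ℝ) := by
  have hG : Summable (G e x).1 := summable_val (G e x)
  have h1 : Tendsto (fun n => ∑ i ∈ Finset.range (n+1), (G e x).1 i) atTop
      (𝓝 (∑' n, (G e x).1 n)) := by
    have h := hG.hasSum.tendsto_sum_nat
    have := h.comp (Filter.tendsto_add_atTop_nat 1)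
    simpa [Function.comp_def] using this
  have h2 : Tendsto (fun n => ∑ i ∈ Finset.range (n+1), (G e x).1 i) atTop
      (𝓝 (e ⟨∑' n, x.1 n, tsum_mem x⟩ : ℝ)) := by
    have he : Continuous fun a : ↥I01 => (e a : ℝ) :=
      continuous_subtype_val.comp e.toHomeomorph.continuous
    have h3 := (he.tendsto _).comp (tendsto_psI x)
    have heq : (fun n => ∑ i ∈ Finset.range (n+1), (G e x).1 i)
        = ((fun a : ↥I01 => (e a : ℝ)) ∘ fun n => psI x n) := by
      funext n
      exact sum_Gfun e x n
    rw [heq]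
    exact h3
  exact tendsto_nhds_unique h1 h2

end Stmt6Aux

/-- for every strictly increasing bijection `φ : [0,1] → [0,1]` there is
a homeomorphism `g : B⁺(ℕ) → B⁺(ℕ)` with `‖g x‖ = φ ‖x‖` for all `x`. -/
theorem statement6 (φ : ℝ → ℝ)
    (hbij : Set.BijOn φ (Set.Icc (0:ℝ) 1) (Set.Icc (0:ℝ) 1))
    (hmono : StrictMonoOn φ (Set.Icc (0:ℝ) 1)) :
    ∃ g : ↥(PosBall ℕ) ≃ₜ ↥(PosBall ℕ),
      ∀ x : ↥(PosBall ℕ), (∑' n, |(g x).1 n|) = φ (∑' n, |x.1 n|) := by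
  classical
  open Stmt6Aux in
  let e : ↥I01 ≃o ↥I01 :=
    { toEquiv := hbij.equiv φ
      map_rel_iff' := fun {a b} => hmono.le_iff_le a.2 b.2 }
  refine ⟨⟨⟨G e, G e.symm, ?_, ?_⟩, cont_G e, cont_G e.symm⟩, ?_⟩
  · intro x
    show G e.symm (G e x) = x
    rw [G_comp, OrderIso.self_trans_symm]
    exact G_refl x
  · intro x
    show G e (G e.symm x) = x
    rw [G_comp, OrderIso.symm_trans_self]
    exact G_refl x
  · intro x
    show (∑' n, |(G e x).1 n|) = φ (∑' n, |x.1 n|)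
    calc (∑' n, |(G e x).1 n|) = ∑' n, (G e x).1 n := tsum_abs_eq _
      _ = (e ⟨∑' n, x.1 n, tsum_mem x⟩ : ℝ) := norm_G e x
      _ = φ (∑' n, x.1 n) := rfl
      _ = φ (∑' n, |x.1 n|) := by rw [tsum_abs_eq]


end
end

section
/- Let F be a finite set with at least two elements and let t ∈ (0,1]. Then the map φ defined by φ(x)_i = x_i - (1/|F|) ∑_{j∈F} x_j is a homeomorphism from C = {x ∈ [0,1]^F : max_{i∈F} x_i = t} onto the closed ball of radius t of the space {u ∈ ℝ^F : ∑_{j∈F} u_j = 0} endowed with the norm ‖u‖' = max{|u_i - u_j| : i, j ∈ F, i ≠ j}. In particular, C is homeomorphic to the (|F|-1)-dimensional euclidean closed ball. -/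
open Set Filter Topology

noncomputable section

section Aux

variable {F : Type*} [Fintype F]

private lemma aux_Dfin (u : F → ℝ) :
    {d : ℝ | ∃ i j, i ≠ j ∧ d = |u i - u j|}.Finite :=
  (Set.finite_range (fun p : F × F => |u p.1 - u p.2|)).subset
    (by rintro d ⟨i, j, _, rfl⟩; exact ⟨(i, j), rfl⟩)

private lemma aux_of_sSup_le {u : F → ℝ} {t : ℝ}
    (h : sSup {d : ℝ | ∃ i j, i ≠ j ∧ d = |u i - u j|} ≤ t)
    {i j : F} (hij : i ≠ j) : |u i - u j| ≤ t :=
  le_trans (le_csSup (aux_Dfin u).bddAbove ⟨i, j, hij, rfl⟩) h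

private lemma aux_sSup_le {u : F → ℝ} {t : ℝ} (ht : 0 ≤ t)
    (h : ∀ i j, i ≠ j → |u i - u j| ≤ t) :
    sSup {d : ℝ | ∃ i j, i ≠ j ∧ d = |u i - u j|} ≤ t :=
  Real.sSup_le (by rintro d ⟨i, j, hij, rfl⟩; exact h i j hij) ht

private lemma aux_exists_max [Nonempty F] (x : F → ℝ) : ∃ i, x i = ⨆ j, x j := by
  obtain ⟨i, -, hi⟩ := Finset.exists_mem_eq_sup' Finset.univ_nonempty x
  exact ⟨i, by rw [← Finset.sup'_univ_eq_ciSup, hi]⟩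

private lemma aux_ciSup_add [Nonempty F] (x : F → ℝ) (c : ℝ) :
    (⨆ i, (x i + c)) = (⨆ i, x i) + c := by
  obtain ⟨i0, hi0⟩ := aux_exists_max x
  refine le_antisymm
    (ciSup_le fun i => add_le_add (le_ciSup (Set.finite_range x).bddAbove i) le_rfl) ?_
  rw [← hi0]
  exact le_ciSup (Set.finite_range fun i => x i + c).bddAbove i0

private lemma aux_cont_ciSup [Nonempty F] : Continuous fun x : F → ℝ => ⨆ i, x i := by
  have h : (fun x : F → ℝ => ⨆ i, x i)
      = fun x => Finset.univ.sup' Finset.univ_nonempty x := by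
    funext x; rw [Finset.sup'_univ_eq_ciSup]
  rw [h]
  exact Continuous.finset_sup'_apply Finset.univ_nonempty fun i _ => continuous_apply i

end Aux

/-- for a finite set `F` with at least two elements and `t ∈ (0,1]`, the
map `φ(x)_i = x_i - (1/|F|) ∑_j x_j` is a homeomorphism from
`C = {x ∈ [0,1]^F : max_i x_i = t}` onto the closed ball of radius `t` of the
hyperplane `{u ∈ ℝ^F : ∑_j u_j = 0}` with the norm `‖u‖' = max_{i ≠ j} |u_i - u_j|`;
in particular `C` is homeomorphic to the `(|F|-1)`-dimensional euclidean closed ball. -/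
theorem statement9 (F : Type*) [Fintype F] (hF : 2 ≤ Fintype.card F)
    (t : ℝ) (ht : t ∈ Set.Ioc (0:ℝ) 1) :
    (∃ h : ↥{x : F → ℝ | (∀ i, x i ∈ Set.Icc (0:ℝ) 1) ∧ (⨆ i, x i) = t} ≃ₜ
        ↥{u : F → ℝ | (∑ j, u j = 0) ∧
          sSup {d : ℝ | ∃ i j, i ≠ j ∧ d = |u i - u j|} ≤ t},
      ∀ x, ((h x : F → ℝ) = fun i => x.1 i - (∑ j, x.1 j) / (Fintype.card F))) ∧
    Nonempty (↥{x : F → ℝ | (∀ i, x i ∈ Set.Icc (0:ℝ) 1) ∧ (⨆ i, x i) = t} ≃ₜ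
      ↥(Metric.closedBall (0 : EuclideanSpace ℝ (Fin (Fintype.card F - 1))) 1)) := by
  obtain ⟨ht0, ht1⟩ := ht
  haveI : Nonempty F := Fintype.card_pos_iff.mp (by omega)
  set C : Set (F → ℝ) := {x : F → ℝ | (∀ i, x i ∈ Set.Icc (0:ℝ) 1) ∧ (⨆ i, x i) = t}
    with hCdef
  set B : Set (F → ℝ) := {u : F → ℝ | (∑ j, u j = 0) ∧
      sSup {d : ℝ | ∃ i j, i ≠ j ∧ d = |u i - u j|} ≤ t} with hBdef
  have hn : (0:ℝ) < Fintype.card F := by positivity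
  have hn' : (Fintype.card F : ℝ) ≠ 0 := hn.ne'
  -- forward membership
  have φmem : ∀ x ∈ C, (fun i => x i - (∑ j, x j) / (Fintype.card F)) ∈ B := by
    intro x hx
    have hxle : ∀ i, x i ≤ t := fun i => hx.2 ▸ le_ciSup (Set.finite_range x).bddAbove i
    have hx0 : ∀ i, 0 ≤ x i := fun i => (hx.1 i).1
    constructor
    · rw [Finset.sum_sub_distrib, Finset.sum_const, Finset.card_univ, nsmul_eq_mul]
      field_simp
      ring
    · refine aux_sSup_le ht0.le fun i j hij => ?_
      have h1 : x i - x j ≤ t := by linarith [hxle i, hx0 j]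
      have h2 : -t ≤ x i - x j := by linarith [hxle j, hx0 i]
      have : (x i - (∑ j, x j) / (Fintype.card F)) - (x j - (∑ j, x j) / (Fintype.card F))
          = x i - x j := by ring
      rw [this, abs_le]
      exact ⟨h2, h1⟩
  -- backward membership
  have ψmem : ∀ u ∈ B, (fun i => u i + (t - ⨆ j, u j)) ∈ C := by
    intro u hu
    obtain ⟨i0, hi0⟩ := aux_exists_max u
    have hle : ∀ i, u i ≤ u i0 := fun i => hi0 ▸ le_ciSup (Set.finite_range u).bddAbove i
    constructor
    · intro i
      constructor
      · show 0 ≤ u i + (t - ⨆ j, u j)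
        rw [← hi0]
        rcases eq_or_ne i i0 with rfl | h
        · linarith
        · have := aux_of_sSup_le hu.2 h.symm
          rw [abs_le] at this
          linarith [this.1]
      · show u i + (t - ⨆ j, u j) ≤ 1
        have := hle i
        rw [← hi0]
        linarith
    · have : (⨆ i, (u i + (t - ⨆ j, u j))) = (⨆ i, u i) + (t - ⨆ j, u j) :=
        aux_ciSup_add u _
      rw [this]; ring
  -- the homeomorphism C ≃ₜ B
  have leftinv : ∀ x : ↥C,
      (⟨fun i => (fun i => (x:F → ℝ) i - (∑ j, (x:F → ℝ) j) / (Fintype.card F)) i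
        + (t - ⨆ j, ((x:F → ℝ) j - (∑ j, (x:F → ℝ) j) / (Fintype.card F))), by
          exact ψmem _ (φmem _ x.2)⟩ : ↥C) = x := by
    intro x
    apply Subtype.ext
    funext i
    have hsup : (⨆ j, ((x:F → ℝ) j - (∑ j, (x:F → ℝ) j) / (Fintype.card F)))
        = t - (∑ j, (x:F → ℝ) j) / (Fintype.card F) := by
      have := aux_ciSup_add (x : F → ℝ) (-((∑ j, (x:F → ℝ) j) / (Fintype.card F)))
      simp only [← sub_eq_add_neg] at this
      rw [this, x.2.2]
    show ((x:F → ℝ) i - (∑ j, (x:F → ℝ) j) / (Fintype.card F))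
        + (t - ⨆ j, ((x:F → ℝ) j - (∑ j, (x:F → ℝ) j) / (Fintype.card F))) = (x:F → ℝ) i
    rw [hsup]; ring
  let e : ↥C ≃ₜ ↥B :=
    { toFun := fun x => ⟨fun i => (x:F → ℝ) i - (∑ j, (x:F → ℝ) j) / (Fintype.card F),
        φmem _ x.2⟩
      invFun := fun u => ⟨fun i => (u:F → ℝ) i + (t - ⨆ j, (u:F → ℝ) j), ψmem _ u.2⟩
      left_inv := leftinv
      right_inv := by
        intro u
        apply Subtype.ext
        funext i
        have hsum : (∑ j, ((u:F → ℝ) j + (t - ⨆ j, (u:F → ℝ) j)))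
            = (Fintype.card F) * (t - ⨆ j, (u:F → ℝ) j) := by
          rw [Finset.sum_add_distrib, u.2.1, Finset.sum_const, Finset.card_univ,
            nsmul_eq_mul, zero_add]
        show ((u:F → ℝ) i + (t - ⨆ j, (u:F → ℝ) j))
            - (∑ j, ((u:F → ℝ) j + (t - ⨆ j, (u:F → ℝ) j))) / (Fintype.card F) = (u:F → ℝ) i
        rw [hsum]
        field_simp
        ring
      continuous_toFun := by
        refine Continuous.subtype_mk ?_ _
        refine continuous_pi fun i => ?_
        exact ((continuous_apply i).comp continuous_subtype_val).sub
          (((continuous_finset_sum _ fun j _ => continuous_apply j).comp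
            continuous_subtype_val).div_const _)
      continuous_invFun := by
        refine Continuous.subtype_mk ?_ _
        refine continuous_pi fun i => ?_
        exact ((continuous_apply i).comp continuous_subtype_val).add
          (continuous_const.sub (aux_cont_ciSup.comp continuous_subtype_val)) }
  refine ⟨⟨e, fun x => rfl⟩, ?_⟩
  -- Part 2
  classical
  let l : (F → ℝ) →ₗ[ℝ] ℝ := ∑ j, LinearMap.proj j
  have hl : ∀ u : F → ℝ, l u = ∑ j, u j := by
    intro u; simp [l]
  have hBker : ∀ u ∈ B, u ∈ LinearMap.ker l := by
    intro u hu
    rw [LinearMap.mem_ker, hl]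
    exact hu.1
  set H := LinearMap.ker l with hHdef
  have hrank : Module.finrank ℝ H = Fintype.card F - 1 := by
    have hsurj : Function.Surjective l := by
      intro r
      exact ⟨fun _ => r / Fintype.card F, by rw [hl, Finset.sum_const, Finset.card_univ, nsmul_eq_mul]; field_simp⟩
    have hrk := l.finrank_range_add_finrank_ker
    rw [LinearMap.range_eq_top.mpr hsurj] at hrk
    rw [finrank_top, Module.finrank_self, Module.finrank_pi, ← hHdef] at hrk
    omega
  let L : H ≃L[ℝ] EuclideanSpace ℝ (Fin (Fintype.card F - 1)) :=
    ContinuousLinearEquiv.ofFinrankEq (by rw [hrank, finrank_euclideanSpace_fin])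
  set A : Set H := Subtype.val ⁻¹' B with hAdef
  -- B is closed
  have hBeq : B = {u : F → ℝ | ∑ j, u j = 0} ∩
      ⋂ (i) (j), {u : F → ℝ | i ≠ j → |u i - u j| ≤ t} := by
    ext u
    simp only [hBdef, Set.mem_setOf_eq, Set.mem_inter_iff, Set.mem_iInter]
    constructor
    · rintro ⟨h1, h2⟩
      exact ⟨h1, fun i j hij => aux_of_sSup_le h2 hij⟩
    · rintro ⟨h1, h2⟩
      exact ⟨h1, aux_sSup_le ht0.le fun i j hij => h2 i j hij⟩
  have hBclosed : IsClosed B := by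
    rw [hBeq]
    refine IsClosed.inter (isClosed_eq (continuous_finset_sum _ fun j _ => continuous_apply j)
      continuous_const) ?_
    refine isClosed_iInter fun i => isClosed_iInter fun j => ?_
    by_cases hij : i ≠ j
    · have : {u : F → ℝ | i ≠ j → |u i - u j| ≤ t} = {u : F → ℝ | |u i - u j| ≤ t} := by
        ext u; simp [hij]
      rw [this]
      exact isClosed_le (((continuous_apply i).sub (continuous_apply j)).abs) continuous_const
    · have : {u : F → ℝ | i ≠ j → |u i - u j| ≤ t} = Set.univ := by
        ext u; simp at hij ⊢; intro h; exact absurd hij h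
      rw [this]; exact isClosed_univ
  have hAclosed : IsClosed A := hBclosed.preimage continuous_subtype_val
  -- A is bounded
  have hAbd : Bornology.IsBounded A := by
    rw [isBounded_iff_forall_norm_le]
    refine ⟨t, fun u hu => ?_⟩
    have key : ∀ i, |(u : F → ℝ) i| ≤ t := by
      intro i
      have hs : (Fintype.card F : ℝ) * (u : F → ℝ) i = ∑ j, ((u : F → ℝ) i - (u : F → ℝ) j) := by
        rw [Finset.sum_sub_distrib, hu.1, sub_zero, Finset.sum_const, Finset.card_univ,
          nsmul_eq_mul]
      have habs : (Fintype.card F : ℝ) * |(u : F → ℝ) i| ≤ (Fintype.card F : ℝ) * t := by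
        calc (Fintype.card F : ℝ) * |(u : F → ℝ) i| = |(Fintype.card F : ℝ) * (u : F → ℝ) i| := by
              rw [abs_mul, abs_of_nonneg hn.le]
          _ = |∑ j, ((u : F → ℝ) i - (u : F → ℝ) j)| := by rw [hs]
          _ ≤ ∑ j, |(u : F → ℝ) i - (u : F → ℝ) j| := Finset.abs_sum_le_sum_abs _ _
          _ ≤ ∑ _j : F, t := by
              refine Finset.sum_le_sum fun j _ => ?_
              rcases eq_or_ne i j with rfl | h
              · simpa using ht0.le
              · exact aux_of_sSup_le hu.2 h
          _ = (Fintype.card F : ℝ) * t := by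
              rw [Finset.sum_const, Finset.card_univ, nsmul_eq_mul]
      exact le_of_mul_le_mul_left habs hn
    calc ‖u‖ = ‖(u : F → ℝ)‖ := rfl
      _ ≤ t := (pi_norm_le_iff_of_nonneg ht0.le).mpr fun i => by
          simpa [Real.norm_eq_abs] using key i
  have hAcompact : IsCompact A := Metric.isCompact_of_isClosed_isBounded hAclosed hAbd
  -- A is convex
  have hAconv : Convex ℝ A := by
    intro u hu v hv a b ha hb hab
    have hcoe : ((a • u + b • v : H) : F → ℝ) = a • (u : F → ℝ) + b • (v : F → ℝ) := by
      push_cast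
      rfl
    show ((a • u + b • v : H) : F → ℝ) ∈ B
    rw [hcoe]
    constructor
    · have : ∑ j, (a • (u : F → ℝ) + b • (v : F → ℝ)) j
          = a * ∑ j, (u : F → ℝ) j + b * ∑ j, (v : F → ℝ) j := by
        simp [Finset.sum_add_distrib, Finset.mul_sum]
      rw [this, hu.1, hv.1]; ring
    · refine aux_sSup_le ht0.le fun i j hij => ?_
      have h1 := aux_of_sSup_le hu.2 hij
      have h2 := aux_of_sSup_le hv.2 hij
      have : (a • (u : F → ℝ) + b • (v : F → ℝ)) i - (a • (u : F → ℝ) + b • (v : F → ℝ)) j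
          = a * ((u : F → ℝ) i - (u : F → ℝ) j) + b * ((v : F → ℝ) i - (v : F → ℝ) j) := by
        simp [Pi.add_apply, Pi.smul_apply, smul_eq_mul]; ring
      rw [this]
      calc |a * ((u : F → ℝ) i - (u : F → ℝ) j) + b * ((v : F → ℝ) i - (v : F → ℝ) j)|
          ≤ |a * ((u : F → ℝ) i - (u : F → ℝ) j)| + |b * ((v : F → ℝ) i - (v : F → ℝ) j)| :=
            abs_add_le _ _
        _ ≤ a * t + b * t := by
            rw [abs_mul, abs_mul, abs_of_nonneg ha, abs_of_nonneg hb]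
            exact add_le_add (mul_le_mul_of_nonneg_left h1 ha)
              (mul_le_mul_of_nonneg_left h2 hb)
        _ = t := by rw [← add_mul, hab, one_mul]
  -- interior of A is nonempty
  have hAint : (interior A).Nonempty := by
    refine ⟨0, mem_interior.mpr ⟨Subtype.val ⁻¹' {x : F → ℝ | ∀ i, |x i| < t/2}, ?_, ?_, ?_⟩⟩
    · intro u hu
      have hsum : ∑ j, (u : F → ℝ) j = 0 := by
        have := u.2
        rwa [LinearMap.mem_ker, hl] at this
      refine ⟨hsum, aux_sSup_le ht0.le fun i j hij => ?_⟩
      have h1 := hu i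
      have h2 := hu j
      calc |(u : F → ℝ) i - (u : F → ℝ) j| ≤ |(u : F → ℝ) i| + |(u : F → ℝ) j| :=
            abs_sub _ _
        _ ≤ t := by linarith
    · refine IsOpen.preimage continuous_subtype_val ?_
      have : {x : F → ℝ | ∀ i, |x i| < t/2} = ⋂ i, (fun x : F → ℝ => |x i|) ⁻¹' Set.Iio (t/2) := by
        ext x; simp
      rw [this]
      exact isOpen_iInter_of_finite fun i =>
        ((continuous_apply i).abs).isOpen_preimage _ isOpen_Iio
    · simp only [Set.mem_preimage, Set.mem_setOf_eq]
      intro i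
      show |((0 : H) : F → ℝ) i| < t/2
      simp; positivity
  -- the image S
  set S : Set (EuclideanSpace ℝ (Fin (Fintype.card F - 1))) := L '' A with hSdef
  have hSconv : Convex ℝ S := hAconv.is_linear_image ⟨L.map_add, L.map_smul⟩
  have hScompact : IsCompact S := hAcompact.image L.continuous
  have hSclosed : IsClosed S := hScompact.isClosed
  have hSbounded : Bornology.IsBounded S := hScompact.isBounded
  have hSint : (interior S).Nonempty := by
    have him := L.toHomeomorph.image_interior A
    simp only [ContinuousLinearEquiv.coe_toHomeomorph] at him
    rw [hSdef, ← him]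
    exact hAint.image _
  obtain ⟨g, -, hg, -⟩ :=
    exists_homeomorph_image_interior_closure_frontier_eq_unitBall hSconv hSint hSbounded
  rw [hSclosed.closure_eq] at hg
  -- homeomorphism B ≃ₜ S
  let e1 : ↥B ≃ₜ ↥S :=
    { toFun := fun u => ⟨L ⟨(u : F → ℝ), hBker _ u.2⟩,
        ⟨⟨(u : F → ℝ), hBker _ u.2⟩, u.2, rfl⟩⟩
      invFun := fun v => ⟨((L.symm (v : EuclideanSpace ℝ (Fin (Fintype.card F - 1)))) : F → ℝ), by
        obtain ⟨a, ha, hav⟩ := v.2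
        rw [← hav, L.symm_apply_apply]
        exact ha⟩
      left_inv := by
        intro u
        apply Subtype.ext
        simp
      right_inv := by
        intro v
        apply Subtype.ext
        show L ⟨((L.symm (v : EuclideanSpace ℝ (Fin (Fintype.card F - 1)))) : F → ℝ), _⟩
            = (v : EuclideanSpace ℝ (Fin (Fintype.card F - 1)))
        rw [show (⟨((L.symm (v : EuclideanSpace ℝ (Fin (Fintype.card F - 1)))) : F → ℝ), by
            exact (L.symm _).2⟩ : H)
            = L.symm (v : EuclideanSpace ℝ (Fin (Fintype.card F - 1))) from rfl]
        exact L.apply_symm_apply _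
      continuous_toFun := by
        refine Continuous.subtype_mk ?_ _
        exact L.continuous.comp (Continuous.subtype_mk continuous_subtype_val _)
      continuous_invFun := by
        refine Continuous.subtype_mk ?_ _
        exact continuous_subtype_val.comp (L.symm.continuous.comp continuous_subtype_val) }
  exact ⟨e.trans (e1.trans ((g.image S).trans (Homeomorph.setCongr hg)))⟩

end
end

section
/- Let Γ be a set and let u : A(Γ) → B(Γ) be the canonical embedding sending each i ∈ Γ to the characteristic vector e_i (the element of B(Γ) which is zero in every coordinate except for value 1 in coordinate i) and the point at infinity to the zero vector. Then the operator T : C(A(Γ)) → C(B(Γ)) defined by T(f)(x) = f(∞)·(1 - ∑_{i∈Γ}|x_i|) + ∑_{i∈Γ} |x_i| f(i) is a well-defined regular extension operator for u: T is linear, positive, of norm one, sends constant functions to constant functions of the same value, and satisfies T(f)(u(p)) = f(p) for all p ∈ A(Γ) and f ∈ C(A(Γ)). -/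
open Set Filter Topology

noncomputable section

theorem isCompact_ball (ι : Type*) : IsCompact (Ball ι) := by
  have hsub : Ball ι ⊆ Set.pi Set.univ (fun _ : ι => Set.Icc (-1:ℝ) 1) := by
    intro x hx i _
    have h := hx {i}
    simp only [Finset.sum_singleton] at h
    simpa [Set.mem_Icc] using abs_le.mp h
  have hclosed : IsClosed (Ball ι) := by
    have : Ball ι = ⋂ s : Finset ι, {x : ι → ℝ | ∑ i ∈ s, |x i| ≤ 1} := by
      ext x; simp [Ball, Set.mem_iInter]
    rw [this]
    refine isClosed_iInter fun s => isClosed_le ?_ continuous_const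
    exact continuous_finset_sum s fun i _ => (continuous_apply i).abs
  exact ((isCompact_univ_pi fun _ : ι => isCompact_Icc)).of_isClosed_subset hclosed hsub

instance Ball.compactSpace (ι : Type*) : CompactSpace (Ball ι) :=
  isCompact_iff_compactSpace.mp (isCompact_ball ι)

namespace Stmt13Aux

variable {Γ : Type*}

lemma ball_summable (x : ↥(Ball Γ)) : Summable fun i => |x.1 i| :=
  summable_of_sum_le (fun _ => abs_nonneg _) x.2

lemma ball_tsum_le (x : ↥(Ball Γ)) : ∑' i, |x.1 i| ≤ 1 :=
  Summable.tsum_le_of_sum_le (ball_summable x) x.2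

lemma ball_tsum_nonneg (x : ↥(Ball Γ)) : 0 ≤ ∑' i, |x.1 i| :=
  tsum_nonneg fun _ => abs_nonneg _

lemma summable_mul (x : ↥(Ball Γ)) {g : Γ → ℝ} {C : ℝ} (hg : ∀ i, |g i| ≤ C) :
    Summable fun i => |x.1 i| * g i := by
  refine Summable.of_norm_bounded ((ball_summable x).mul_right C) fun i => ?_
  rw [Real.norm_eq_abs, abs_mul, abs_abs]
  exact mul_le_mul_of_nonneg_left (hg i) (abs_nonneg _)

lemma cont_aux {g : Γ → ℝ} (hg : Tendsto g cofinite (𝓝 0)) {C : ℝ} (hC : ∀ i, |g i| ≤ C) :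
    Continuous fun x : ↥(Ball Γ) => ∑' i, |x.1 i| * g i := by
  have hF : ∀ s : Finset Γ, Continuous fun x : ↥(Ball Γ) => ∑ i ∈ s, |x.1 i| * g i :=
    fun s => continuous_finset_sum s fun i _ =>
      ((continuous_apply i).comp continuous_subtype_val).abs.mul continuous_const
  refine TendstoUniformly.continuous
    (F := fun s : Finset Γ => fun x : ↥(Ball Γ) => ∑ i ∈ s, |x.1 i| * g i) (p := atTop)
    ?_ (Eventually.of_forall hF).frequently
  rw [Metric.tendstoUniformly_iff]
  intro ε hε
  have hco : ∀ᶠ i in cofinite, |g i| < ε / 2 := by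
    have := Metric.tendsto_nhds.mp hg (ε / 2) (by positivity)
    simpa [Real.dist_eq] using this
  have hfin : {i | ¬ |g i| < ε / 2}.Finite := Filter.eventually_cofinite.mp hco
  refine Filter.eventually_atTop.2 ⟨hfin.toFinset, fun s hs x => ?_⟩
  set h : Γ → ℝ := fun i => |x.1 i| * g i with hh
  have hsum : Summable h := summable_mul x hC
  have key := Summable.sum_add_tsum_subtype_compl hsum s
  have hdiff : (∑' i, h i) - ∑ i ∈ s, h i = ∑' i : {i // i ∉ s}, h i := by
    rw [← key]; ring
  rw [Real.dist_eq, hdiff]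
  have hsub1 : Summable fun i : {i // i ∉ s} => |h i| :=
    (hsum.abs.subtype _)
  have hsub2 : Summable fun i : {i // i ∉ s} => ε / 2 * |x.1 i| :=
    (((ball_summable x).mul_left (ε / 2)).subtype _)
  have hle : ∀ i : {i // i ∉ s}, |h i| ≤ ε / 2 * |x.1 i| := by
    rintro ⟨i, hi⟩
    have hgi : |g i| < ε / 2 := by
      by_contra hcon
      exact hi (hs (hfin.mem_toFinset.mpr hcon))
    have : |h i| = |x.1 i| * |g i| := by rw [hh]; simp [abs_mul, abs_abs]
    rw [this, mul_comm]
    exact mul_le_mul_of_nonneg_right hgi.le (abs_nonneg _)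
  calc |∑' i : {i // i ∉ s}, h i| ≤ ∑' i : {i // i ∉ s}, |h i| := by
        simpa [Real.norm_eq_abs] using norm_tsum_le_tsum_norm (f := fun i : {i // i ∉ s} => h i)
          (by simpa [Real.norm_eq_abs] using hsub1)
    _ ≤ ∑' i : {i // i ∉ s}, ε / 2 * |x.1 i| := Summable.tsum_le_tsum hle hsub1 hsub2
    _ = ε / 2 * ∑' i : {i // i ∉ s}, |x.1 i| := tsum_mul_left
    _ ≤ ε / 2 * 1 := by
        refine mul_le_mul_of_nonneg_left ?_ (by positivity)
        refine le_trans ?_ (ball_tsum_le x)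
        exact Summable.tsum_subtype_le (fun i => |x.1 i|) _ (fun _ => abs_nonneg _) (ball_summable x)
    _ < ε := by linarith

variable [TopologicalSpace Γ] [DiscreteTopology Γ]

lemma f_abs_le (f : C(OnePoint Γ, ℝ)) (p : OnePoint Γ) : |f p| ≤ ‖f‖ := by
  simpa [Real.norm_eq_abs] using f.norm_coe_le_norm p

lemma summable_mul_f (x : ↥(Ball Γ)) (f : C(OnePoint Γ, ℝ)) :
    Summable fun i => |x.1 i| * f (OnePoint.some i) :=
  summable_mul x (C := ‖f‖) fun i => f_abs_le f _

/-- The extension operator as a continuous map, in the "centered" form. -/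
def Tcm (f : C(OnePoint Γ, ℝ)) : C(↥(Ball Γ), ℝ) where
  toFun x := f OnePoint.infty + ∑' i, |x.1 i| * (f (OnePoint.some i) - f OnePoint.infty)
  continuous_toFun := by
    have hg : Tendsto (fun i : Γ => f (OnePoint.some i) - f OnePoint.infty) cofinite (𝓝 0) := by
      have := (OnePoint.continuous_iff_from_discrete (f : OnePoint Γ → ℝ)).mp f.continuous
      simpa using this.sub_const (f OnePoint.infty)
    have hC : ∀ i : Γ, |f (OnePoint.some i) - f OnePoint.infty| ≤ ‖f‖ + ‖f‖ := fun i =>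
      (abs_sub _ _).trans (add_le_add (f_abs_le f _) (f_abs_le f _))
    exact continuous_const.add (cont_aux hg hC)

lemma Tcm_apply (f : C(OnePoint Γ, ℝ)) (x : ↥(Ball Γ)) :
    Tcm f x = f OnePoint.infty * (1 - ∑' i, |x.1 i|) +
      ∑' i, |x.1 i| * f (OnePoint.some i) := by
  have h1 : Summable fun i => |x.1 i| * f (OnePoint.some i) := summable_mul_f x f
  have h2 : Summable fun i => |x.1 i| * f OnePoint.infty :=
    (ball_summable x).mul_right _
  have : (∑' i, |x.1 i| * (f (OnePoint.some i) - f OnePoint.infty)) =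
      (∑' i, |x.1 i| * f (OnePoint.some i)) - (∑' i, |x.1 i|) * f OnePoint.infty := by
    rw [← tsum_mul_right]
    rw [← Summable.tsum_sub h1 h2]
    congr 1; ext i; ring
  show f OnePoint.infty + _ = _
  rw [this]; ring

lemma Tcm_norm_le (f : C(OnePoint Γ, ℝ)) : ‖Tcm f‖ ≤ ‖f‖ := by
  refine ContinuousMap.norm_le _ (norm_nonneg f) |>.mpr fun x => ?_
  rw [Real.norm_eq_abs, Tcm_apply]
  set S := ∑' i, |x.1 i| with hSdef
  have hS1 : S ≤ 1 := ball_tsum_le x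
  have hS0 : 0 ≤ S := ball_tsum_nonneg x
  have hsum2 : Summable fun i => |x.1 i| * |f (OnePoint.some i)| :=
    summable_mul x (g := fun i => |f (OnePoint.some i)|) (C := ‖f‖)
      (fun i => by rw [abs_abs]; exact f_abs_le f _)
  have habs : |∑' i, |x.1 i| * f (OnePoint.some i)| ≤ S * ‖f‖ := by
    have h1 : |∑' i, |x.1 i| * f (OnePoint.some i)| ≤
        ∑' i, |x.1 i| * |f (OnePoint.some i)| := by
      have := norm_tsum_le_tsum_norm (f := fun i => |x.1 i| * f (OnePoint.some i))
        (by simpa [Real.norm_eq_abs, abs_mul, abs_abs] using hsum2)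
      simpa [Real.norm_eq_abs, abs_mul, abs_abs] using this
    have h2 : (∑' i, |x.1 i| * |f (OnePoint.some i)|) ≤ ∑' i, |x.1 i| * ‖f‖ :=
      Summable.tsum_le_tsum (fun i => mul_le_mul_of_nonneg_left (f_abs_le f _) (abs_nonneg _))
        hsum2 ((ball_summable x).mul_right _)
    calc |∑' i, |x.1 i| * f (OnePoint.some i)|
        ≤ ∑' i, |x.1 i| * |f (OnePoint.some i)| := h1
      _ ≤ ∑' i, |x.1 i| * ‖f‖ := h2
      _ = S * ‖f‖ := tsum_mul_right
  calc |f OnePoint.infty * (1 - S) + ∑' i, |x.1 i| * f (OnePoint.some i)|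
      ≤ |f OnePoint.infty * (1 - S)| + |∑' i, |x.1 i| * f (OnePoint.some i)| := abs_add_le _ _
    _ ≤ ‖f‖ * (1 - S) + S * ‖f‖ := by
        have hinf := f_abs_le f OnePoint.infty
        have heq : |f OnePoint.infty * (1 - S)| = |f OnePoint.infty| * (1 - S) := by
          rw [abs_mul, abs_of_nonneg (show (0:ℝ) ≤ 1 - S by linarith)]
        rw [heq]
        exact add_le_add (mul_le_mul_of_nonneg_right hinf (by linarith)) habs
    _ = ‖f‖ := by ring

/-- The extension operator. -/
def T : C(OnePoint Γ, ℝ) →L[ℝ] C(↥(Ball Γ), ℝ) :=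
  LinearMap.mkContinuous
    { toFun := Tcm
      map_add' := fun f g => by
        ext x
        simp only [ContinuousMap.add_apply, Tcm_apply]
        have h1 := summable_mul_f x f
        have h2 := summable_mul_f x g
        have : (∑' i, |x.1 i| * (f (OnePoint.some i) + g (OnePoint.some i))) =
            (∑' i, |x.1 i| * f (OnePoint.some i)) + ∑' i, |x.1 i| * g (OnePoint.some i) := by
          rw [← Summable.tsum_add h1 h2]
          congr 1; ext i; ring
        rw [this]; ring
      map_smul' := fun c f => by
        ext x
        simp only [ContinuousMap.smul_apply, Tcm_apply, RingHom.id_apply, smul_eq_mul]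
        have : (∑' i, |x.1 i| * (c * f (OnePoint.some i))) =
            c * ∑' i, |x.1 i| * f (OnePoint.some i) := by
          rw [← tsum_mul_left]
          congr 1; ext i; ring
        rw [this]; ring }
    1 (fun f => by simpa using Tcm_norm_le f)

lemma T_apply (f : C(OnePoint Γ, ℝ)) (x : ↥(Ball Γ)) :
    T f x = f OnePoint.infty * (1 - ∑' i, |x.1 i|) +
      ∑' i, |x.1 i| * f (OnePoint.some i) := by
  have : T f = Tcm f := rfl
  rw [this, Tcm_apply]


lemma T_const (c : ℝ) : T (ContinuousMap.const (OnePoint Γ) c) =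
    ContinuousMap.const (↥(Ball Γ)) c := by
  ext x
  rw [T_apply]
  have h : (∑' i, |x.1 i| * (ContinuousMap.const (OnePoint Γ) c) (OnePoint.some i)) =
      (∑' i, |x.1 i|) * c := by
    simp only [ContinuousMap.const_apply]
    exact tsum_mul_right
  simp only [ContinuousMap.const_apply] at h ⊢
  rw [h]; ring

end Stmt13Aux

/-- the canonical embedding `u : A(Γ) → B(Γ)` (sending `i` to the
characteristic vector `e_i` and `∞` to `0`) admits the regular extension operator
`T(f)(x) = f(∞)(1 - ∑_i |x_i|) + ∑_i |x_i| f(i)`. -/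
theorem statement13 {Γ : Type*} [TopologicalSpace Γ] [DiscreteTopology Γ] [DecidableEq Γ] :
    ∃ u : OnePoint Γ → ↥(Ball Γ),
      (∀ i : Γ, (u (OnePoint.some i) : Γ → ℝ) = Pi.single i 1) ∧
      ((u OnePoint.infty : Γ → ℝ) = 0) ∧
      ∃ T : C(OnePoint Γ, ℝ) →L[ℝ] C(↥(Ball Γ), ℝ),
        (∀ (f : C(OnePoint Γ, ℝ)) (x : ↥(Ball Γ)),
          T f x = f OnePoint.infty * (1 - ∑' i, |x.1 i|) +
            ∑' i, |x.1 i| * f (OnePoint.some i)) ∧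
        (∀ f : C(OnePoint Γ, ℝ), (∀ p, 0 ≤ f p) → ∀ x, 0 ≤ T f x) ∧
        ‖T‖ = 1 ∧
        (∀ c : ℝ, T (ContinuousMap.const (OnePoint Γ) c) =
          ContinuousMap.const ↥(Ball Γ) c) ∧
        (∀ (f : C(OnePoint Γ, ℝ)) (p : OnePoint Γ), T f (u p) = f p) := by
  classical
  have hz : (0 : Γ → ℝ) ∈ Ball Γ := fun s => by simp
  have hsingle : ∀ i : Γ, (Pi.single i 1 : Γ → ℝ) ∈ Ball Γ := by
    intro i s
    have hcong : ∀ j ∈ s, |(Pi.single i 1 : Γ → ℝ) j| = if j = i then 1 else 0 := by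
      intro j _
      rw [Pi.single_apply]
      split_ifs <;> simp
    rw [Finset.sum_congr rfl hcong, Finset.sum_ite_eq' s i fun _ => (1:ℝ)]
    split <;> norm_num
  haveI : Nonempty ↥(Ball Γ) := ⟨⟨0, hz⟩⟩
  refine ⟨fun p => Option.elim p ⟨0, hz⟩ (fun i => ⟨Pi.single i 1, hsingle i⟩),
    fun i => rfl, rfl, Stmt13Aux.T, fun f x => Stmt13Aux.T_apply f x, ?_, ?_, Stmt13Aux.T_const, ?_⟩
  · -- positivity
    intro f hf x
    rw [Stmt13Aux.T_apply]
    have hS1 := Stmt13Aux.ball_tsum_le x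
    exact add_nonneg (mul_nonneg (hf _) (by linarith))
      (tsum_nonneg fun i => mul_nonneg (abs_nonneg _) (hf _))
  · -- norm
    refine le_antisymm (LinearMap.mkContinuous_norm_le _ zero_le_one _) ?_
    obtain ⟨x₀⟩ := (inferInstance : Nonempty ↥(Ball Γ))
    have h0 : ‖ContinuousMap.const (OnePoint Γ) (1:ℝ)‖ ≤ 1 :=
      (ContinuousMap.norm_le _ zero_le_one).mpr fun p => by simp
    calc (1:ℝ) = ‖(Stmt13Aux.T (ContinuousMap.const (OnePoint Γ) 1)) x₀‖ := by
          rw [Stmt13Aux.T_const]; simp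
      _ ≤ ‖Stmt13Aux.T (ContinuousMap.const (OnePoint Γ) (1:ℝ))‖ :=
          ContinuousMap.norm_coe_le_norm _ _
      _ ≤ ‖(Stmt13Aux.T : C(OnePoint Γ, ℝ) →L[ℝ] C(↥(Ball Γ), ℝ))‖ *
            ‖ContinuousMap.const (OnePoint Γ) (1:ℝ)‖ := ContinuousLinearMap.le_opNorm _ _
      _ ≤ ‖(Stmt13Aux.T : C(OnePoint Γ, ℝ) →L[ℝ] C(↥(Ball Γ), ℝ))‖ * 1 :=
          mul_le_mul_of_nonneg_left h0 (norm_nonneg (Stmt13Aux.T : C(OnePoint Γ, ℝ) →L[ℝ] C(↥(Ball Γ), ℝ)))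
      _ = _ := mul_one _
  · -- extension
    intro f p
    cases p with
    | infty =>
        show Stmt13Aux.T f ⟨0, hz⟩ = f OnePoint.infty
        rw [Stmt13Aux.T_apply]
        have h1 : (∑' i : Γ, |((⟨0, hz⟩ : ↥(Ball Γ)).1) i|) = 0 := by simp
        have h2 : (∑' i : Γ, |((⟨0, hz⟩ : ↥(Ball Γ)).1) i| * f (OnePoint.some i)) = 0 := by simp
        rw [h1, h2]; ring
    | coe i =>
        show Stmt13Aux.T f ⟨Pi.single i 1, hsingle i⟩ = f (OnePoint.some i)
        rw [Stmt13Aux.T_apply]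
        set x : ↥(Ball Γ) := ⟨Pi.single i 1, hsingle i⟩ with hx
        have h1 : (∑' j : Γ, |x.1 j|) = 1 := by
          rw [tsum_eq_single i fun j hj => by simp [hx, Pi.single_apply, hj]]
          simp [hx]
        have h2 : (∑' j : Γ, |x.1 j| * f (OnePoint.some j)) = f (OnePoint.some i) := by
          rw [tsum_eq_single i fun j hj => by simp [hx, Pi.single_apply, hj]]
          simp [hx]
        rw [h1, h2]; ring


end
end

section
/- Let Γ be an uncountable set. Then the Banach space C(A(Γ)^ℕ) is isomorphic to a complemented subspace of C(B(Γ)^ℕ). -/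
open Set Filter Topology

noncomputable section

open OnePoint
open scoped Classical
universe u v

set_option linter.unusedSectionVars false

namespace St14
variable {Γ : Type u}
def hw (t : ℝ) : ℝ := max 0 (2*t - 1)
lemma hw_cont : Continuous (hw) := by unfold hw; fun_prop
lemma hw_zero {t : ℝ} (ht : t ≤ 1/2) : hw t = 0 := max_eq_left (by linarith)
lemma hw_one : hw 1 = 1 := by norm_num [hw]
lemma ball_subsing (x : ↥(Ball Γ)) {γ β : Γ} (hγ : 1/2 < x.1 γ) (hβ : 1/2 < x.1 β) :
    γ = β := by
  by_contra hne
  have h2 := x.2 {γ, β}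
  rw [Finset.sum_insert (by simp [hne]), Finset.sum_singleton] at h2
  have h3 : x.1 γ ≤ |x.1 γ| := le_abs_self _
  have h4 : x.1 β ≤ |x.1 β| := le_abs_self _
  linarith
lemma ball_tsum_eq {x : ↥(Ball Γ)} {F : Γ → ℝ} (hF : ∀ γ, x.1 γ ≤ 1/2 → F γ = 0)
    {γ0 : Γ} (h0 : 1/2 < x.1 γ0) : ∑' γ, F γ = F γ0 :=
  tsum_eq_single γ0 fun b hb => hF b (by
    by_contra hc; push_neg at hc; exact hb (ball_subsing x hc h0))
lemma ball_tsum_zero {x : ↥(Ball Γ)} {F : Γ → ℝ} (hF : ∀ γ, x.1 γ ≤ 1/2 → F γ = 0)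
    (h0 : ∀ γ, x.1 γ ≤ 1/2) : ∑' γ, F γ = 0 := by
  rw [show F = fun _ => 0 from funext fun γ => hF γ (h0 γ)]; exact tsum_zero

def eball (γ : Γ) : Γ → ℝ := fun i => if i = γ then 1 else 0

lemma zero_mem_ball : (0 : Γ → ℝ) ∈ Ball Γ := by intro s; simp

lemma eball_mem_ball (γ : Γ) : eball γ ∈ Ball Γ := by
  intro s
  have h : ∀ i ∈ s, |eball γ i| = if i = γ then 1 else 0 := by
    intro i _
    unfold eball; split_ifs <;> simp
  rw [Finset.sum_congr rfl h, Finset.sum_ite_eq' s γ (fun _ => (1:ℝ))]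
  split_ifs <;> norm_num

def jball (a : OnePoint Γ) : ↥(Ball Γ) :=
  Option.elim a ⟨0, zero_mem_ball⟩ (fun γ => ⟨eball γ, eball_mem_ball γ⟩)

lemma jball_infty : (jball (∞ : OnePoint Γ)).1 = 0 := rfl
lemma jball_coe (γ : Γ) : (jball (γ : OnePoint Γ)).1 = eball γ := rfl

def Mker (φ : OnePoint Γ → ℝ) (x : ↥(Ball Γ)) : ℝ :=
  φ ∞ + ∑' γ : Γ, hw (x.1 γ) * (φ ↑γ - φ ∞)

lemma term_zero (φ : OnePoint Γ → ℝ) (x : ↥(Ball Γ)) :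
    ∀ γ, x.1 γ ≤ 1/2 → hw (x.1 γ) * (φ ↑γ - φ ∞) = 0 := fun γ hγ => by
  rw [hw_zero hγ, zero_mul]

lemma Mker_j (φ : OnePoint Γ → ℝ) (a : OnePoint Γ) : Mker φ (jball a) = φ a := by
  cases a with
  | infty =>
    unfold Mker
    rw [ball_tsum_zero (term_zero φ _) (fun γ => by rw [jball_infty]; norm_num)]
    simp [OnePoint.infty]
  | coe γ0 =>
    unfold Mker
    have h1 : (jball (γ0 : OnePoint Γ)).1 γ0 = 1 := by rw [jball_coe]; simp [eball]
    rw [ball_tsum_eq (term_zero φ _) (γ0 := γ0) (by rw [h1]; norm_num)]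
    rw [h1, hw_one]
    ring

lemma ball_le_one (x : ↥(Ball Γ)) (γ : Γ) : x.1 γ ≤ 1 := by
  have := x.2 {γ}
  simp only [Finset.sum_singleton] at this
  exact le_trans (le_abs_self _) this

lemma hw_nonneg (t : ℝ) : 0 ≤ hw t := le_max_left _ _
lemma hw_le_one {t : ℝ} (ht : t ≤ 1) : hw t ≤ 1 := max_le (by norm_num) (by linarith)

lemma Mker_add (φ ψ : OnePoint Γ → ℝ) (x : ↥(Ball Γ)) :
    Mker (fun a => φ a + ψ a) x = Mker φ x + Mker ψ x := by
  unfold Mker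
  by_cases hbig : ∃ γ0, 1/2 < x.1 γ0
  · obtain ⟨γ0, h0⟩ := hbig
    rw [ball_tsum_eq (term_zero φ x) h0, ball_tsum_eq (term_zero ψ x) h0,
      ball_tsum_eq (term_zero (fun a => φ a + ψ a) x) h0]
    ring
  · push_neg at hbig
    rw [ball_tsum_zero (term_zero φ x) hbig, ball_tsum_zero (term_zero ψ x) hbig,
      ball_tsum_zero (term_zero (fun a => φ a + ψ a) x) hbig]
    ring

lemma Mker_sub (φ ψ : OnePoint Γ → ℝ) (x : ↥(Ball Γ)) :
    Mker (fun a => φ a - ψ a) x = Mker φ x - Mker ψ x := by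
  unfold Mker
  by_cases hbig : ∃ γ0, 1/2 < x.1 γ0
  · obtain ⟨γ0, h0⟩ := hbig
    rw [ball_tsum_eq (term_zero φ x) h0, ball_tsum_eq (term_zero ψ x) h0,
      ball_tsum_eq (term_zero (fun a => φ a - ψ a) x) h0]
    ring
  · push_neg at hbig
    rw [ball_tsum_zero (term_zero φ x) hbig, ball_tsum_zero (term_zero ψ x) hbig,
      ball_tsum_zero (term_zero (fun a => φ a - ψ a) x) hbig]
    ring

lemma Mker_smul (c : ℝ) (φ : OnePoint Γ → ℝ) (x : ↥(Ball Γ)) :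
    Mker (fun a => c * φ a) x = c * Mker φ x := by
  unfold Mker
  by_cases hbig : ∃ γ0, 1/2 < x.1 γ0
  · obtain ⟨γ0, h0⟩ := hbig
    rw [ball_tsum_eq (term_zero φ x) h0, ball_tsum_eq (term_zero (fun a => c * φ a) x) h0]
    ring
  · push_neg at hbig
    rw [ball_tsum_zero (term_zero φ x) hbig,
      ball_tsum_zero (term_zero (fun a => c * φ a) x) hbig]
    ring

lemma Mker_const (c : ℝ) (x : ↥(Ball Γ)) : Mker (fun _ => c) x = c := by
  unfold Mker
  simp

lemma Mker_bound (φ : OnePoint Γ → ℝ) (x : ↥(Ball Γ)) (c : ℝ)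
    (hφ : ∀ a, |φ a| ≤ c) : |Mker φ x| ≤ c := by
  unfold Mker
  by_cases hbig : ∃ γ0, 1/2 < x.1 γ0
  · obtain ⟨γ0, h0⟩ := hbig
    rw [ball_tsum_eq (term_zero φ x) h0]
    set t := hw (x.1 γ0) with ht
    have htn : 0 ≤ t := hw_nonneg _
    have ht1 : t ≤ 1 := hw_le_one (ball_le_one x γ0)
    have e1 : φ ∞ + t * (φ γ0 - φ ∞) = (1 - t) * φ ∞ + t * φ γ0 := by ring
    rw [e1]
    calc |(1 - t) * φ ∞ + t * φ γ0| ≤ |(1 - t) * φ ∞| + |t * φ γ0| := abs_add_le _ _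
      _ = (1 - t) * |φ ∞| + t * |φ γ0| := by
          rw [abs_mul, abs_mul, abs_of_nonneg (by linarith), abs_of_nonneg htn]
      _ ≤ (1 - t) * c + t * c := by
          have := hφ ∞; have := hφ γ0
          have hc : 0 ≤ c := le_trans (abs_nonneg _) (hφ ∞)
          nlinarith
      _ = c := by ring
  · push_neg at hbig
    rw [ball_tsum_zero (term_zero φ x) hbig]
    simpa using hφ ∞


section Topology
variable [TopologicalSpace Γ] [DiscreteTopology Γ]

lemma continuous_jball : Continuous (jball (Γ := Γ)) := by
  rw [OnePoint.continuous_iff_from_discrete]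
  rw [show jball (∞ : OnePoint Γ) = ⟨0, zero_mem_ball⟩ from rfl]
  rw [tendsto_subtype_rng]
  rw [tendsto_pi_nhds]
  intro β
  have hev : ∀ᶠ γ : Γ in cofinite, (jball (γ : OnePoint Γ)).1 β = 0 := by
    have : {γ : Γ | ¬ (jball (γ : OnePoint Γ)).1 β = 0} ⊆ {β} := by
      intro γ hγ
      simp only [mem_setOf_eq, jball_coe, eball] at hγ
      by_contra hne
      apply hγ
      rw [if_neg (fun h => hne (by simp [h]))]
    exact (Set.finite_singleton β).subset this
  exact Tendsto.congr' (by filter_upwards [hev] with γ h using h.symm) tendsto_const_nhds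

lemma Mker_continuous {Y : Type v} [TopologicalSpace Y] [CompactSpace Y]
    (Ψ : C(OnePoint Γ × Y, ℝ)) :
    Continuous fun q : ↥(Ball Γ) × Y => Mker (fun a => Ψ (a, q.2)) q.1 := by
  set d : OnePoint Γ → ℝ := fun a => ‖Ψ.curry a - Ψ.curry ∞‖ with hd_def
  have hd_cont : Continuous d := (Ψ.curry.continuous.sub continuous_const).norm
  have hd_infty : d ∞ = 0 := by simp [hd_def]
  have hten : Tendsto (fun γ : Γ => d ↑γ) cofinite (𝓝 0) := by
    have := (OnePoint.continuous_iff_from_discrete d).mp hd_cont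
    rwa [hd_infty] at this
  have hfin : ∀ n : ℕ, {γ : Γ | 1/((n:ℝ)+1) ≤ d ↑γ}.Finite := by
    intro n
    have hpos : (0:ℝ) < 1/((n:ℝ)+1) := by positivity
    have := Filter.eventually_cofinite.mp (hten.eventually (gt_mem_nhds hpos))
    exact this.subset fun γ hγ => by simpa [not_lt] using hγ
  set target : ↥(Ball Γ) × Y → ℝ := fun q => Mker (fun a => Ψ (a, q.2)) q.1 with htarget
  set G : ℕ → ↥(Ball Γ) × Y → ℝ := fun n q =>
    Ψ (∞, q.2) + ∑ γ ∈ (hfin n).toFinset, hw (q.1.1 γ) * (Ψ (↑γ, q.2) - Ψ (∞, q.2)) with hG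
  have hGcont : ∀ n, Continuous (G n) := by
    intro n
    apply Continuous.add
    · exact Ψ.continuous.comp (continuous_const.prodMk continuous_snd)
    · apply continuous_finset_sum
      intro γ _
      apply Continuous.mul
      · exact hw_cont.comp ((continuous_apply γ).comp (continuous_subtype_val.comp continuous_fst))
      · exact (Ψ.continuous.comp (continuous_const.prodMk continuous_snd)).sub
          (Ψ.continuous.comp (continuous_const.prodMk continuous_snd))
  have hdist : ∀ a : OnePoint Γ, ∀ y : Y, |Ψ (a, y) - Ψ (∞, y)| ≤ d a := by
    intro a y
    have : (Ψ.curry a - Ψ.curry ∞) y = Ψ (a, y) - Ψ (∞, y) := by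
      simp [ContinuousMap.curry_apply]
    calc |Ψ (a, y) - Ψ (∞, y)| = ‖(Ψ.curry a - Ψ.curry ∞) y‖ := by rw [this, Real.norm_eq_abs]
      _ ≤ ‖Ψ.curry a - Ψ.curry ∞‖ := ContinuousMap.norm_coe_le_norm _ _
  have hb : ∀ n q, |target q - G n q| ≤ 1/((n:ℝ)+1) := by
    intro n q
    have hpos : (0:ℝ) < 1/((n:ℝ)+1) := by positivity
    set F : Γ → ℝ := fun γ => hw (q.1.1 γ) * (Ψ (↑γ, q.2) - Ψ (∞, q.2)) with hF
    have hF0 : ∀ γ, q.1.1 γ ≤ 1/2 → F γ = 0 := term_zero (fun a => Ψ (a, q.2)) q.1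
    have hdiff : target q - G n q = (∑' γ, F γ) - ∑ γ ∈ (hfin n).toFinset, F γ := by
      simp only [htarget, hG, Mker]; ring
    rw [hdiff]
    by_cases hbig : ∃ γ0, 1/2 < q.1.1 γ0
    · obtain ⟨γ0, h0⟩ := hbig
      rw [ball_tsum_eq hF0 h0]
      by_cases hmem : γ0 ∈ (hfin n).toFinset
      · rw [Finset.sum_eq_single_of_mem γ0 hmem (fun b _ hb =>
          hF0 b (le_of_not_gt fun h2 => hb (ball_subsing q.1 h2 h0)))]
        simpa using le_of_lt hpos
      · rw [Finset.sum_eq_zero (fun b hbK => hF0 b (le_of_not_gt fun h2 => by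
          rw [ball_subsing q.1 h2 h0] at hbK; exact hmem hbK))]
        rw [sub_zero]
        have hdγ0 : d ↑γ0 < 1/((n:ℝ)+1) := by
          by_contra hcon
          exact hmem ((hfin n).mem_toFinset.mpr (le_of_not_gt hcon))
        have h1 : |F γ0| ≤ |Ψ (↑γ0, q.2) - Ψ (∞, q.2)| := by
          rw [hF, abs_mul, abs_of_nonneg (hw_nonneg _)]
          have := hw_le_one (ball_le_one q.1 γ0)
          nlinarith [abs_nonneg (Ψ (↑γ0, q.2) - Ψ (∞, q.2)), hw_nonneg (q.1.1 γ0)]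
        exact le_of_lt (lt_of_le_of_lt (h1.trans (hdist _ _)) hdγ0)
    · push_neg at hbig
      rw [ball_tsum_zero hF0 hbig, Finset.sum_eq_zero (fun b _ => hF0 b (hbig b))]
      simpa using le_of_lt hpos
  have hu : TendstoUniformly G target atTop := by
    rw [Metric.tendstoUniformly_iff]
    intro ε hε
    obtain ⟨N, hN⟩ := exists_nat_one_div_lt hε
    filter_upwards [eventually_ge_atTop N] with n hn q
    have h1 : dist (target q) (G n q) ≤ 1/((n:ℝ)+1) := by
      rw [Real.dist_eq]; exact hb n q
    have h2 : 1/((n:ℝ)+1) ≤ 1/((N:ℝ)+1) := by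
      apply one_div_le_one_div_of_le (by positivity)
      exact_mod_cast by omega
    exact lt_of_le_of_lt (h1.trans h2) hN
  exact hu.continuous (Eventually.of_forall hGcont).frequently


def consA (a : OnePoint Γ) (y : ℕ → OnePoint Γ) : ℕ → OnePoint Γ :=
  fun n => Nat.casesOn n a y

lemma continuous_consA :
    Continuous fun p : OnePoint Γ × (ℕ → OnePoint Γ) => consA p.1 p.2 := by
  apply continuous_pi
  intro n
  cases n with
  | zero => exact continuous_fst
  | succ k => exact (continuous_apply k).comp continuous_snd

def consCM (a : OnePoint Γ) : C(ℕ → OnePoint Γ, ℕ → OnePoint Γ) :=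
  ⟨consA a, continuous_consA.comp (continuous_const.prodMk continuous_id)⟩

def trunc (n : ℕ) (y : ℕ → OnePoint Γ) : ℕ → OnePoint Γ :=
  fun k => if k < n then y k else ∞

lemma continuous_trunc (n : ℕ) : Continuous (trunc (Γ := Γ) n) := by
  apply continuous_pi
  intro k
  by_cases h : k < n
  · simp only [trunc, if_pos h]; exact continuous_apply k
  · simp only [trunc, if_neg h]; exact continuous_const

def truncCM (n : ℕ) : C(ℕ → OnePoint Γ, ℕ → OnePoint Γ) := ⟨trunc n, continuous_trunc n⟩

def Phi : ℕ → C(ℕ → OnePoint Γ, ℝ) → (ℕ → ↥(Ball Γ)) → ℝ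
  | 0, f, _ => f fun _ => ∞
  | n+1, f, x => Mker (fun a => Phi n (f.comp (consCM a)) fun k => x (k+1)) (x 0)

lemma Phi_bound (n : ℕ) (f : C(ℕ → OnePoint Γ, ℝ)) (c : ℝ)
    (hc : ∀ y, |f y| ≤ c) (x : ℕ → ↥(Ball Γ)) : |Phi n f x| ≤ c := by
  induction n generalizing f x with
  | zero => exact hc _
  | succ n IH =>
    exact Mker_bound _ _ c (fun a => IH (f.comp (consCM a)) (fun y => hc _) _)

lemma Phi_add (n : ℕ) (f g : C(ℕ → OnePoint Γ, ℝ)) (x : ℕ → ↥(Ball Γ)) :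
    Phi n (f + g) x = Phi n f x + Phi n g x := by
  induction n generalizing f g x with
  | zero => simp [Phi]
  | succ n IH =>
    show Mker _ _ = _
    have h : ∀ a : OnePoint Γ, (f + g).comp (consCM a) = f.comp (consCM a) + g.comp (consCM a) :=
      fun a => ContinuousMap.ext fun y => rfl
    have h2 : (fun a => Phi n ((f + g).comp (consCM a)) fun k => x (k+1))
        = fun a => Phi n (f.comp (consCM a)) (fun k => x (k+1))
            + Phi n (g.comp (consCM a)) (fun k => x (k+1)) := by
      funext a; rw [h a, IH]
    rw [h2, Mker_add]
    rfl

lemma Phi_sub (n : ℕ) (f g : C(ℕ → OnePoint Γ, ℝ)) (x : ℕ → ↥(Ball Γ)) :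
    Phi n (f - g) x = Phi n f x - Phi n g x := by
  induction n generalizing f g x with
  | zero => simp [Phi]
  | succ n IH =>
    show Mker _ _ = _
    have h2 : (fun a => Phi n ((f - g).comp (consCM a)) fun k => x (k+1))
        = fun a => Phi n (f.comp (consCM a)) (fun k => x (k+1))
            - Phi n (g.comp (consCM a)) (fun k => x (k+1)) := by
      funext a
      rw [show (f - g).comp (consCM a) = f.comp (consCM a) - g.comp (consCM a) from
        ContinuousMap.ext fun y => rfl, IH]
    rw [h2]
    exact Mker_sub _ _ _

lemma Phi_smul (n : ℕ) (c : ℝ) (f : C(ℕ → OnePoint Γ, ℝ)) (x : ℕ → ↥(Ball Γ)) :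
    Phi n (c • f) x = c * Phi n f x := by
  induction n generalizing f x with
  | zero => simp [Phi]
  | succ n IH =>
    show Mker _ _ = _
    have h2 : (fun a => Phi n ((c • f).comp (consCM a)) fun k => x (k+1))
        = fun a => c * Phi n (f.comp (consCM a)) (fun k => x (k+1)) := by
      funext a
      rw [show (c • f).comp (consCM a) = c • (f.comp (consCM a)) from
        ContinuousMap.ext fun y => rfl, IH]
    rw [h2]
    exact Mker_smul _ _ _

lemma Phi_j (n : ℕ) (f : C(ℕ → OnePoint Γ, ℝ)) (a : ℕ → OnePoint Γ) :
    Phi n f (fun k => jball (a k)) = f (trunc n a) := by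
  induction n generalizing f a with
  | zero =>
    show f (fun _ => ∞) = f (trunc 0 a)
    rw [show trunc 0 a = fun _ => (∞ : OnePoint Γ) from funext fun k => by simp [trunc]]
  | succ n IH =>
    show Mker (fun b => Phi n (f.comp (consCM b)) fun k => jball (a (k+1))) (jball (a 0)) = _
    rw [Mker_j, IH (f.comp (consCM (a 0))) (fun k => a (k+1))]
    show f (consA (a 0) (trunc n fun k => a (k+1))) = f (trunc (n+1) a)
    congr 1
    funext k
    cases k with
    | zero => simp [consA, trunc]
    | succ k => simp [consA, trunc, Nat.succ_lt_succ_iff]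

lemma Phi_congr (n : ℕ) (f g : C(ℕ → OnePoint Γ, ℝ))
    (h : ∀ y, (∀ k, n ≤ k → y k = ∞) → f y = g y) (x : ℕ → ↥(Ball Γ)) :
    Phi n f x = Phi n g x := by
  induction n generalizing f g x with
  | zero => exact h _ (fun k _ => rfl)
  | succ n IH =>
    show Mker _ _ = Mker _ _
    congr 1
    funext b
    refine IH _ _ (fun y hy => h (consA b y) (fun k hk => ?_)) _
    match k, hk with
    | k+1, hk => exact hy k (Nat.le_of_succ_le_succ hk)

lemma Phi_of_const (n : ℕ) (f : C(ℕ → OnePoint Γ, ℝ)) (hf : ∀ y y', f y = f y')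
    (x : ℕ → ↥(Ball Γ)) : Phi n f x = f (fun _ => ∞) := by
  induction n generalizing f x with
  | zero => rfl
  | succ n IH =>
    show Mker (fun b => Phi n (f.comp (consCM b)) fun k => x (k+1)) (x 0) = _
    rw [show (fun b => Phi n (f.comp (consCM b)) fun k => x (k+1))
        = fun _ => f (fun _ => ∞) from funext fun b => by
      rw [IH (f.comp (consCM b)) (fun y y' => hf _ _)]; exact hf _ _]
    exact Mker_const _ _

lemma Phi_stable (n : ℕ) : ∀ (f : C(ℕ → OnePoint Γ, ℝ)),
    (∀ y, f (trunc n y) = f y) → ∀ m, n ≤ m → ∀ x, Phi m f x = Phi n f x := by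
  induction n with
  | zero =>
    intro f hf m _ x
    have hconst : ∀ y y', f y = f y' := by
      intro y y'
      rw [← hf y, ← hf y']
      rw [show trunc 0 y = trunc 0 y' from funext fun k => by simp [trunc]]
    rw [Phi_of_const m f hconst x]
    rfl
  | succ n IH =>
    intro f hf m hm x
    obtain ⟨m', rfl⟩ : ∃ m', m = m' + 1 := ⟨m - 1, by omega⟩
    show Mker _ _ = Mker _ _
    congr 1
    funext b
    refine IH (f.comp (consCM b)) ?_ m' (by omega) _
    intro y
    show f (consA b (trunc n y)) = f (consA b y)
    rw [← hf (consA b y)]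
    congr 1
    funext k
    cases k with
    | zero => simp [consA, trunc]
    | succ k => simp [consA, trunc, Nat.succ_lt_succ_iff]


lemma Phi_cont (n : ℕ) : ∀ {Z : Type u} [TopologicalSpace Z] [CompactSpace Z]
    (g : C(Z × (ℕ → OnePoint Γ), ℝ)),
    Continuous fun p : Z × (ℕ → ↥(Ball Γ)) => Phi n (g.curry p.1) p.2 := by
  induction n with
  | zero =>
    intro Z _ _ g
    show Continuous fun p : Z × (ℕ → ↥(Ball Γ)) => (g.curry p.1) (fun _ => ∞)
    have : ∀ p : Z × (ℕ → ↥(Ball Γ)), (g.curry p.1) (fun _ => ∞) = g (p.1, fun _ => ∞) :=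
      fun p => rfl
    simp only [this]
    exact g.continuous.comp (continuous_fst.prodMk continuous_const)
  | succ n IH =>
    intro Z _ _ g
    let g' : C((Z × OnePoint Γ) × (ℕ → OnePoint Γ), ℝ) :=
      g.comp ⟨fun q => (q.1.1, consA q.1.2 q.2),
        ((continuous_fst.comp continuous_fst).prodMk
          (continuous_consA.comp ((continuous_snd.comp continuous_fst).prodMk
            continuous_snd)))⟩
    have key : ∀ (z : Z) (a : OnePoint Γ),
        (g.curry z).comp (consCM a) = g'.curry (z, a) :=
      fun z a => ContinuousMap.ext fun y => rfl
    have IH' := IH (Z := Z × OnePoint Γ) g'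
    let Ψ : C(OnePoint Γ × (Z × (ℕ → ↥(Ball Γ))), ℝ) :=
      ⟨fun q => Phi n (g'.curry (q.2.1, q.1)) q.2.2, by
        have hre : Continuous fun q : OnePoint Γ × (Z × (ℕ → ↥(Ball Γ))) =>
            (((q.2.1, q.1) : Z × OnePoint Γ), q.2.2) := by fun_prop
        exact IH'.comp hre⟩
    have hM := Mker_continuous Ψ
    have hre2 : Continuous fun p : Z × (ℕ → ↥(Ball Γ)) =>
        ((p.2 0, (p.1, fun k => p.2 (k+1))) : ↥(Ball Γ) × (Z × (ℕ → ↥(Ball Γ)))) := by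
      refine Continuous.prodMk (by fun_prop) (Continuous.prodMk continuous_fst ?_)
      exact continuous_pi fun k => (continuous_apply (k+1)).comp continuous_snd
    refine (hM.comp hre2).congr fun p => ?_
    show Mker (fun a => Ψ (a, (p.2 0, (p.1, fun k => p.2 (k+1))).2)) (p.2 0)
        = Phi (n+1) (g.curry p.1) p.2
    show Mker (fun a => Phi n (g'.curry (p.1, a)) fun k => p.2 (k+1)) (p.2 0) = _
    show _ = Mker (fun a => Phi n ((g.curry p.1).comp (consCM a)) fun k => p.2 (k+1)) (p.2 0)
    rfl

lemma Phi_continuous (n : ℕ) (f : C(ℕ → OnePoint Γ, ℝ)) : Continuous (Phi n f) := by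
  have h := Phi_cont n (Z := PUnit.{u+1})
    (f.comp ⟨Prod.snd, continuous_snd⟩)
  have h2 := h.comp ((continuous_const (y := PUnit.unit)).prodMk continuous_id)
  refine h2.congr fun x => ?_
  show Phi n ((f.comp ⟨Prod.snd, continuous_snd⟩).curry PUnit.unit) x = Phi n f x
  rfl


lemma trunc_idem (n : ℕ) (y : ℕ → OnePoint Γ) : trunc n (trunc (Γ := Γ) n y) = trunc n y := by
  funext k
  by_cases h : k < n <;> simp [trunc, h]

lemma trunc_tendsto (f : C(ℕ → OnePoint Γ, ℝ)) :
    Tendsto (fun n => ‖f - f.comp (truncCM n)‖) atTop (𝓝 0) := by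
  rw [NormedAddCommGroup.tendsto_nhds_zero]
  intro ε hε
  -- for each y, choose a basic open box on which f varies by < ε/4
  have hbox : ∀ y : ℕ → OnePoint Γ, ∃ (I : Finset ℕ) (u : ℕ → Set (OnePoint Γ)),
      (∀ i ∈ I, IsOpen (u i) ∧ y i ∈ u i) ∧
      (↑I : Set ℕ).pi u ⊆ ⇑f ⁻¹' (Metric.ball (f y) (ε/4)) := by
    intro y
    have hopen : IsOpen (⇑f ⁻¹' (Metric.ball (f y) (ε/4))) :=
      f.continuous.isOpen_preimage _ Metric.isOpen_ball
    have hmem : y ∈ ⇑f ⁻¹' (Metric.ball (f y) (ε/4)) := by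
      simp [Metric.mem_ball, dist_self]; positivity
    exact isOpen_pi_iff.mp hopen y hmem
  choose I u hu hsub using hbox
  set W : (ℕ → OnePoint Γ) → Set (ℕ → OnePoint Γ) := fun y => (↑(I y) : Set ℕ).pi (u y)
    with hW
  have hWopen : ∀ y, IsOpen (W y) :=
    fun y => isOpen_set_pi (Finset.finite_toSet _) (fun i hi => (hu y i hi).1)
  have hWmem : ∀ y, y ∈ W y := fun y i hi => (hu y i hi).2
  obtain ⟨t, ht⟩ := IsCompact.elim_finite_subcover isCompact_univ W hWopen
    (fun y _ => Set.mem_iUnion.mpr ⟨y, hWmem y⟩)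
  set N : ℕ := (t.sup fun y => (I y).sup id) + 1 with hN
  filter_upwards [eventually_ge_atTop N] with n hn
  have key : ∀ y : ℕ → OnePoint Γ, dist (f y) (f (trunc n y)) < ε/2 := by
    intro y
    obtain ⟨z, hzt, hyz⟩ := Set.mem_iUnion₂.mp (ht (Set.mem_univ y))
    have htr : trunc n y ∈ W z := by
      intro i hi
      have hiN : i < n := by
        have h1 : i ≤ (I z).sup id := Finset.le_sup (f := id) hi
        have h2 : (I z).sup id ≤ t.sup (fun y => (I y).sup id) :=
          Finset.le_sup (f := fun y => (I y).sup id) hzt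
        omega
      have : trunc n y i = y i := by simp [trunc, hiN]
      rw [this]
      exact hyz i hi
    have h1 : dist (f y) (f z) < ε/4 := hsub z hyz
    have h2 : dist (f (trunc n y)) (f z) < ε/4 := hsub z htr
    calc dist (f y) (f (trunc n y)) ≤ dist (f y) (f z) + dist (f (trunc n y)) (f z) :=
          dist_triangle_right _ _ _
      _ < ε/4 + ε/4 := by linarith
      _ = ε/2 := by ring
  have hle : ‖f - f.comp (truncCM n)‖ ≤ ε/2 := by
    rw [ContinuousMap.norm_le _ (by positivity)]
    intro y
    have := key y
    rw [Real.dist_eq] at this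
    simp only [ContinuousMap.sub_apply, ContinuousMap.comp_apply]
    rw [Real.norm_eq_abs]
    exact le_of_lt this
  rw [Real.norm_eq_abs, abs_of_nonneg (norm_nonneg _)]
  linarith

def PhiCM (n : ℕ) (f : C(ℕ → OnePoint Γ, ℝ)) : C(ℕ → ↥(Ball Γ), ℝ) :=
  ⟨Phi n f, Phi_continuous n f⟩

lemma Phi_key_dist (f : C(ℕ → OnePoint Γ, ℝ)) (N k : ℕ) (hk : N ≤ k) :
    dist (PhiCM k f) (PhiCM N f) ≤ ‖f - f.comp (truncCM N)‖ := by
  rw [ContinuousMap.dist_le (norm_nonneg _)]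
  intro x
  set g := f.comp (truncCM N) with hg
  have h1 : Phi k g x = Phi N g x :=
    Phi_stable N g (fun y => by
      show f (trunc N (trunc N y)) = f (trunc N y)
      rw [trunc_idem]) k hk x
  have h2 : Phi N g x = Phi N f x := by
    refine Phi_congr N g f (fun y hy => ?_) x
    show f (trunc N y) = f y
    congr 1
    funext i
    by_cases hi : i < N
    · simp [trunc, hi]
    · simp [trunc, hi, hy i (le_of_not_gt hi)]
  have h3 : |Phi k f x - Phi k g x| ≤ ‖f - g‖ := by
    rw [← Phi_sub]
    refine Phi_bound k (f - g) ‖f - g‖ (fun y => ?_) x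
    have := (f - g).norm_coe_le_norm y
    rwa [Real.norm_eq_abs] at this
  calc dist ((PhiCM k f) x) ((PhiCM N f) x) = |Phi k f x - Phi N f x| := Real.dist_eq _ _
    _ = |Phi k f x - Phi k g x| := by rw [h1.trans h2]
    _ ≤ ‖f - g‖ := h3

lemma Phi_cauchy (f : C(ℕ → OnePoint Γ, ℝ)) : CauchySeq (fun n => PhiCM (Γ := Γ) n f) := by
  apply cauchySeq_of_le_tendsto_0 (fun N => 2 * ‖f - f.comp (truncCM N)‖)
  · intro n m N hn hm
    calc dist (PhiCM n f) (PhiCM m f)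
        ≤ dist (PhiCM n f) (PhiCM N f) + dist (PhiCM N f) (PhiCM m f) := dist_triangle _ _ _
      _ ≤ ‖f - f.comp (truncCM N)‖ + ‖f - f.comp (truncCM N)‖ := by
          have h1 := Phi_key_dist f N n hn
          have h2 := Phi_key_dist f N m hm
          rw [dist_comm (PhiCM N f) (PhiCM m f)]
          linarith
      _ = 2 * ‖f - f.comp (truncCM N)‖ := by ring
  · have := (trunc_tendsto f).const_mul (2:ℝ)
    simpa using this

def Efun (f : C(ℕ → OnePoint Γ, ℝ)) : C(ℕ → ↥(Ball Γ), ℝ) :=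
  (cauchySeq_tendsto_of_complete (Phi_cauchy f)).choose

lemma Efun_spec (f : C(ℕ → OnePoint Γ, ℝ)) :
    Tendsto (fun n => PhiCM (Γ := Γ) n f) atTop (𝓝 (Efun f)) :=
  (cauchySeq_tendsto_of_complete (Phi_cauchy f)).choose_spec

lemma Efun_add (f g : C(ℕ → OnePoint Γ, ℝ)) : Efun (f + g) = Efun f + Efun g := by
  refine tendsto_nhds_unique (Efun_spec (f + g)) ?_
  have h : (fun n => PhiCM (Γ := Γ) n (f + g)) = fun n => PhiCM n f + PhiCM n g := by
    funext n
    exact ContinuousMap.ext fun x => Phi_add n f g x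
  rw [h]
  exact (Efun_spec f).add (Efun_spec g)

lemma Efun_smul (c : ℝ) (f : C(ℕ → OnePoint Γ, ℝ)) : Efun (c • f) = c • Efun f := by
  refine tendsto_nhds_unique (Efun_spec (c • f)) ?_
  have h : (fun n => PhiCM (Γ := Γ) n (c • f)) = fun n => c • PhiCM n f := by
    funext n
    exact ContinuousMap.ext fun x => Phi_smul n c f x
  rw [h]
  exact (Efun_spec f).const_smul c

lemma Efun_norm (f : C(ℕ → OnePoint Γ, ℝ)) : ‖Efun f‖ ≤ ‖f‖ := by
  have hnorm : Tendsto (fun n => ‖PhiCM (Γ := Γ) n f‖) atTop (𝓝 ‖Efun f‖) :=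
    (Efun_spec f).norm
  refine le_of_tendsto hnorm (Eventually.of_forall fun n => ?_)
  rw [ContinuousMap.norm_le _ (norm_nonneg f)]
  intro x
  rw [Real.norm_eq_abs]
  refine Phi_bound n f ‖f‖ (fun y => ?_) x
  have := f.norm_coe_le_norm y
  rwa [Real.norm_eq_abs] at this

def iOp : C(ℕ → OnePoint Γ, ℝ) →L[ℝ] C(ℕ → ↥(Ball Γ), ℝ) :=
  LinearMap.mkContinuous
    { toFun := Efun
      map_add' := Efun_add
      map_smul' := Efun_smul } 1
    (fun f => by simpa using Efun_norm f)

def Jc : C(ℕ → OnePoint Γ, ℕ → ↥(Ball Γ)) :=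
  ⟨fun a k => jball (a k),
    continuous_pi fun k => continuous_jball.comp (continuous_apply k)⟩

def rOp : C(ℕ → ↥(Ball Γ), ℝ) →L[ℝ] C(ℕ → OnePoint Γ, ℝ) :=
  LinearMap.mkContinuous
    { toFun := fun g => g.comp Jc
      map_add' := fun g₁ g₂ => ContinuousMap.ext fun a => rfl
      map_smul' := fun c g => ContinuousMap.ext fun a => rfl } 1
    (fun g => by
      rw [one_mul]
      rw [ContinuousMap.norm_le _ (norm_nonneg g)]
      exact fun a => g.norm_coe_le_norm _)

lemma rOp_iOp (f : C(ℕ → OnePoint Γ, ℝ)) : rOp (iOp f) = f := by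
  refine ContinuousMap.ext fun a => ?_
  show (Efun f) (Jc a) = f a
  have h1 : Tendsto (fun n => (PhiCM (Γ := Γ) n f) (Jc a)) atTop (𝓝 (Efun f (Jc a))) :=
    (continuous_eval_const (Jc a)).continuousAt.tendsto.comp (Efun_spec f)
  have h2 : Tendsto (fun n => (PhiCM (Γ := Γ) n f) (Jc a)) atTop (𝓝 (f a)) := by
    have heq : ∀ n, (PhiCM (Γ := Γ) n f) (Jc a) = f (trunc n a) := fun n => Phi_j n f a
    rw [show (fun n => (PhiCM (Γ := Γ) n f) (Jc a)) = fun n => f (trunc n a) from funext heq]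
    rw [tendsto_iff_dist_tendsto_zero]
    refine squeeze_zero (fun n => dist_nonneg) (fun n => ?_) (trunc_tendsto f)
    rw [Real.dist_eq, abs_sub_comm]
    have := (f - f.comp (truncCM n)).norm_coe_le_norm a
    simpa [Real.norm_eq_abs, truncCM] using this
  exact tendsto_nhds_unique h1 h2

end Topology
end St14

/-- for uncountable `Γ`, `C(A(Γ)^ℕ)` is isomorphic to a complemented
subspace of `C(B(Γ)^ℕ)`, witnessed by operators `i, r` with `r ∘ i = id`. -/
theorem statement14 {Γ : Type*} [TopologicalSpace Γ] [DiscreteTopology Γ] [Uncountable Γ] :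
    ∃ (i : C(ℕ → OnePoint Γ, ℝ) →L[ℝ] C(ℕ → ↥(Ball Γ), ℝ))
      (r : C(ℕ → ↥(Ball Γ), ℝ) →L[ℝ] C(ℕ → OnePoint Γ, ℝ)),
      r.comp i = ContinuousLinearMap.id ℝ C(ℕ → OnePoint Γ, ℝ) :=
  ⟨St14.iOp, St14.rOp, ContinuousLinearMap.ext fun f => St14.rOp_iOp f⟩

end
end

section
/- Let Γ be a set and let m, n be positive natural numbers (or countable powers). If there exists a topological embedding v : B(Γ)^n → B(Γ)^m which admits a regular extension operator T : C(B(Γ)^n) → C(B(Γ)^m), then there exists a continuous surjection from B(Γ)^m onto B(Γ)^n. -/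
open Set Filter Topology

noncomputable section

/-- if there is a topological embedding `v : B(Γ)^ι → B(Γ)^κ`
(`ι`, `κ` nonempty countable index sets, covering both finite positive powers and
countable powers) admitting a regular extension operator `T`, then `B(Γ)^κ` maps
continuously onto `B(Γ)^ι`. -/
theorem statement16 {Γ : Type*} (ι κ : Type) [Countable ι] [Countable κ]
    [Nonempty ι] [Nonempty κ]
    (v : (ι → ↥(Ball Γ)) → (κ → ↥(Ball Γ))) (hv : IsEmbedding v)
    (T : C(ι → ↥(Ball Γ), ℝ) →L[ℝ] C(κ → ↥(Ball Γ), ℝ))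
    (hext : ∀ (f : C(ι → ↥(Ball Γ), ℝ)) (x : ι → ↥(Ball Γ)), T f (v x) = f x)
    (hpos : ∀ f : C(ι → ↥(Ball Γ), ℝ), (∀ x, 0 ≤ f x) → ∀ y, 0 ≤ T f y)
    (hnorm : ‖T‖ = 1)
    (hconst : ∀ c : ℝ, T (ContinuousMap.const (ι → ↥(Ball Γ)) c) =
      ContinuousMap.const (κ → ↥(Ball Γ)) c) :
    ∃ g : (κ → ↥(Ball Γ)) → (ι → ↥(Ball Γ)), Continuous g ∧ Function.Surjective g := by
  -- coordinate functions
  set e : ι → Γ → C(ι → ↥(Ball Γ), ℝ) := fun i γ =>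
    ⟨fun x => (x i : Γ → ℝ) γ,
      ((continuous_apply γ).comp continuous_subtype_val).comp (continuous_apply i)⟩ with he
  -- key bound: for any y, i, finite s, ∑_{γ∈s} |T (e i γ) y| ≤ 1
  have key : ∀ (y : κ → ↥(Ball Γ)) (i : ι) (s : Finset Γ),
      ∑ γ ∈ s, |T (e i γ) y| ≤ 1 := by
    intro y i s
    set ε : Γ → ℝ := fun γ => if 0 ≤ T (e i γ) y then 1 else -1 with hε
    set f : C(ι → ↥(Ball Γ), ℝ) := ∑ γ ∈ s, ε γ • e i γ with hf
    have hfx : ∀ x : ι → ↥(Ball Γ), f x ≤ 1 := by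
      intro x
      have h1 : f x = ∑ γ ∈ s, ε γ * (x i : Γ → ℝ) γ := by
        simp [hf, he]
      have h2 : ∀ γ ∈ s, ε γ * (x i : Γ → ℝ) γ ≤ |(x i : Γ → ℝ) γ| := by
        intro γ _
        have : |ε γ * (x i : Γ → ℝ) γ| ≤ |(x i : Γ → ℝ) γ| := by
          rw [abs_mul]
          have : |ε γ| = 1 := by
            by_cases h : 0 ≤ T (e i γ) y <;> simp [hε, h]
          simp [this]
        exact le_trans (le_abs_self _) this
      calc f x ≤ ∑ γ ∈ s, |(x i : Γ → ℝ) γ| := by rw [h1]; exact Finset.sum_le_sum h2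
        _ ≤ 1 := (x i).2 s
    -- 1 - f ≥ 0, apply positivity
    have hTf : T f y ≤ 1 := by
      have hnn : ∀ x, 0 ≤ (ContinuousMap.const (ι → ↥(Ball Γ)) (1:ℝ) - f) x := by
        intro x
        simpa using sub_nonneg.mpr (hfx x)
      have := hpos _ hnn y
      have hsub : T (ContinuousMap.const (ι → ↥(Ball Γ)) (1:ℝ) - f)
          = T (ContinuousMap.const (ι → ↥(Ball Γ)) (1:ℝ)) - T f := map_sub T _ _
      rw [hsub, hconst] at this
      have : 0 ≤ 1 - T f y := by simpa using this
      linarith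
    have hTfy : T f y = ∑ γ ∈ s, |T (e i γ) y| := by
      have h1 : T f = ∑ γ ∈ s, ε γ • T (e i γ) := by
        rw [hf, map_sum]
        congr 1; ext γ; rw [map_smul]
      have h2 : T f y = ∑ γ ∈ s, ε γ * T (e i γ) y := by
        rw [h1]; simp
      rw [h2]
      congr 1; ext γ
      by_cases h : 0 ≤ T (e i γ) y
      · simp [hε, h, abs_of_nonneg h]
      · push_neg at h
        simp [hε, not_le.mpr h, abs_of_neg h]
    rw [← hTfy]; exact hTf
  -- define g
  refine ⟨fun y i => ⟨fun γ => T (e i γ) y, fun s => key y i s⟩, ?_, ?_⟩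
  · refine continuous_pi fun i => Continuous.subtype_mk (continuous_pi fun γ => ?_) _
    exact (T (e i γ)).continuous
  · intro x
    refine ⟨v x, ?_⟩
    funext i
    apply Subtype.ext
    funext γ
    simpa [he] using hext (e i γ) x
end
end

section
/- Let Γ be a set. Then B(Γ) is sequentially compact: every sequence in B(Γ) has a convergent subsequence (convergence in the product topology). -/
open Set Filter Topology

noncomputable section

/-- `B(Γ)` is sequentially compact: every sequence has a subsequence
converging in the (subspace of the) product topology. -/
theorem statement18 {Γ : Type*} (x : ℕ → ↥(Ball Γ)) :
    ∃ (y : ↥(Ball Γ)) (φ : ℕ → ℕ), StrictMono φ ∧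
      Tendsto (x ∘ φ) atTop (nhds y) := by
  classical
  -- each `x n` is summable in absolute value, hence has countable support
  have hsum : ∀ n, Summable fun i => |(x n : Γ → ℝ) i| := fun n =>
    summable_of_sum_le (fun i => abs_nonneg _) (x n).2
  have hcsupp : ∀ n, (Function.support (x n : Γ → ℝ)).Countable := by
    intro n
    have := (hsum n).countable_support
    simpa [Function.support, abs_ne_zero] using this
  set S : Set Γ := ⋃ n, Function.support (x n : Γ → ℝ) with hS
  have hScount : S.Countable := countable_iUnion hcsupp
  have : Countable ↥S := hScount.to_subtype
  -- each coordinate is in [-1, 1]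
  have hbd : ∀ n i, |(x n : Γ → ℝ) i| ≤ 1 := by
    intro n i
    simpa using (x n).2 {i}
  -- the restriction to S lives in a compact, first-countable space
  have hK : IsCompact (Set.univ.pi fun _ : ↥S => Icc (-1 : ℝ) 1) :=
    isCompact_univ_pi fun _ => isCompact_Icc
  have hmem : ∀ n, (fun i : ↥S => (x n : Γ → ℝ) i) ∈
      Set.univ.pi fun _ : ↥S => Icc (-1 : ℝ) 1 := by
    intro n i _
    exact abs_le.mp (hbd n i)
  obtain ⟨g, -, φ, hφ, hg⟩ := hK.tendsto_subseq hmem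
  -- extend g by zero
  set y : Γ → ℝ := fun i => if h : i ∈ S then g ⟨i, h⟩ else 0 with hy
  -- pointwise convergence of the subsequence to y
  have hconv : ∀ i, Tendsto (fun n => (x (φ n) : Γ → ℝ) i) atTop (𝓝 (y i)) := by
    intro i
    by_cases h : i ∈ S
    · have := (tendsto_pi_nhds.mp hg) ⟨i, h⟩
      simpa [hy, h] using this
    · have hz : ∀ n, (x (φ n) : Γ → ℝ) i = 0 := by
        intro n
        by_contra hne
        exact h (mem_iUnion.mpr ⟨φ n, hne⟩)
      simp only [hy, dif_neg h]
      simp only [hz]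
      exact tendsto_const_nhds
  -- y is in the ball
  have hyB : y ∈ Ball Γ := by
    intro s
    have hlim : Tendsto (fun n => ∑ i ∈ s, |(x (φ n) : Γ → ℝ) i|) atTop
        (𝓝 (∑ i ∈ s, |y i|)) :=
      tendsto_finset_sum s fun i _ => (hconv i).abs
    exact le_of_tendsto hlim (Eventually.of_forall fun n => (x (φ n)).2 s)
  refine ⟨⟨y, hyB⟩, φ, hφ, ?_⟩
  rw [tendsto_subtype_rng]
  exact tendsto_pi_nhds.mpr hconv

end
end

section
/- Let Γ be a set. Then every nonempty closed subset F of B(Γ) contains a G_δ point, i.e. a point x ∈ F which is the intersection of countably many open subsets of F. (Such a point can be obtained by taking x ∈ F with ∑_{i∈Γ}|x_i| maximal.) -/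
open Set Filter Topology

noncomputable section

namespace S19

variable {Γ : Type*}

def sig (y : Γ → ℝ) : ℝ := ∑' i, |y i|

def Cbox (s : Finset Γ) (y : Γ → ℝ) (δ : ℝ) : Set (Γ → ℝ) := {z | ∀ i ∈ s, |z i - y i| ≤ δ}

def Obox (s : Finset Γ) (y : Γ → ℝ) (δ : ℝ) : Set (Γ → ℝ) := {z | ∀ i ∈ s, |z i - y i| < δ}

lemma isClosed_Cbox (s : Finset Γ) (y : Γ → ℝ) (δ : ℝ) : IsClosed (Cbox s y δ) := by
  have h : Cbox s y δ = ⋂ i ∈ s, {z : Γ → ℝ | |z i - y i| ≤ δ} := by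
    ext z; simp [Cbox]
  rw [h]
  exact isClosed_biInter fun i _ =>
    isClosed_le (((continuous_apply i).sub continuous_const).abs) continuous_const

lemma isOpen_Obox (s : Finset Γ) (y : Γ → ℝ) (δ : ℝ) : IsOpen (Obox s y δ) := by
  have h : Obox s y δ = ⋂ i ∈ s, {z : Γ → ℝ | |z i - y i| < δ} := by
    ext z; simp [Obox]
  rw [h]
  exact isOpen_biInter_finset fun i _ =>
    isOpen_lt (((continuous_apply i).sub continuous_const).abs) continuous_const

lemma Cbox_eq_iInter (s : Finset Γ) (y : Γ → ℝ) (δ : ℝ) :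
    Cbox s y δ = ⋂ k : ℕ, Obox s y (δ + (k + 1 : ℝ)⁻¹) := by
  ext z
  simp only [mem_iInter, Cbox, Obox, mem_setOf_eq]
  constructor
  · intro h k i hi
    have := h i hi
    have hk : (0:ℝ) < (k + 1 : ℝ)⁻¹ := by positivity
    linarith
  · intro h i hi
    by_contra hlt
    push_neg at hlt
    obtain ⟨k, hk⟩ := exists_nat_one_div_lt (sub_pos.mpr hlt)
    have := h k i hi
    rw [one_div] at hk
    linarith

lemma mem_ball_summable {y : Γ → ℝ} (hy : y ∈ Ball Γ) : Summable fun i => |y i| :=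
  summable_of_sum_le (fun _ => abs_nonneg _) hy

lemma sum_le_sig {y : Γ → ℝ} (hy : y ∈ Ball Γ) (t : Finset Γ) :
    ∑ i ∈ t, |y i| ≤ sig y :=
  Summable.sum_le_tsum t (fun i _ => abs_nonneg _) (mem_ball_summable hy)

lemma sig_le_one {y : Γ → ℝ} (hy : y ∈ Ball Γ) : sig y ≤ 1 :=
  Summable.tsum_le_of_sum_le (mem_ball_summable hy) hy

lemma step (ε : ℝ) (hε : 0 < ε) (G : Set (Γ → ℝ)) (hGne : G.Nonempty) (hGB : G ⊆ Ball Γ) :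
    ∃ (s : Finset Γ) (y : Γ → ℝ) (δ : ℝ), 0 < δ ∧
      (G ∩ Cbox s y δ).Nonempty ∧
      ∀ z ∈ G ∩ Cbox s y δ, ∀ w ∈ G ∩ Cbox s y δ, ∀ t : Finset Γ,
        ∑ i ∈ t, |z i - w i| ≤ 8 * ε := by
  classical
  set r := sSup (sig '' G) with hr
  have hbdd : BddAbove (sig '' G) := by
    refine ⟨1, ?_⟩
    rintro a ⟨u, hu, rfl⟩
    exact sig_le_one (hGB hu)
  -- pick y with sig y > r - ε
  obtain ⟨a, ⟨y, hyG, rfl⟩, hya⟩ :=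
    exists_lt_of_lt_csSup (hGne.image sig) (show r - ε < r by linarith)
  have hyB : y ∈ Ball Γ := hGB hyG
  -- pick finset s with partial sum > sig y - ε
  have hsum := (mem_ball_summable hyB).hasSum
  have hev := hsum.eventually_mem (Ioi_mem_nhds (show sig y - ε < sig y by linarith))
  obtain ⟨s, hs⟩ := hev.exists
  simp only [mem_Ioi] at hs
  set δ : ℝ := ε / (s.card + 1) with hδdef
  have hδ : 0 < δ := by positivity
  have hcardδ : (s.card : ℝ) * δ ≤ ε := by
    rw [hδdef, mul_div_assoc', div_le_iff₀ (by positivity)]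
    nlinarith [Nat.cast_nonneg (α := ℝ) s.card]
  refine ⟨s, y, δ, hδ, ⟨y, hyG, fun i _ => by simp [le_of_lt hδ]⟩, ?_⟩
  rintro z ⟨hzG, hzbox⟩ w ⟨hwG, hwbox⟩ t
  have hzB : z ∈ Ball Γ := hGB hzG
  have hwB : w ∈ Ball Γ := hGB hwG
  -- lower bound on partial sum of z over s
  have hlow : ∀ v : Γ → ℝ, v ∈ Cbox s y δ → r - 3 * ε ≤ ∑ i ∈ s, |v i| := by
    intro v hv
    have h1 : ∑ i ∈ s, (|y i| - δ) ≤ ∑ i ∈ s, |v i| := by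
      apply Finset.sum_le_sum
      intro i hi
      have := hv i hi
      have habs := abs_sub_abs_le_abs_sub (y i) (v i)
      rw [abs_sub_comm] at this
      linarith
    rw [Finset.sum_sub_distrib, Finset.sum_const, nsmul_eq_mul] at h1
    linarith
  -- tail bound
  have htail : ∀ v : Γ → ℝ, v ∈ G → v ∈ Cbox s y δ → ∑ i ∈ t \ s, |v i| ≤ 3 * ε := by
    intro v hvG hv
    have hvB := hGB hvG
    have h1 : ∑ i ∈ s ∪ (t \ s), |v i| ≤ sig v := sum_le_sig hvB _
    rw [Finset.sum_union (Finset.disjoint_sdiff)] at h1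
    have h2 : sig v ≤ r := le_csSup hbdd ⟨v, hvG, rfl⟩
    have h3 := hlow v hv
    linarith
  have hsplit : ∑ i ∈ t, |z i - w i|
      = ∑ i ∈ t ∩ s, |z i - w i| + ∑ i ∈ t \ s, |z i - w i| :=
    (Finset.sum_inter_add_sum_sdiff t s _).symm
  have hpart1 : ∑ i ∈ t ∩ s, |z i - w i| ≤ 2 * ε := by
    have h1 : ∑ i ∈ t ∩ s, |z i - w i| ≤ ∑ i ∈ t ∩ s, (2 * δ) := by
      apply Finset.sum_le_sum
      intro i hi
      have his : i ∈ s := Finset.mem_of_mem_inter_right hi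
      have hz := hzbox i his
      have hw := hwbox i his
      have h2 : |z i - w i| ≤ |z i - y i| + |y i - w i| := abs_sub_le _ _ _
      have h3 : |y i - w i| = |w i - y i| := abs_sub_comm _ _
      linarith
    rw [Finset.sum_const, nsmul_eq_mul] at h1
    have hc : ((t ∩ s).card : ℝ) ≤ s.card := by
      exact_mod_cast Finset.card_le_card (Finset.inter_subset_right)
    nlinarith [hδ]
  have hpart2 : ∑ i ∈ t \ s, |z i - w i| ≤ 6 * ε := by
    have h1 : ∑ i ∈ t \ s, |z i - w i| ≤ ∑ i ∈ t \ s, (|z i| + |w i|) := by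
      apply Finset.sum_le_sum
      intro i _
      exact abs_sub _ _
    rw [Finset.sum_add_distrib] at h1
    have h2 := htail z hzG hzbox
    have h3 := htail w hwG hwbox
    linarith
  linarith


lemma ball_isCompact : IsCompact (Ball Γ) := by
  have hsub : Ball Γ ⊆ Set.pi univ (fun _ : Γ => Icc (-1:ℝ) 1) := by
    intro x hx i _
    have h := hx {i}
    simp only [Finset.sum_singleton] at h
    exact abs_le.mp h
  have hclosed : IsClosed (Ball Γ) := by
    have h : Ball Γ = ⋂ s : Finset Γ, {x : Γ → ℝ | ∑ i ∈ s, |x i| ≤ 1} := by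
      ext x; simp [Ball, mem_iInter]
    rw [h]
    exact isClosed_iInter fun s =>
      isClosed_le (continuous_finset_sum s fun i _ => (continuous_apply i).abs) continuous_const
  exact (isCompact_univ_pi fun _ => isCompact_Icc).of_isClosed_subset hclosed hsub

end S19

/-- every nonempty closed subset `F` of `B(Γ)` contains a `G_δ` point:
a point `x ∈ F` such that `{x}` is the intersection of countably many sets open in
the subspace `F`. -/
theorem statement19 {Γ : Type*} (F : Set ↥(Ball Γ)) (hF : IsClosed F)
    (hne : F.Nonempty) :
    ∃ (x : ↥F) (U : ℕ → Set ↥F), (∀ n, IsOpen (U n)) ∧ (⋂ n, U n) = {x} := by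
  classical
  have hcomp : CompactSpace ↥(Ball Γ) := isCompact_iff_compactSpace.mp S19.ball_isCompact
  set F0 : Set (Γ → ℝ) := Subtype.val '' F with hF0
  have hF0comp : IsCompact F0 := hF.isCompact.image continuous_subtype_val
  have hF0closed : IsClosed F0 := hF0comp.isClosed
  have hF0ne : F0.Nonempty := hne.image _
  have hF0B : F0 ⊆ Ball Γ := by rintro _ ⟨u, _, rfl⟩; exact u.2
  have hstep : ∀ (n : ℕ) (G : Set (Γ → ℝ)), G.Nonempty → G ⊆ Ball Γ →
      ∃ q : Finset Γ × (Γ → ℝ) × ℝ, 0 < q.2.2 ∧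
        (G ∩ S19.Cbox q.1 q.2.1 q.2.2).Nonempty ∧
        ∀ z ∈ G ∩ S19.Cbox q.1 q.2.1 q.2.2, ∀ w ∈ G ∩ S19.Cbox q.1 q.2.1 q.2.2,
          ∀ t : Finset Γ, ∑ i ∈ t, |z i - w i| ≤ 8 * ((2:ℝ)^n)⁻¹ := by
    intro n G h1 h2
    obtain ⟨s, y, δ, h⟩ := S19.step ((2:ℝ)^n)⁻¹ (by positivity) G h1 h2
    exact ⟨⟨s, y, δ⟩, h⟩
  choose! p hp1 hp2 hp3 using hstep
  let Box : ℕ → Set (Γ → ℝ) → Set (Γ → ℝ) :=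
    fun n G => S19.Cbox (p n G).1 (p n G).2.1 (p n G).2.2
  let Fs : ℕ → Set (Γ → ℝ) := fun n => Nat.rec F0 (fun m G => G ∩ Box m G) n
  have hFs0 : Fs 0 = F0 := rfl
  have hFssucc : ∀ n, Fs (n + 1) = Fs n ∩ Box n (Fs n) := fun n => rfl
  have hsub : ∀ n, Fs (n + 1) ⊆ Fs n := by
    intro n; rw [hFssucc]; exact inter_subset_left
  have inv : ∀ n, (Fs n).Nonempty ∧ Fs n ⊆ Ball Γ ∧ IsClosed (Fs n) := by
    intro n
    induction n with
    | zero => exact ⟨hF0ne, hF0B, hF0closed⟩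
    | succ m ih =>
      obtain ⟨h1, h2, h3⟩ := ih
      refine ⟨?_, ?_, ?_⟩
      · rw [hFssucc]; exact hp2 m (Fs m) h1 h2
      · rw [hFssucc]; exact fun z hz => h2 hz.1
      · rw [hFssucc]; exact h3.inter (S19.isClosed_Cbox _ _ _)
  have hInter : (⋂ n, Fs n).Nonempty :=
    IsCompact.nonempty_iInter_of_sequence_nonempty_isCompact_isClosed Fs hsub
      (fun n => (inv n).1) (by rw [hFs0]; exact hF0comp) (fun n => (inv n).2.2)
  obtain ⟨x, hx⟩ := hInter
  have hxmem : ∀ n, x ∈ Fs n := fun n => mem_iInter.mp hx n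
  have huniq : ∀ z w : Γ → ℝ, (∀ n, z ∈ Fs n) → (∀ n, w ∈ Fs n) → z = w := by
    intro z w hz hw
    funext i
    have hb : ∀ n : ℕ, |z i - w i| ≤ 8 * ((2:ℝ)^n)⁻¹ := by
      intro n
      have h1 := hp3 n (Fs n) (inv n).1 (inv n).2.1
      have hz' : z ∈ Fs n ∩ S19.Cbox (p n (Fs n)).1 (p n (Fs n)).2.1 (p n (Fs n)).2.2 := by
        rw [← hFssucc]; exact hz (n+1)
      have hw' : w ∈ Fs n ∩ S19.Cbox (p n (Fs n)).1 (p n (Fs n)).2.1 (p n (Fs n)).2.2 := by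
        rw [← hFssucc]; exact hw (n+1)
      have h2 := h1 z hz' w hw' {i}
      simpa using h2
    have h0 : |z i - w i| ≤ 0 := by
      have ht : Tendsto (fun n : ℕ => 8 * ((2:ℝ)^n)⁻¹) atTop (𝓝 0) := by
        have h1 := tendsto_pow_atTop_nhds_zero_of_lt_one
          (by norm_num : (0:ℝ) ≤ 2⁻¹) (by norm_num : (2:ℝ)⁻¹ < 1)
        have h8 := h1.const_mul (8:ℝ)
        simpa [inv_pow] using h8
      exact ge_of_tendsto ht (Eventually.of_forall hb)
    have h1 : z i - w i = 0 := abs_eq_zero.mp (le_antisymm h0 (abs_nonneg _))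
    linarith
  have hx0 : x ∈ F0 := hxmem 0
  obtain ⟨xh, hxhF, hxhval⟩ := hx0
  have hxbox : ∀ n, x ∈ S19.Cbox (p n (Fs n)).1 (p n (Fs n)).2.1 (p n (Fs n)).2.2 := by
    intro n
    have := hxmem (n+1)
    rw [hFssucc] at this
    exact this.2
  let U : ℕ → Set ↥F := fun m =>
    (fun z : ↥F => ((z : ↥(Ball Γ)) : Γ → ℝ)) ⁻¹'
      (S19.Obox (p m.unpair.1 (Fs m.unpair.1)).1 (p m.unpair.1 (Fs m.unpair.1)).2.1
        ((p m.unpair.1 (Fs m.unpair.1)).2.2 + ((m.unpair.2 : ℝ) + 1)⁻¹))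
  refine ⟨⟨xh, hxhF⟩, U, fun m => ?_, ?_⟩
  · exact (S19.isOpen_Obox _ _ _).preimage (continuous_subtype_val.comp continuous_subtype_val)
  · ext z
    simp only [mem_iInter, mem_singleton_iff, U, mem_preimage]
    constructor
    · intro hz
      have hzc : ∀ n, ((z : ↥(Ball Γ)) : Γ → ℝ) ∈
          S19.Cbox (p n (Fs n)).1 (p n (Fs n)).2.1 (p n (Fs n)).2.2 := by
        intro n
        rw [S19.Cbox_eq_iInter]
        refine mem_iInter.mpr fun k => ?_
        have h1 := hz (Nat.pair n k)
        simpa [Nat.unpair_pair] using h1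
      have hzF : ∀ n, ((z : ↥(Ball Γ)) : Γ → ℝ) ∈ Fs n := by
        intro n
        induction n with
        | zero => exact ⟨(z : ↥(Ball Γ)), z.2, rfl⟩
        | succ m ih =>
          rw [hFssucc]
          exact ⟨ih, hzc m⟩
      have hzx : ((z : ↥(Ball Γ)) : Γ → ℝ) = x := huniq _ _ hzF hxmem
      apply Subtype.ext
      apply Subtype.ext
      rw [hzx, ← hxhval]
    · intro hz m
      rw [hz]
      intro i hi
      have h1 := hxbox m.unpair.1 i hi
      have h2 : (0:ℝ) < ((m.unpair.2 : ℝ) + 1)⁻¹ := by positivity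
      show |xh.val i - _| < _
      rw [hxhval]
      linarith

end
end
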